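/- arXiv:2410.23953 — 4 statements merged into one kernel-verified Lean document; each statement's English description precedes it below -/
import Mathlib

section
/- Majority vote approximately maximizes population utility: There is a universal constant c > 0 with the following property. Let N = 2 and let 𝓒 ⊆ LO(2)^𝓘 be a candidate space with finite, nonzero VC dimension VC(𝓒), and let f_maj be the majority vote mechanism, mapping each sample S to a profile in 𝓒 maximizing the sample utility on S (assumed to be attained). For every saliency distribution 𝓓_𝓘, population marginal 𝓜, every ε > 0 and δ ∈ (0,1), if the sample size m satisfies m ≥ (c/ε²)·VC(𝓒)·(log VC(𝓒) + log(1/ε) + log(1/δ)), then with probability at least 1 − δ over an i.i.d. sample S of size m, U(f_maj(S)) ≥ sup_{C ∈ 𝓒} U(C) − 2ε. -/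
open scoped ENNReal

noncomputable section

/-- Linear orders on `[N] = {1,…,N}` (as `Fin N`), encoded as permutations:
`o.symm c` is the rank of outcome `c` (smaller rank = more preferred). -/
abbrev LO (N : ℕ) := Equiv.Perm (Fin N)

/-- `c ≻_o c'` : outcome `c` is strictly preferred to `c'` under the linear order `o`. -/
def prefers {N : ℕ} (o : LO N) (c c' : Fin N) : Prop := o.symm c < o.symm c'

/-- `o ⊙ σ` : the linear order with `s₁ ≻_{o⊙σ} s₂` iff `σ⁻¹ s₁ ≻_o σ⁻¹ s₂`. -/
def odot {N : ℕ} (o σ : LO N) : LO N := o.trans σ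

/-- `C ⊙ᵢ σ` : apply `σ` to the ordering of issue `i`, leaving other issues unchanged. -/
def odotProfile {I : Type*} [DecidableEq I] {N : ℕ} (C : I → LO N) (i : I) (σ : LO N) :
    I → LO N :=
  Function.update C i (odot (C i) σ)

/-- The distribution of `m` i.i.d. draws from `p`. -/
def iidPMF {α : Type*} (p : PMF α) : (m : ℕ) → PMF (Fin m → α)
  | 0 => PMF.pure (fun i => i.elim0)
  | (m + 1) => p.bind fun a => (iidPMF p m).map (fun f => Fin.cons a f)

/-- Probability of an event under a PMF. -/
def prob {α : Type*} (p : PMF α) (s : Set α) : ℝ≥0∞ := p.toOuterMeasure s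

/-- Distribution of one sampled individual-issue pair: `i ~ 𝓓_𝓘`, then `o ~ 𝓜(i)`. -/
def sampleDist {I : Type*} {N : ℕ} (DI : PMF I) (M : I → PMF (LO N)) : PMF (LO N × I) :=
  DI.bind fun i => (M i).map fun o => (o, i)

/-- Sample utility (binary setting): fraction of sampled pairs on which `C` agrees. -/
def sampleUtility {I : Type*} {N : ℕ} {m : ℕ} (S : Fin m → LO N × I) (C : I → LO N) : ℝ :=
  (∑ k : Fin m, if C (S k).2 = (S k).1 then (1 : ℝ) else 0) / m

/-- Population utility `U(C) = E_{i ~ 𝓓_𝓘}[𝓜(i)_{C(i)}]`. -/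
def popUtility {I : Type*} {N : ℕ} (DI : PMF I) (M : I → PMF (LO N)) (C : I → LO N) : ℝ :=
  (∑' i, DI i * M i (C i)).toReal

/-- `J` is shattered by `𝓒`: every function on `J` agrees on `J` with some member of `𝓒`. -/
def Shatters {I : Type*} {α : Type*} (𝓒 : Set (I → α)) (J : Finset I) : Prop :=
  ∀ g : I → α, ∃ C ∈ 𝓒, ∀ i ∈ J, C i = g i

/-- The VC dimension of `𝓒` equals `d`. -/
def VCDimEq {I : Type*} {α : Type*} (𝓒 : Set (I → α)) (d : ℕ) : Prop :=
  (∃ J : Finset I, J.card = d ∧ Shatters 𝓒 J) ∧ ∀ J : Finset I, Shatters 𝓒 J → J.card ≤ d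

namespace MVP

variable {α β : Type*}

/-- expectation in ℝ≥0∞ -/
def Ep (p : PMF α) (f : α → ℝ≥0∞) : ℝ≥0∞ := ∑' a, p a * f a

lemma Ep_mono {p : PMF α} {f g : α → ℝ≥0∞} (h : ∀ a, f a ≤ g a) : Ep p f ≤ Ep p g :=
  ENNReal.tsum_le_tsum fun a => mul_le_mul_right (h a) _

lemma Ep_const (p : PMF α) (c : ℝ≥0∞) : Ep p (fun _ => c) = c := by
  simp [Ep, ENNReal.tsum_mul_right, p.tsum_coe]

lemma Ep_add (p : PMF α) (f g : α → ℝ≥0∞) :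
    Ep p (fun a => f a + g a) = Ep p f + Ep p g := by
  simp [Ep, mul_add, ENNReal.tsum_add]

lemma Ep_mul_left (p : PMF α) (c : ℝ≥0∞) (f : α → ℝ≥0∞) :
    Ep p (fun a => c * f a) = c * Ep p f := by
  simp only [Ep, ← ENNReal.tsum_mul_left]; congr 1; ext a; ring

lemma Ep_bind (p : PMF α) (q : α → PMF β) (f : β → ℝ≥0∞) :
    Ep (p.bind q) f = Ep p (fun a => Ep (q a) f) := by
  simp only [Ep, PMF.bind_apply]
  calc ∑' b, (∑' a, p a * q a b) * f b
      = ∑' b, ∑' a, p a * q a b * f b := by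
        congr 1; ext b; rw [ENNReal.tsum_mul_right]
    _ = ∑' a, ∑' b, p a * q a b * f b := ENNReal.tsum_comm
    _ = ∑' a, p a * ∑' b, q a b * f b := by
        congr 1; ext a; rw [← ENNReal.tsum_mul_left]; congr 1; ext b; ring

lemma Ep_map (p : PMF α) (g : α → β) (f : β → ℝ≥0∞) :
    Ep (p.map g) f = Ep p (fun a => f (g a)) := by
  classical
  simp only [Ep, PMF.map_apply]
  calc ∑' b, (∑' a, if b = g a then p a else 0) * f b
      = ∑' b, ∑' a, (if b = g a then p a else 0) * f b := by
        congr 1; ext b; rw [ENNReal.tsum_mul_right]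
    _ = ∑' a, ∑' b, (if b = g a then p a else 0) * f b := ENNReal.tsum_comm
    _ = ∑' a, p a * f (g a) := by
        congr 1; ext a
        rw [tsum_eq_single (g a) (by intro b hb; rw [if_neg hb, zero_mul])]
        rw [if_pos rfl]

lemma Ep_le_one {p : PMF α} {f : α → ℝ≥0∞} (h : ∀ a, f a ≤ 1) : Ep p f ≤ 1 := by
  calc Ep p f ≤ Ep p (fun _ => 1) := Ep_mono h
    _ = 1 := Ep_const p 1

lemma prob_eq_Ep (p : PMF α) (s : Set α) :
    prob p s = Ep p (s.indicator fun _ => 1) := by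
  classical
  rw [prob, PMF.toOuterMeasure_apply, Ep]
  congr 1; ext a
  by_cases h : a ∈ s <;> simp [Set.indicator, h]

lemma prob_mono (p : PMF α) {s t : Set α} (h : s ⊆ t) : prob p s ≤ prob p t := by
  rw [prob_eq_Ep, prob_eq_Ep]
  refine Ep_mono fun a => ?_
  classical
  by_cases ha : a ∈ s
  · simp [Set.indicator, ha, h ha]
  · simp [Set.indicator, ha]

lemma prob_le_one (p : PMF α) (s : Set α) : prob p s ≤ 1 := by
  rw [prob_eq_Ep]
  refine Ep_le_one fun a => ?_
  classical
  by_cases ha : a ∈ s <;> simp [Set.indicator, ha]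

lemma prob_univ (p : PMF α) : prob p Set.univ = 1 := by
  rw [prob_eq_Ep]
  simpa [Set.indicator] using Ep_const p 1

lemma prob_add_compl (p : PMF α) (s : Set α) : prob p s + prob p sᶜ = 1 := by
  classical
  rw [prob_eq_Ep, prob_eq_Ep, ← Ep_add]
  rw [show (fun a => s.indicator (fun _ => (1:ℝ≥0∞)) a + sᶜ.indicator (fun _ => 1) a)
      = fun _ => (1:ℝ≥0∞) by
    ext a; by_cases h : a ∈ s <;> simp [Set.indicator, h]]
  exact Ep_const p 1

lemma prob_union_le (p : PMF α) (s t : Set α) : prob p (s ∪ t) ≤ prob p s + prob p t := by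
  classical
  simp only [prob_eq_Ep]
  rw [← Ep_add]
  refine Ep_mono fun a => ?_
  by_cases hs : a ∈ s <;> by_cases ht : a ∈ t <;> simp [Set.indicator, hs, ht]

/-- Markov: `t * prob p {a | t ≤ f a} ≤ Ep p f`. -/
lemma markov (p : PMF α) (f : α → ℝ≥0∞) (t : ℝ≥0∞) :
    t * prob p {a | t ≤ f a} ≤ Ep p f := by
  classical
  rw [prob_eq_Ep, ← Ep_mul_left]
  refine Ep_mono fun a => ?_
  by_cases h : t ≤ f a
  · simpa [Set.indicator, Set.mem_setOf_eq, h] using h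
  · simp [Set.indicator, Set.mem_setOf_eq, h]

lemma iid_apply (p : PMF α) (m : ℕ) (f : Fin m → α) :
    iidPMF p m f = ∏ k, p (f k) := by
  classical
  induction m with
  | zero =>
    have : f = fun i => i.elim0 := funext fun i => i.elim0
    simp [iidPMF, this]
  | succ m ih =>
    simp only [iidPMF, PMF.bind_apply, PMF.map_apply]
    rw [tsum_eq_single (f 0) (by
      intro a ha
      convert mul_zero (p a) using 2
      rw [ENNReal.tsum_eq_zero]
      intro g
      rw [if_neg]
      intro h
      exact ha (by rw [h, Fin.cons_zero]))]
    rw [tsum_eq_single (Fin.tail f) (by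
      intro g hg
      rw [if_neg]; intro h; apply hg; rw [h, Fin.tail_cons])]
    rw [if_pos (Fin.cons_self_tail f).symm, ih, Fin.prod_univ_succ]
    rfl
lemma Ep_iid_succ (p : PMF α) (m : ℕ) (F : (Fin (m+1) → α) → ℝ≥0∞) :
    Ep (iidPMF p (m+1)) F = Ep p fun a => Ep (iidPMF p m) fun g => F (Fin.cons a g) := by
  rw [show iidPMF p (m+1) = p.bind fun a => (iidPMF p m).map (fun f => Fin.cons a f) from rfl,
    Ep_bind]
  congr 1; ext a; rw [Ep_map]

lemma Ep_iid_sum (p : PMF α) (g : α → ℝ≥0∞) (m : ℕ) :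
    Ep (iidPMF p m) (fun f => ∑ k, g (f k)) = m * Ep p g := by
  induction m with
  | zero =>
    simp only [Finset.univ_eq_empty, Finset.sum_empty, Nat.cast_zero, zero_mul]
    exact Ep_const _ 0
  | succ m ih =>
    rw [Ep_iid_succ]
    have h1 : ∀ a, (Ep (iidPMF p m) fun h => ∑ k : Fin (m+1), g ((Fin.cons a h : Fin (m+1) → α) k))
        = g a + m * Ep p g := by
      intro a
      have : (Ep (iidPMF p m) fun h => ∑ k : Fin (m+1), g ((Fin.cons a h : Fin (m+1) → α) k))
          = Ep (iidPMF p m) fun h => g a + ∑ k : Fin m, g (h k) := by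
        congr 1; ext h; rw [Fin.sum_univ_succ]; simp
      rw [this, Ep_add, Ep_const, ih]
    simp only [h1]
    rw [Ep_add, Ep_const]
    push_cast
    ring

lemma Ep_iid_sq_le (p : PMF α) (g : α → ℝ≥0∞) (m : ℕ) :
    Ep (iidPMF p m) (fun f => (∑ k, g (f k))^2)
      ≤ m * Ep p (fun a => (g a)^2) + (m:ℝ≥0∞)^2 * (Ep p g)^2 := by
  set A := Ep p (fun a => (g a)^2) with hA
  set G := Ep p g with hG
  induction m with
  | zero =>
    have : (fun f : Fin 0 → α => (∑ k : Fin 0, g (f k))^2) = fun _ => 0 := by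
      ext f; simp
    rw [this, Ep_const]
    simp
  | succ m ih =>
    rw [Ep_iid_succ]
    have key : ∀ a, (Ep (iidPMF p m) fun h => (∑ k : Fin (m+1), g ((Fin.cons a h : Fin (m+1) → α) k))^2)
        ≤ (g a)^2 + (2 * ((m:ℝ≥0∞) * G)) * g a + ((m:ℝ≥0∞) * A + (m:ℝ≥0∞)^2 * G^2) := by
      intro a
      have hs : (Ep (iidPMF p m) fun h => (∑ k : Fin (m+1), g ((Fin.cons a h : Fin (m+1) → α) k))^2)
          = Ep (iidPMF p m) fun h =>
              (g a)^2 + (2 * g a) * (∑ k : Fin m, g (h k)) + (∑ k : Fin m, g (h k))^2 := by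
        congr 1; ext h
        rw [Fin.sum_univ_succ]
        simp only [Fin.cons_zero, Fin.cons_succ]
        ring
      rw [hs, Ep_add, Ep_add, Ep_const, Ep_mul_left, Ep_iid_sum, ← hG]
      refine add_le_add (add_le_add le_rfl (le_of_eq (by ring))) ih
    calc Ep p (fun a => Ep (iidPMF p m) fun h => (∑ k : Fin (m+1), g ((Fin.cons a h : Fin (m+1) → α) k))^2)
        ≤ Ep p (fun a => (g a)^2 + (2 * ((m:ℝ≥0∞) * G)) * g a
            + ((m:ℝ≥0∞) * A + (m:ℝ≥0∞)^2 * G^2)) := Ep_mono key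
      _ = A + 2 * ((m:ℝ≥0∞) * G) * G + ((m:ℝ≥0∞) * A + (m:ℝ≥0∞)^2 * G^2) := by
          rw [Ep_add, Ep_add, Ep_mul_left, Ep_const, ← hA, ← hG]
      _ = ((m:ℝ≥0∞)+1) * A + ((m:ℝ≥0∞)^2 + 2*(m:ℝ≥0∞)) * G^2 := by ring
      _ ≤ ((m:ℝ≥0∞)+1) * A + ((m:ℝ≥0∞)^2 + 2*(m:ℝ≥0∞) + 1) * G^2 := by
          refine add_le_add le_rfl (mul_le_mul_left le_self_add _)
      _ = ((m:ℝ≥0∞)+1) * A + ((m:ℝ≥0∞)+1)^2 * G^2 := by ring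
      _ = (((m+1):ℕ):ℝ≥0∞) * A + (((m+1):ℕ):ℝ≥0∞)^2 * G^2 := by push_cast; ring
def Er (p : PMF α) (f : α → ℝ) : ℝ := ∑' a, (p a).toReal * f a

lemma summable_pmf (p : PMF α) : Summable (fun a => (p a).toReal) :=
  ENNReal.summable_toReal (by rw [p.tsum_coe]; exact ENNReal.one_ne_top)

lemma summable_er (p : PMF α) {f : α → ℝ} {B : ℝ} (hB : ∀ a, |f a| ≤ B) :
    Summable (fun a => (p a).toReal * f a) := by
  apply Summable.of_abs
  refine Summable.of_nonneg_of_le (fun a => abs_nonneg _) (fun a => ?_)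
    ((summable_pmf p).mul_right B)
  rw [abs_mul, abs_of_nonneg ENNReal.toReal_nonneg]
  exact mul_le_mul_of_nonneg_left (hB a) ENNReal.toReal_nonneg

lemma Ep_ofReal (p : PMF α) {f : α → ℝ} {B : ℝ} (hf : ∀ a, 0 ≤ f a) (hB : ∀ a, |f a| ≤ B) :
    Ep p (fun a => ENNReal.ofReal (f a)) = ENNReal.ofReal (Er p f) := by
  rw [Er, ENNReal.ofReal_tsum_of_nonneg
    (fun a => mul_nonneg ENNReal.toReal_nonneg (hf a)) (summable_er p hB)]
  exact tsum_congr fun a => by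
    rw [ENNReal.ofReal_mul ENNReal.toReal_nonneg, ENNReal.ofReal_toReal (PMF.apply_ne_top p a)]

lemma Er_nonneg (p : PMF α) {f : α → ℝ} (hf : ∀ a, 0 ≤ f a) : 0 ≤ Er p f :=
  tsum_nonneg fun a => mul_nonneg ENNReal.toReal_nonneg (hf a)

lemma Er_eq_toReal (p : PMF α) {f : α → ℝ} {B : ℝ} (hf : ∀ a, 0 ≤ f a) (hB : ∀ a, |f a| ≤ B) :
    Er p f = (Ep p (fun a => ENNReal.ofReal (f a))).toReal := by
  rw [Ep_ofReal p hf hB, ENNReal.toReal_ofReal (Er_nonneg p hf)]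

lemma Er_add (p : PMF α) {f g : α → ℝ} {B B' : ℝ} (hB : ∀ a, |f a| ≤ B) (hB' : ∀ a, |g a| ≤ B') :
    Er p (fun a => f a + g a) = Er p f + Er p g := by
  simp only [Er, mul_add]
  exact Summable.tsum_add (summable_er p hB) (summable_er p hB')

lemma Er_sub (p : PMF α) {f g : α → ℝ} {B B' : ℝ} (hB : ∀ a, |f a| ≤ B) (hB' : ∀ a, |g a| ≤ B') :
    Er p (fun a => f a - g a) = Er p f - Er p g := by
  simp only [Er, mul_sub]
  exact Summable.tsum_sub (summable_er p hB) (summable_er p hB')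

lemma Er_smul (p : PMF α) (c : ℝ) (f : α → ℝ) :
    Er p (fun a => c * f a) = c * Er p f := by
  simp only [Er, ← tsum_mul_left]
  congr 1; ext a; ring

lemma Er_const (p : PMF α) (c : ℝ) : Er p (fun _ => c) = c := by
  have h := Er_eq_toReal p (f := fun _ => max c 0) (B := max c 0)
    (fun _ => le_max_right _ _) (fun _ => by rw [abs_of_nonneg (le_max_right c 0)])
  -- simpler direct proof:
  simp only [Er, tsum_mul_right]
  rw [← ENNReal.tsum_toReal_eq (fun a => PMF.apply_ne_top p a)]
  rw [p.tsum_coe, ENNReal.toReal_one, one_mul]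

/-- Variance-style bound for iid sums. `g` takes values in `[0,1]`. -/
lemma var_bound (p : PMF α) {g : α → ℝ} (hg0 : ∀ a, 0 ≤ g a) (hg1 : ∀ a, g a ≤ 1) (m : ℕ) :
    Er (iidPMF p m) (fun f => (∑ k, g (f k) - m * Er p g)^2) ≤ m := by
  set μ := Er p g with hμ
  have hμ0 : 0 ≤ μ := Er_nonneg p hg0
  have habs : ∀ a, |g a| ≤ 1 := fun a => abs_le.2 ⟨by linarith [hg0 a], hg1 a⟩
  have hμ1 : μ ≤ 1 := by
    calc μ = Er p g := rfl
      _ ≤ Er p (fun _ => 1) := by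
          refine Summable.tsum_le_tsum (fun a => mul_le_mul_of_nonneg_left (hg1 a) ENNReal.toReal_nonneg)
            (summable_er p habs) (summable_er p (f := fun _ => (1:ℝ)) (B := 1) (by simp))
      _ = 1 := Er_const p 1
  -- bounds on the sum
  have hsum_nonneg : ∀ f : Fin m → α, (0:ℝ) ≤ ∑ k, g (f k) :=
    fun f => Finset.sum_nonneg fun k _ => hg0 (f k)
  have hsum_le : ∀ f : Fin m → α, (∑ k, g (f k)) ≤ m := fun f => by
    calc (∑ k, g (f k)) ≤ ∑ _k : Fin m, (1:ℝ) := Finset.sum_le_sum fun k _ => hg1 (f k)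
      _ = m := by simp
  have habs_sum : ∀ f : Fin m → α, |∑ k, g (f k)| ≤ (m:ℝ) :=
    fun f => abs_le.2 ⟨by linarith [hsum_nonneg f], hsum_le f⟩
  have habs_sq : ∀ f : Fin m → α, |(∑ k, g (f k))^2| ≤ (m:ℝ)^2 := fun f => by
    rw [abs_of_nonneg (sq_nonneg _)]
    exact pow_le_pow_left₀ (hsum_nonneg f) (hsum_le f) 2
  -- mean of the sum
  have hEpg_le : Ep p (fun a => ENNReal.ofReal (g a)) ≤ 1 :=
    Ep_le_one fun a => by
      rw [show (1:ℝ≥0∞) = ENNReal.ofReal 1 by simp]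
      exact ENNReal.ofReal_le_ofReal (hg1 a)
  have hEpg_toReal : (Ep p (fun a => ENNReal.ofReal (g a))).toReal = μ :=
    (Er_eq_toReal p hg0 habs).symm
  have hm_sum : Er (iidPMF p m) (fun f => ∑ k, g (f k)) = m * μ := by
    rw [Er_eq_toReal (iidPMF p m) hsum_nonneg habs_sum]
    have : (fun f : Fin m → α => ENNReal.ofReal (∑ k, g (f k)))
        = fun f => ∑ k, ENNReal.ofReal (g (f k)) := by
      ext f; rw [ENNReal.ofReal_sum_of_nonneg (fun k _ => hg0 (f k))]
    rw [this, Ep_iid_sum p (fun a => ENNReal.ofReal (g a)) m, ENNReal.toReal_mul, hEpg_toReal]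
    simp
  -- second moment of the sum
  have hEpg2_le : Ep p (fun a => (ENNReal.ofReal (g a))^2) ≤ 1 :=
    Ep_le_one fun a => by
      have h1 : ENNReal.ofReal (g a) ≤ 1 := by
        rw [show (1:ℝ≥0∞) = ENNReal.ofReal 1 by simp]
        exact ENNReal.ofReal_le_ofReal (hg1 a)
      calc (ENNReal.ofReal (g a))^2 ≤ 1^2 := pow_le_pow_left' h1 2
        _ = 1 := one_pow 2
  have hm_sq : Er (iidPMF p m) (fun f => (∑ k, g (f k))^2) ≤ m + (m:ℝ)^2 * μ^2 := by
    rw [Er_eq_toReal (iidPMF p m) (fun f => sq_nonneg _) habs_sq]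
    have heq : (fun f : Fin m → α => ENNReal.ofReal ((∑ k, g (f k))^2))
        = fun f => (∑ k, ENNReal.ofReal (g (f k)))^2 := by
      ext f
      rw [ENNReal.ofReal_pow (hsum_nonneg f), ENNReal.ofReal_sum_of_nonneg (fun k _ => hg0 (f k))]
    rw [heq]
    have hb := Ep_iid_sq_le p (fun a => ENNReal.ofReal (g a)) m
    have hfin : (m:ℝ≥0∞) * Ep p (fun a => (ENNReal.ofReal (g a))^2)
        + (m:ℝ≥0∞)^2 * (Ep p (fun a => ENNReal.ofReal (g a)))^2 ≠ ⊤ := by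
      apply ENNReal.add_ne_top.2
      constructor
      · exact ENNReal.mul_ne_top (ENNReal.natCast_ne_top m) (hEpg2_le.trans_lt ENNReal.one_lt_top).ne
      · exact ENNReal.mul_ne_top (by simp [ENNReal.pow_ne_top, ENNReal.natCast_ne_top])
          (by exact ENNReal.pow_ne_top (hEpg_le.trans_lt ENNReal.one_lt_top).ne)
    calc (Ep (iidPMF p m) fun f => (∑ k, ENNReal.ofReal (g (f k)))^2).toReal
        ≤ ((m:ℝ≥0∞) * Ep p (fun a => (ENNReal.ofReal (g a))^2)
            + (m:ℝ≥0∞)^2 * (Ep p (fun a => ENNReal.ofReal (g a)))^2).toReal :=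
          ENNReal.toReal_mono hfin hb
      _ = (m:ℝ) * (Ep p (fun a => (ENNReal.ofReal (g a))^2)).toReal
            + (m:ℝ)^2 * ((Ep p (fun a => ENNReal.ofReal (g a))).toReal)^2 := by
          rw [ENNReal.toReal_add (ENNReal.add_ne_top.1 hfin).1 (ENNReal.add_ne_top.1 hfin).2,
            ENNReal.toReal_mul, ENNReal.toReal_mul, ENNReal.toReal_pow, ENNReal.toReal_pow]
          simp
      _ ≤ m + (m:ℝ)^2 * μ^2 := by
          rw [hEpg_toReal]
          have h2 : (Ep p (fun a => (ENNReal.ofReal (g a))^2)).toReal ≤ 1 := by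
            calc _ ≤ (1:ℝ≥0∞).toReal := ENNReal.toReal_mono ENNReal.one_ne_top hEpg2_le
              _ = 1 := by simp
          nlinarith [Nat.cast_nonneg (α := ℝ) m, ENNReal.toReal_nonneg
            (a := Ep p (fun a => (ENNReal.ofReal (g a))^2))]
  -- expand the square
  have hdiff_abs : ∀ f : Fin m → α, |∑ k, g (f k) - m * μ| ≤ (m:ℝ) := fun f => by
    rw [abs_le]
    constructor
    · have : (m:ℝ) * μ ≤ m := by nlinarith [Nat.cast_nonneg (α := ℝ) m]
      linarith [hsum_nonneg f]
    · have : 0 ≤ (m:ℝ) * μ := by positivity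
      linarith [hsum_le f]
  have hexp : (fun f : Fin m → α => (∑ k, g (f k) - m * μ)^2)
      = fun f => ((∑ k, g (f k))^2 + (m*μ)^2) - (2*(m*μ)) * (∑ k, g (f k)) := by
    ext f; ring
  have habs1 : ∀ f : Fin m → α, |(∑ k, g (f k))^2 + (m*μ)^2| ≤ (m:ℝ)^2 + (m:ℝ)^2 := fun f => by
    rw [abs_of_nonneg (by positivity)]
    have hμsq : μ^2 ≤ 1 := by nlinarith
    have h1 : ((m:ℝ)*μ)^2 ≤ (m:ℝ)^2 := by
      have h2 : (m:ℝ)^2*μ^2 ≤ (m:ℝ)^2*1 := mul_le_mul_of_nonneg_left hμsq (by positivity)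
      calc ((m:ℝ)*μ)^2 = (m:ℝ)^2*μ^2 := by ring
        _ ≤ (m:ℝ)^2 := by linarith
    have h2 := habs_sq f
    rw [abs_of_nonneg (sq_nonneg _)] at h2
    linarith
  have habs2 : ∀ f : Fin m → α, |(2*((m:ℝ)*μ)) * (∑ k, g (f k))| ≤ 2*(m:ℝ)*(m:ℝ) := fun f => by
    rw [abs_mul]
    have h1 : |2*((m:ℝ)*μ)| ≤ 2*(m:ℝ) := by
      rw [abs_of_nonneg (by positivity)]
      nlinarith [Nat.cast_nonneg (α := ℝ) m]
    calc |2*((m:ℝ)*μ)| * |∑ k, g (f k)| ≤ (2*(m:ℝ)) * (m:ℝ) := by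
          apply mul_le_mul h1 (habs_sum f) (abs_nonneg _) (by positivity)
      _ = 2*(m:ℝ)*(m:ℝ) := by ring
  rw [hexp, Er_sub (iidPMF p m) habs1 habs2,
    Er_add (iidPMF p m) habs_sq (fun f => by rw [abs_of_nonneg (by positivity)]),
    Er_const, Er_smul, hm_sum]
  nlinarith [hm_sq]

/-- Chebyshev for iid sums of `[0,1]`-valued variables. -/
lemma chebyshev_iid (p : PMF α) {g : α → ℝ} (hg0 : ∀ a, 0 ≤ g a) (hg1 : ∀ a, g a ≤ 1)
    (m : ℕ) {t : ℝ} (ht : 0 < t) :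
    prob (iidPMF p m) {f | t ≤ |∑ k, g (f k) - m * Er p g|}
      ≤ ENNReal.ofReal ((m:ℝ) / t^2) := by
  set μ := Er p g with hμ
  have hsub : {f : Fin m → α | t ≤ |∑ k, g (f k) - m * μ|}
      ⊆ {f | ENNReal.ofReal (t^2) ≤ ENNReal.ofReal ((∑ k, g (f k) - m * μ)^2)} := by
    intro f hf
    simp only [Set.mem_setOf_eq] at hf ⊢
    apply ENNReal.ofReal_le_ofReal
    calc t^2 ≤ |∑ k, g (f k) - m * μ|^2 := pow_le_pow_left₀ ht.le hf 2
      _ = (∑ k, g (f k) - m * μ)^2 := sq_abs _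
  have habs : ∀ f : Fin m → α, |(∑ k, g (f k) - m * μ)^2| ≤ ((m:ℝ)+m*μ)^2 := fun f => by
    rw [abs_of_nonneg (sq_nonneg _)]
    have h0 : ∀ f : Fin m → α, (0:ℝ) ≤ ∑ k, g (f k) :=
      fun f => Finset.sum_nonneg fun k _ => hg0 (f k)
    have h1 : ∀ f : Fin m → α, (∑ k, g (f k)) ≤ m := fun f => by
      calc (∑ k, g (f k)) ≤ ∑ _k : Fin m, (1:ℝ) := Finset.sum_le_sum fun k _ => hg1 (f k)
        _ = m := by simp
    have hμ0 : 0 ≤ μ := Er_nonneg p hg0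
    have : |∑ k, g (f k) - m * μ| ≤ (m:ℝ) + m*μ := by
      rw [abs_le]
      constructor
      · have : 0 ≤ (m:ℝ) := Nat.cast_nonneg m
        linarith [h0 f]
      · have : 0 ≤ (m:ℝ)*μ := by positivity
        linarith [h1 f]
    calc (∑ k, g (f k) - m * μ)^2 = |∑ k, g (f k) - m * μ|^2 := (sq_abs _).symm
      _ ≤ ((m:ℝ)+m*μ)^2 := pow_le_pow_left₀ (abs_nonneg _) this 2
  calc prob (iidPMF p m) {f | t ≤ |∑ k, g (f k) - m * μ|}
      ≤ prob (iidPMF p m)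
          {f | ENNReal.ofReal (t^2) ≤ ENNReal.ofReal ((∑ k, g (f k) - m * μ)^2)} :=
        prob_mono _ hsub
    _ ≤ ENNReal.ofReal ((m:ℝ) / t^2) := by
        have hM := markov (iidPMF p m)
          (fun f => ENNReal.ofReal ((∑ k, g (f k) - m * μ)^2)) (ENNReal.ofReal (t^2))
        rw [Ep_ofReal (iidPMF p m) (fun f => sq_nonneg _) habs] at hM
        have hvar : ENNReal.ofReal (Er (iidPMF p m) fun f => (∑ k, g (f k) - m * μ)^2)
            ≤ ENNReal.ofReal (m:ℝ) :=
          ENNReal.ofReal_le_ofReal (var_bound p hg0 hg1 m)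
        have h2 := hM.trans hvar
        rw [ENNReal.ofReal_div_of_pos (by positivity)]
        rw [ENNReal.le_div_iff_mul_le (Or.inl (by simp [ENNReal.ofReal_eq_zero]; positivity))
          (Or.inl ENNReal.ofReal_ne_top)]
        rw [mul_comm]
        exact h2
lemma exp_add_exp_neg_le {x : ℝ} (hx : |x| ≤ 1) :
    Real.exp x + Real.exp (-x) ≤ 2 * Real.exp (x^2) := by
  have h1 := Real.exp_bound hx (by norm_num : 0 < 2)
  have h2 := Real.exp_bound (x := -x) (by rwa [abs_neg]) (by norm_num : 0 < 2)
  have e1 : (∑ i ∈ Finset.range 2, x ^ i / (Nat.factorial i)) = 1 + x := by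
    simp [Finset.sum_range_succ, Nat.factorial]
  have e2 : (∑ i ∈ Finset.range 2, (-x) ^ i / (Nat.factorial i)) = 1 - x := by
    simp [Finset.sum_range_succ, Nat.factorial]; ring
  rw [e1] at h1; rw [e2] at h2
  have hc : ((Nat.succ 2 : ℝ)) / ((Nat.factorial 2 : ℝ) * ((2:ℕ):ℝ)) = 3/4 := by
    norm_num [Nat.factorial]
  rw [hc] at h1 h2
  rw [abs_neg] at h2
  rw [sq_abs] at h1 h2
  have b1 : Real.exp x ≤ 1 + x + x^2 * (3/4) := by
    have := abs_le.1 h1; linarith [this.2]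
  have b2 : Real.exp (-x) ≤ 1 - x + x^2 * (3/4) := by
    have := abs_le.1 h2; linarith [this.2]
  have b3 : (1:ℝ) + x^2 ≤ Real.exp (x^2) := by
    have := Real.add_one_le_exp (x^2); linarith
  nlinarith [sq_nonneg x]

lemma sum_exp_signs (m : ℕ) (a : Fin m → ℝ) (lam : ℝ) :
    ∑ η : Fin m → Bool, Real.exp (∑ k, lam * (if η k then a k else -(a k)))
      = ∏ k, (Real.exp (lam * a k) + Real.exp (-(lam * a k))) := by
  classical
  have : ∀ η : Fin m → Bool, Real.exp (∑ k, lam * (if η k then a k else -(a k)))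
      = ∏ k, (fun k (b : Bool) => Real.exp (lam * (if b then a k else -(a k)))) k (η k) := by
    intro η
    rw [Real.exp_sum]
  simp only [this]
  symm
  calc ∏ k, (Real.exp (lam * a k) + Real.exp (-(lam * a k)))
      = ∏ k, ∑ b : Bool, (fun k (b : Bool) => Real.exp (lam * (if b then a k else -(a k)))) k b := by
        refine Finset.prod_congr rfl fun k _ => ?_
        rw [Fintype.sum_bool]
        simp [mul_neg]
    _ = ∑ η ∈ Fintype.piFinset (fun _ : Fin m => (Finset.univ : Finset Bool)),
          ∏ k, (fun k (b : Bool) => Real.exp (lam * (if b then a k else -(a k)))) k (η k) :=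
        Finset.prod_univ_sum _ _
    _ = ∑ η : Fin m → Bool,
          ∏ k, (fun k (b : Bool) => Real.exp (lam * (if b then a k else -(a k)))) k (η k) := by
        rw [Fintype.piFinset_univ]

lemma hoeffding_one_sided (m : ℕ) (a : Fin m → ℝ) (ha : ∀ k, |a k| ≤ 1)
    {t lam : ℝ} (hlam : 0 < lam) (hlam1 : lam ≤ 1) :
    prob (PMF.uniformOfFintype (Fin m → Bool))
        {η | t ≤ ∑ k, (if η k then a k else -(a k))}
      ≤ ENNReal.ofReal (Real.exp (-(lam*t) + m*lam^2)) := by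
  classical
  set X : (Fin m → Bool) → ℝ := fun η => ∑ k, (if η k then a k else -(a k)) with hX
  have hsub : {η | t ≤ X η} ⊆
      {η | ENNReal.ofReal (Real.exp (lam * t)) ≤ ENNReal.ofReal (Real.exp (lam * X η))} := by
    intro η hη
    simp only [Set.mem_setOf_eq] at hη ⊢
    exact ENNReal.ofReal_le_ofReal (Real.exp_le_exp.2 (by nlinarith))
  have hEp : Ep (PMF.uniformOfFintype (Fin m → Bool))
      (fun η => ENNReal.ofReal (Real.exp (lam * X η)))
      ≤ ENNReal.ofReal (Real.exp (lam*t)) * ENNReal.ofReal (Real.exp (-(lam*t) + m*lam^2)) := by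
    rw [Ep, tsum_fintype]
    have hcard : (Fintype.card (Fin m → Bool) : ℝ≥0∞) = 2^m := by
      rw [Fintype.card_fun]
      simp
    calc ∑ η : Fin m → Bool, (PMF.uniformOfFintype (Fin m → Bool)) η
          * ENNReal.ofReal (Real.exp (lam * X η))
        = ((2:ℝ≥0∞)^m)⁻¹ * ∑ η : Fin m → Bool, ENNReal.ofReal (Real.exp (lam * X η)) := by
          rw [Finset.mul_sum]
          congr 1; ext η
          rw [PMF.uniformOfFintype_apply, hcard]
      _ = ((2:ℝ≥0∞)^m)⁻¹ * ENNReal.ofReal (∑ η : Fin m → Bool, Real.exp (lam * X η)) := by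
          rw [ENNReal.ofReal_sum_of_nonneg (fun η _ => (Real.exp_pos _).le)]
      _ ≤ ((2:ℝ≥0∞)^m)⁻¹ * ENNReal.ofReal (2^m * Real.exp (m*lam^2)) := by
          refine mul_le_mul_right (ENNReal.ofReal_le_ofReal ?_) _
          have hXeq : ∀ η : Fin m → Bool, lam * X η = ∑ k, lam * (if η k then a k else -(a k)) := by
            intro η; rw [hX, Finset.mul_sum]
          calc ∑ η : Fin m → Bool, Real.exp (lam * X η)
              = ∏ k, (Real.exp (lam * a k) + Real.exp (-(lam * a k))) := by
                rw [← sum_exp_signs m a lam]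
                exact Finset.sum_congr rfl fun η _ => by rw [hXeq η]
            _ ≤ ∏ _k : Fin m, 2 * Real.exp (lam^2) := by
                refine Finset.prod_le_prod (fun k _ => by positivity) (fun k _ => ?_)
                have habs : |lam * a k| ≤ 1 := by
                  rw [abs_mul, abs_of_pos hlam]
                  calc lam * |a k| ≤ 1 * 1 :=
                    mul_le_mul hlam1 (ha k) (abs_nonneg _) (by norm_num)
                  _ = 1 := by norm_num
                refine (exp_add_exp_neg_le habs).trans ?_
                have : (lam * a k)^2 ≤ lam^2 := by
                  have h1 : |a k|^2 ≤ 1 := by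
                    calc |a k|^2 ≤ 1^2 := pow_le_pow_left₀ (abs_nonneg _) (ha k) 2
                      _ = 1 := one_pow 2
                  calc (lam * a k)^2 = lam^2 * |a k|^2 := by rw [mul_pow, sq_abs]
                    _ ≤ lam^2 * 1 := mul_le_mul_of_nonneg_left h1 (sq_nonneg _)
                    _ = lam^2 := mul_one _
                exact mul_le_mul_of_nonneg_left (Real.exp_le_exp.2 this) (by norm_num)
            _ = 2^m * Real.exp (m*lam^2) := by
                rw [Finset.prod_const]
                rw [mul_pow, ← Real.exp_nat_mul]
                simp [Finset.card_univ]
      _ = ENNReal.ofReal (Real.exp (m*lam^2)) := by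
          rw [ENNReal.ofReal_mul (by positivity), ENNReal.ofReal_pow (by norm_num : (0:ℝ) ≤ 2)]
          rw [← mul_assoc]
          rw [show ENNReal.ofReal 2 = 2 by simp]
          rw [ENNReal.inv_mul_cancel (by simp) (by simp)]
          rw [one_mul]
      _ ≤ ENNReal.ofReal (Real.exp (lam*t)) * ENNReal.ofReal (Real.exp (-(lam*t) + m*lam^2)) := by
          rw [← ENNReal.ofReal_mul (Real.exp_pos _).le, ← Real.exp_add]
          apply ENNReal.ofReal_le_ofReal
          apply Real.exp_le_exp.2
          apply le_of_eq
          ring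
  calc prob (PMF.uniformOfFintype (Fin m → Bool)) {η | t ≤ X η}
      ≤ prob (PMF.uniformOfFintype (Fin m → Bool))
          {η | ENNReal.ofReal (Real.exp (lam * t)) ≤ ENNReal.ofReal (Real.exp (lam * X η))} :=
        prob_mono _ hsub
    _ ≤ ENNReal.ofReal (Real.exp (-(lam*t) + m*lam^2)) := by
        have hM := markov (PMF.uniformOfFintype (Fin m → Bool))
          (fun η => ENNReal.ofReal (Real.exp (lam * X η))) (ENNReal.ofReal (Real.exp (lam * t)))
        have h2 := hM.trans hEp
        have hne : ENNReal.ofReal (Real.exp (lam * t)) ≠ 0 := by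
          simp [ENNReal.ofReal_eq_zero, not_le, Real.exp_pos]
        exact (ENNReal.mul_le_mul_iff_right hne ENNReal.ofReal_ne_top).1 h2

lemma hoeffding_two_sided (m : ℕ) (a : Fin m → ℝ) (ha : ∀ k, |a k| ≤ 1)
    {t lam : ℝ} (hlam : 0 < lam) (hlam1 : lam ≤ 1) :
    prob (PMF.uniformOfFintype (Fin m → Bool))
        {η | t ≤ |∑ k, (if η k then a k else -(a k))|}
      ≤ ENNReal.ofReal (2 * Real.exp (-(lam*t) + m*lam^2)) := by
  classical
  have hsub : {η : Fin m → Bool | t ≤ |∑ k, (if η k then a k else -(a k))|}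
      ⊆ {η | t ≤ ∑ k, (if η k then a k else -(a k))}
        ∪ {η | t ≤ ∑ k, (if η k then (-a) k else -((-a) k))} := by
    intro η hη
    simp only [Set.mem_setOf_eq, Set.mem_union] at hη ⊢
    rcases le_or_gt t (∑ k, (if η k then a k else -(a k))) with h | h
    · exact Or.inl h
    · right
      have habs := hη
      have : ∑ k, (if η k then (-a) k else -((-a) k)) = -(∑ k, (if η k then a k else -(a k))) := by
        rw [← Finset.sum_neg_distrib]
        exact Finset.sum_congr rfl fun k _ => by by_cases hb : η k <;> simp [hb]
      rw [this]
      rcases abs_cases (∑ k, (if η k then a k else -(a k))) with ⟨he, _⟩ | ⟨he, _⟩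
      · rw [he] at habs; linarith
      · rw [he] at habs; linarith
  calc prob _ _ ≤ prob (PMF.uniformOfFintype (Fin m → Bool))
        ({η | t ≤ ∑ k, (if η k then a k else -(a k))}
          ∪ {η | t ≤ ∑ k, (if η k then (-a) k else -((-a) k))}) := prob_mono _ hsub
    _ ≤ prob (PMF.uniformOfFintype (Fin m → Bool)) {η | t ≤ ∑ k, (if η k then a k else -(a k))}
        + prob (PMF.uniformOfFintype (Fin m → Bool))
            {η | t ≤ ∑ k, (if η k then (-a) k else -((-a) k))} := prob_union_le _ _ _
    _ ≤ ENNReal.ofReal (Real.exp (-(lam*t) + m*lam^2))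
        + ENNReal.ofReal (Real.exp (-(lam*t) + m*lam^2)) := by
        refine add_le_add (hoeffding_one_sided m a ha hlam hlam1) ?_
        exact hoeffding_one_sided m (-a) (fun k => by rw [Pi.neg_apply, abs_neg]; exact ha k)
          hlam hlam1
    _ = ENNReal.ofReal (2 * Real.exp (-(lam*t) + m*lam^2)) := by
        rw [← ENNReal.ofReal_add (Real.exp_pos _).le (Real.exp_pos _).le]
        congr 1; ring

lemma lo2_cases' : ∀ o : LO 2, o = 1 ∨ o = Equiv.swap (0 : Fin 2) (1 : Fin 2) := by decide

lemma lo2_cases (o : LO 2) : o = 1 ∨ o = Equiv.swap (0 : Fin 2) (1 : Fin 2) := lo2_cases' o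

lemma swap_ne_one : (Equiv.swap (0 : Fin 2) (1 : Fin 2)) ≠ 1 := by decide

lemma lo2_eq_of_ne_iff {o o' : LO 2} (h : (o ≠ 1) ↔ (o' ≠ 1)) : o = o' := by
  rcases lo2_cases o with h1 | h1 <;> rcases lo2_cases o' with h2 | h2 <;> subst h1 <;> subst h2
  · rfl
  · exact absurd (h.2 swap_ne_one) (by simp)
  · exact absurd (h.1 swap_ne_one) (by simp)
  · rfl

lemma card_powerset_filter_le {I : Type*} [DecidableEq I] (J : Finset I) (d : ℕ) :
    ((J.powerset).filter (fun s => s.card ≤ d)).card ≤ (J.card + 1)^d := by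
  induction d with
  | zero =>
    rw [pow_zero]
    refine Finset.card_le_one.2 (fun s hs t ht => ?_) |>.trans le_rfl
    simp only [Finset.mem_filter, Nat.le_zero, Finset.card_eq_zero] at hs ht
    rw [hs.2, ht.2]
  | succ d ih =>
    have hsplit : (J.powerset).filter (fun s => s.card ≤ d + 1)
        ⊆ (J.powerset).filter (fun s => s.card ≤ d) ∪ J.powersetCard (d+1) := by
      intro s hs
      simp only [Finset.mem_filter, Finset.mem_union, Finset.mem_powerset,
        Finset.mem_powersetCard] at hs ⊢
      rcases Nat.lt_or_ge s.card (d+1) with h | h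
      · exact Or.inl ⟨hs.1, Nat.lt_succ_iff.1 h⟩
      · exact Or.inr ⟨hs.1, le_antisymm hs.2 h⟩
    calc ((J.powerset).filter (fun s => s.card ≤ d + 1)).card
        ≤ ((J.powerset).filter (fun s => s.card ≤ d) ∪ J.powersetCard (d+1)).card :=
          Finset.card_le_card hsplit
      _ ≤ ((J.powerset).filter (fun s => s.card ≤ d)).card + (J.powersetCard (d+1)).card :=
          Finset.card_union_le _ _
      _ ≤ (J.card + 1)^d + J.card^(d+1) := by
          refine Nat.add_le_add ih ?_
          rw [Finset.card_powersetCard]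
          exact Nat.choose_le_pow _ _
      _ ≤ (J.card + 1)^(d+1) := by
          have h1 : J.card^(d+1) ≤ J.card * (J.card+1)^d := by
            rw [pow_succ']
            exact Nat.mul_le_mul_left _ (Nat.pow_le_pow_left (Nat.le_succ _) d)
          calc (J.card + 1)^d + J.card^(d+1)
              ≤ (J.card + 1)^d + J.card * (J.card+1)^d := Nat.add_le_add le_rfl h1
            _ = (J.card + 1) * (J.card + 1)^d := by ring
            _ = (J.card + 1)^(d+1) := by rw [pow_succ]; ring
  
/-- All restrictions of `𝓒` to `J`, encoded as subsets of `J`, with the Sauer-Shelah bound. -/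
lemma restriction_bound {I : Type*} [DecidableEq I] (𝓒 : Set (I → LO 2)) (d : ℕ)
    (hup : ∀ J : Finset I, Shatters 𝓒 J → J.card ≤ d) (J : Finset I) :
    ∃ 𝓐 : Finset (Finset I),
      (∀ A ∈ 𝓐, ∃ C ∈ 𝓒, A = J.filter (fun i => C i ≠ 1)) ∧
      (∀ C ∈ 𝓒, J.filter (fun i => C i ≠ 1) ∈ 𝓐) ∧
      𝓐.card ≤ (J.card + 1)^d := by
  classical
  set 𝓐 : Finset (Finset I) :=
    (J.powerset).filter (fun A => ∃ C ∈ 𝓒, A = J.filter (fun i => C i ≠ 1)) with h𝓐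
  refine ⟨𝓐, ?_, ?_, ?_⟩
  · intro A hA
    exact (Finset.mem_filter.1 hA).2
  · intro C hC
    refine Finset.mem_filter.2 ⟨Finset.mem_powerset.2 (Finset.filter_subset _ _), C, hC, rfl⟩
  · -- Sauer-Shelah
    have hshat : ∀ s ∈ 𝓐.shatterer, s ∈ (J.powerset).filter (fun s => s.card ≤ d) := by
      intro s hs
      rw [Finset.mem_shatterer] at hs
      -- s ⊆ J
      have hsJ : s ⊆ J := by
        obtain ⟨u, hu, hsu⟩ := hs (Finset.Subset.refl s)
        have : s ⊆ u := Finset.inter_eq_left.1 hsu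
        exact this.trans (Finset.mem_powerset.1 (Finset.mem_filter.1 hu).1)
      -- 𝓒 shatters s
      have hCs : Shatters 𝓒 s := by
        intro g
        have ht : s.filter (fun i => g i ≠ 1) ⊆ s := Finset.filter_subset _ _
        obtain ⟨u, hu, hsu⟩ := hs ht
        obtain ⟨C, hC, hCu⟩ := (Finset.mem_filter.1 hu).2
        refine ⟨C, hC, fun i hi => ?_⟩
        apply lo2_eq_of_ne_iff
        have hiJ : i ∈ J := hsJ hi
        constructor
        · intro hne
          have hiu : i ∈ u := by rw [hCu]; exact Finset.mem_filter.2 ⟨hiJ, hne⟩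
          have : i ∈ s.filter (fun i => g i ≠ 1) := by
            rw [← hsu]; exact Finset.mem_inter.2 ⟨hi, hiu⟩
          exact (Finset.mem_filter.1 this).2
        · intro hne
          have : i ∈ s ∩ u := by
            rw [hsu]; exact Finset.mem_filter.2 ⟨hi, hne⟩
          have hiu := (Finset.mem_inter.1 this).2
          rw [hCu] at hiu
          exact (Finset.mem_filter.1 hiu).2
      exact Finset.mem_filter.2 ⟨Finset.mem_powerset.2 hsJ, hup s hCs⟩
    calc 𝓐.card ≤ 𝓐.shatterer.card := Finset.card_le_card_shatterer 𝓐
      _ ≤ ((J.powerset).filter (fun s => s.card ≤ d)).card := Finset.card_le_card hshat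
      _ ≤ (J.card + 1)^d := card_powerset_filter_le J d
def Q (p : PMF α) (m : ℕ) (F : (Fin m → α) → (Fin m → α) → ℝ≥0∞) : ℝ≥0∞ :=
  Ep (iidPMF p m) fun S => Ep (iidPMF p m) fun T => F S T

lemma Ep_sum {ι : Type*} (p : PMF α) (s : Finset ι) (h : ι → α → ℝ≥0∞) :
    Ep p (fun a => ∑ i ∈ s, h i a) = ∑ i ∈ s, Ep p (h i) := by
  simp only [Ep, Finset.mul_sum]
  exact Summable.tsum_finsetSum fun i _ => ENNReal.summable

lemma Q_sum {ι : Type*} (p : PMF α) (m : ℕ) (s : Finset ι)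
    (F : ι → (Fin m → α) → (Fin m → α) → ℝ≥0∞) :
    Q p m (fun S T => ∑ i ∈ s, F i S T) = ∑ i ∈ s, Q p m (F i) := by
  unfold Q
  rw [show (fun S => Ep (iidPMF p m) fun T => ∑ i ∈ s, F i S T)
      = fun S => ∑ i ∈ s, Ep (iidPMF p m) (fun T => F i S T) by
    ext S; rw [Ep_sum]]
  rw [Ep_sum]

lemma Q_mul_left (p : PMF α) (m : ℕ) (c : ℝ≥0∞) (F : (Fin m → α) → (Fin m → α) → ℝ≥0∞) :
    Q p m (fun S T => c * F S T) = c * Q p m F := by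
  unfold Q
  rw [show (fun S => Ep (iidPMF p m) fun T => c * F S T)
      = fun S => c * Ep (iidPMF p m) (fun T => F S T) by
    ext S; rw [Ep_mul_left]]
  rw [Ep_mul_left]

lemma Q_mono (p : PMF α) (m : ℕ) {F G : (Fin m → α) → (Fin m → α) → ℝ≥0∞}
    (h : ∀ S T, F S T ≤ G S T) : Q p m F ≤ Q p m G := by
  unfold Q
  refine ENNReal.tsum_le_tsum fun S => mul_le_mul_right ?_ _
  exact ENNReal.tsum_le_tsum fun T => mul_le_mul_right (h S T) _

lemma Q_const (p : PMF α) (m : ℕ) (c : ℝ≥0∞) : Q p m (fun _ _ => c) = c := by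
  unfold Q
  rw [show (fun S : Fin m → α => Ep (iidPMF p m) fun _ => c) = fun _ => c by
    ext S; rw [Ep_const]]
  rw [Ep_const]

lemma Q_eq_pair_tsum (p : PMF α) (m : ℕ) (F : (Fin m → α) → (Fin m → α) → ℝ≥0∞) :
    Q p m F = ∑' x : (Fin m → α) × (Fin m → α),
      ((∏ k, p (x.1 k)) * ∏ k, p (x.2 k)) * F x.1 x.2 := by
  rw [ENNReal.tsum_prod']
  unfold Q Ep
  simp only [iid_apply]
  congr 1; ext S
  rw [← ENNReal.tsum_mul_left]
  congr 1; ext T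
  ring

/-- The involutive pair-swap along `η`. -/
def swapPair (η : Fin m → Bool) (x : (Fin m → α) × (Fin m → α)) :
    (Fin m → α) × (Fin m → α) :=
  (fun k => if η k then x.1 k else x.2 k, fun k => if η k then x.2 k else x.1 k)

def swapEquiv (η : Fin m → Bool) : ((Fin m → α) × (Fin m → α)) ≃ ((Fin m → α) × (Fin m → α)) where
  toFun := swapPair η
  invFun := swapPair η
  left_inv x := by
    unfold swapPair
    ext k <;> by_cases h : η k <;> simp [h]
  right_inv x := by
    unfold swapPair
    ext k <;> by_cases h : η k <;> simp [h]

lemma swapPair_invol (η : Fin m → Bool) (x : (Fin m → α) × (Fin m → α)) :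
    swapPair η (swapPair η x) = x := (swapEquiv η).left_inv x

lemma Q_swap (p : PMF α) (m : ℕ) (η : Fin m → Bool)
    (F : (Fin m → α) → (Fin m → α) → ℝ≥0∞) :
    Q p m (fun S T => F (swapPair η (S, T)).1 (swapPair η (S, T)).2) = Q p m F := by
  rw [Q_eq_pair_tsum, Q_eq_pair_tsum]
  rw [← Equiv.tsum_eq (swapEquiv η)
    (fun x : (Fin m → α) × (Fin m → α) => ((∏ k, p (x.1 k)) * ∏ k, p (x.2 k)) * F x.1 x.2)]
  refine tsum_congr fun x => ?_
  have hw : (∏ k, p (x.1 k)) * ∏ k, p (x.2 k)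
      = (∏ k, p (((swapEquiv η) x).1 k)) * ∏ k, p (((swapEquiv η) x).2 k) := by
    rw [← Finset.prod_mul_distrib, ← Finset.prod_mul_distrib]
    refine Finset.prod_congr rfl fun k _ => ?_
    show p (x.1 k) * p (x.2 k) = p ((swapPair η x).1 k) * p ((swapPair η x).2 k)
    unfold swapPair
    by_cases h : η k <;> simp [h] <;> ring
  rw [hw]
  rfl

/-- Average over uniform random signs. -/
lemma Q_eq_sign_avg (p : PMF α) (m : ℕ) (F : (Fin m → α) → (Fin m → α) → ℝ≥0∞) :
    Q p m F = Q p m (fun S T =>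
      Ep (PMF.uniformOfFintype (Fin m → Bool))
        (fun η => F (swapPair η (S, T)).1 (swapPair η (S, T)).2)) := by
  have hcard : ((Fintype.card (Fin m → Bool) : ℝ≥0∞)) ≠ 0 := by
    simp [Fintype.card_ne_zero]
  have hcardtop : ((Fintype.card (Fin m → Bool) : ℝ≥0∞)) ≠ ⊤ := ENNReal.natCast_ne_top _
  have h1 : ∀ S T, Ep (PMF.uniformOfFintype (Fin m → Bool))
        (fun η => F (swapPair η (S, T)).1 (swapPair η (S, T)).2)
      = ∑ η : Fin m → Bool, (Fintype.card (Fin m → Bool) : ℝ≥0∞)⁻¹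
          * F (swapPair η (S, T)).1 (swapPair η (S, T)).2 := by
    intro S T
    rw [Ep, tsum_fintype]
    refine Finset.sum_congr rfl fun η _ => ?_
    rw [PMF.uniformOfFintype_apply]
  calc Q p m F
      = ∑ η : Fin m → Bool, (Fintype.card (Fin m → Bool) : ℝ≥0∞)⁻¹ * Q p m F := by
        rw [Finset.sum_const, Finset.card_univ, nsmul_eq_mul,
          ← mul_assoc, ENNReal.mul_inv_cancel hcard hcardtop, one_mul]
    _ = ∑ η : Fin m → Bool, (Fintype.card (Fin m → Bool) : ℝ≥0∞)⁻¹
          * Q p m (fun S T => F (swapPair η (S, T)).1 (swapPair η (S, T)).2) := by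
        refine Finset.sum_congr rfl fun η _ => ?_
        rw [Q_swap]
    _ = Q p m (fun S T => ∑ η : Fin m → Bool, (Fintype.card (Fin m → Bool) : ℝ≥0∞)⁻¹
          * F (swapPair η (S, T)).1 (swapPair η (S, T)).2) := by
        rw [Q_sum]
        refine Finset.sum_congr rfl fun η _ => ?_
        rw [Q_mul_left]
    _ = _ := by
        refine congrArg (Q p m) (funext fun S => funext fun T => ?_)
        exact (h1 S T).symm
def indE (s : Set α) : α → ℝ≥0∞ := s.indicator fun _ => 1

lemma indE_apply (s : Set α) (x : α) [Decidable (x ∈ s)] :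
    indE s x = if x ∈ s then 1 else 0 := by
  unfold indE
  by_cases h : x ∈ s <;> simp [Set.indicator, h]

lemma prob_eq_indE (p : PMF α) (s : Set α) : prob p s = Ep p (indE s) := prob_eq_Ep p s

lemma prob_empty (p : PMF α) : prob p (∅ : Set α) = 0 := by
  rw [prob_eq_indE]
  rw [show indE (∅ : Set α) = fun _ => 0 by ext x; simp [indE]]
  exact Ep_const p 0

lemma prob_biUnion_le {ι : Type*} (p : PMF α) (s : Finset ι) (f : ι → Set α) :
    prob p (⋃ i ∈ s, f i) ≤ ∑ i ∈ s, prob p (f i) := by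
  classical
  induction s using Finset.induction with
  | empty => simp [prob_empty]
  | @insert j s hj ih =>
    rw [Finset.set_biUnion_insert, Finset.sum_insert hj]
    exact (prob_union_le _ _ _).trans (add_le_add le_rfl ih)

variable {I : Type*}

def gfun (C : I → LO 2) : LO 2 × I → ℝ := fun ω => if C ω.2 = ω.1 then 1 else 0

lemma gfun_nonneg (C : I → LO 2) (ω : LO 2 × I) : 0 ≤ gfun C ω := by
  unfold gfun; split <;> norm_num

lemma gfun_le_one (C : I → LO 2) (ω : LO 2 × I) : gfun C ω ≤ 1 := by
  unfold gfun; split <;> norm_num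

lemma gfun_congr {C C' : I → LO 2} (ω : LO 2 × I) (h : C ω.2 = C' ω.2) :
    gfun C ω = gfun C' ω := by
  unfold gfun; rw [h]

/-- **Uniform convergence.** -/
theorem uniform_convergence (𝓒 : Set (I → LO 2)) (d : ℕ)
    (hup : ∀ J : Finset I, Shatters 𝓒 J → J.card ≤ d)
    (p : PMF (LO 2 × I)) (m : ℕ) {ε : ℝ} (hε : 0 < ε) (hε1 : ε ≤ 1) (hm8 : 8 ≤ m * ε^2) :
    prob (iidPMF p m) {S | ∃ C ∈ 𝓒, (m:ℝ)*ε < |(∑ k, gfun C (S k)) - m * Er p (gfun C)|}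
      ≤ ENNReal.ofReal (4 * ((2*m+1)^d : ℕ) * Real.exp (-(m*ε^2)/16)) := by
  classical
  have hm0 : 0 < m := by
    by_contra h
    push_neg at h
    interval_cases m
    simp at hm8
    nlinarith
  set Bad : Set (Fin m → LO 2 × I) :=
    {S | ∃ C ∈ 𝓒, (m:ℝ)*ε < |(∑ k, gfun C (S k)) - m * Er p (gfun C)|} with hBad
  set Pair : Set ((Fin m → LO 2 × I) × (Fin m → LO 2 × I)) :=
    {x | ∃ C ∈ 𝓒, (m:ℝ)*ε/2 < |∑ k, (gfun C (x.1 k) - gfun C (x.2 k))|} with hPair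
  -- Chebyshev: for each C, a fresh sample concentrates
  have cheb : ∀ C ∈ 𝓒, prob (iidPMF p m)
      {T | (m:ℝ)*ε/2 ≤ |(∑ k, gfun C (T k)) - m * Er p (gfun C)|} ≤ 2⁻¹ := by
    intro C _
    have h := chebyshev_iid p (gfun_nonneg C) (gfun_le_one C) m
      (t := (m:ℝ)*ε/2) (by positivity)
    refine h.trans ?_
    have hval : (m:ℝ) / ((m:ℝ)*ε/2)^2 ≤ 1/2 := by
      rw [div_le_div_iff₀ (by positivity) (by norm_num)]
      have hm' : (8:ℝ) ≤ m * ε^2 := hm8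
      have : ((m:ℝ)*ε/2)^2 = (m:ℝ)^2*ε^2/4 := by ring
      rw [this]
      nlinarith [(Nat.cast_pos (α := ℝ)).2 hm0, sq_nonneg ((m:ℝ)*ε)]
    calc ENNReal.ofReal ((m:ℝ) / ((m:ℝ)*ε/2)^2) ≤ ENNReal.ofReal (1/2) :=
          ENNReal.ofReal_le_ofReal hval
      _ = 2⁻¹ := by
          rw [ENNReal.ofReal_div_of_pos (by norm_num : (0:ℝ) < 2), ENNReal.ofReal_one,
            ENNReal.ofReal_ofNat, one_div]
  -- Step 1: symmetrization by a ghost sample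
  have step1 : prob (iidPMF p m) Bad ≤ 2 * Q p m (fun S T => indE Pair (S, T)) := by
    have key : ∀ S : Fin m → LO 2 × I, 2⁻¹ * indE Bad S ≤ Ep (iidPMF p m) (fun T => indE Pair (S, T)) := by
      intro S
      by_cases hS : S ∈ Bad
      · have hSmem : S ∈ Bad := hS
        obtain ⟨C, hC, hgap⟩ := hSmem
        -- good ghost samples land in Pair
        have hsub : {T : Fin m → LO 2 × I | |(∑ k, gfun C (T k)) - m * Er p (gfun C)| ≤ (m:ℝ)*ε/2}
            ⊆ {T | (S, T) ∈ Pair} := by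
          intro T hT
          simp only [Set.mem_setOf_eq] at hT ⊢
          refine ⟨C, hC, ?_⟩
          have heq : ∑ k, (gfun C (S k) - gfun C (T k))
              = ((∑ k, gfun C (S k)) - m * Er p (gfun C))
                - ((∑ k, gfun C (T k)) - m * Er p (gfun C)) := by
            rw [Finset.sum_sub_distrib]; ring
          rw [heq]
          have := abs_sub_abs_le_abs_sub ((∑ k, gfun C (S k)) - m * Er p (gfun C))
            ((∑ k, gfun C (T k)) - m * Er p (gfun C))
          linarith
        have hgood : 2⁻¹ ≤ prob (iidPMF p m)
            {T : Fin m → LO 2 × I | |(∑ k, gfun C (T k)) - m * Er p (gfun C)| ≤ (m:ℝ)*ε/2} := by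
          have hcompl : {T : Fin m → LO 2 × I | |(∑ k, gfun C (T k)) - m * Er p (gfun C)| ≤ (m:ℝ)*ε/2}ᶜ
              ⊆ {T | (m:ℝ)*ε/2 ≤ |(∑ k, gfun C (T k)) - m * Er p (gfun C)|} := by
            intro T hT
            simp only [Set.mem_compl_iff, Set.mem_setOf_eq, not_le] at hT ⊢
            exact hT.le
          have h1 := (prob_mono (iidPMF p m) hcompl).trans (cheb C hC)
          have h2 := prob_add_compl (iidPMF p m)
            {T : Fin m → LO 2 × I | |(∑ k, gfun C (T k)) - m * Er p (gfun C)| ≤ (m:ℝ)*ε/2}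
          have h3 : (1:ℝ≥0∞) - 2⁻¹ ≤ 1 - prob (iidPMF p m)
              {T : Fin m → LO 2 × I | |(∑ k, gfun C (T k)) - m * Er p (gfun C)| ≤ (m:ℝ)*ε/2}ᶜ :=
            tsub_le_tsub_left h1 1
          rw [ENNReal.one_sub_inv_two] at h3
          refine h3.trans ?_
          rw [tsub_le_iff_right]
          exact le_of_eq h2.symm
        calc 2⁻¹ * indE Bad S = 2⁻¹ := by
              rw [indE_apply, if_pos hS, mul_one]
          _ ≤ prob (iidPMF p m)
              {T : Fin m → LO 2 × I | |(∑ k, gfun C (T k)) - m * Er p (gfun C)| ≤ (m:ℝ)*ε/2} := hgood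
          _ ≤ prob (iidPMF p m) {T | (S, T) ∈ Pair} := prob_mono _ hsub
          _ = Ep (iidPMF p m) (indE {T | (S, T) ∈ Pair}) := prob_eq_indE _ _
          _ = Ep (iidPMF p m) (fun T => indE Pair (S, T)) := by
              refine congrArg _ (funext fun T => ?_)
              rw [indE_apply, indE_apply]
              exact if_congr Iff.rfl rfl rfl
          _ ≤ _ := le_rfl
      · rw [indE_apply, if_neg hS, mul_zero]
        exact zero_le ..
    calc prob (iidPMF p m) Bad = 2 * (2⁻¹ * prob (iidPMF p m) Bad) := by
          rw [← mul_assoc, ENNReal.mul_inv_cancel (by norm_num) (by norm_num), one_mul]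
      _ ≤ 2 * Q p m (fun S T => indE Pair (S, T)) := by
          refine mul_le_mul_right ?_ 2
          rw [prob_eq_indE, ← Ep_mul_left]
          exact Ep_mono key
  -- Step 2: random signs + union bound + Hoeffding
  have step2 : Q p m (fun S T => indE Pair (S, T))
      ≤ ENNReal.ofReal (((2*m+1)^d : ℕ) * (2 * Real.exp (-(m*ε^2)/16))) := by
    rw [Q_eq_sign_avg]
    refine (Q_mono p m (fun S T => ?_)).trans
      (le_of_eq (Q_const p m (ENNReal.ofReal (((2*m+1)^d : ℕ) * (2 * Real.exp (-(m*ε^2)/16))))))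
    -- fix S T; bound the probability over signs
    set J : Finset I := (Finset.univ.image fun k => (S k).2) ∪ (Finset.univ.image fun k => (T k).2)
      with hJ
    obtain ⟨𝓐, h𝓐1, h𝓐2, h𝓐3⟩ := restriction_bound 𝓒 d hup J
    have hJcard : J.card ≤ 2*m := by
      calc J.card ≤ (Finset.univ.image fun k : Fin m => (S k).2).card
          + (Finset.univ.image fun k : Fin m => (T k).2).card := Finset.card_union_le _ _
        _ ≤ m + m := add_le_add
            ((Finset.card_image_le).trans (by simp))
            ((Finset.card_image_le).trans (by simp))
        _ = 2*m := by ring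
    choose rep hrep𝓒 hrepA using h𝓐1
    set Crep : Finset I → (I → LO 2) :=
      fun A => if h : A ∈ 𝓐 then rep A h else fun _ => 1 with hCrep
    have hCrep𝓒 : ∀ A ∈ 𝓐, Crep A ∈ 𝓒 := fun A hA => by
      rw [hCrep]; simp only [dif_pos hA]; exact hrep𝓒 A hA
    have hCrepA : ∀ A ∈ 𝓐, A = J.filter (fun i => Crep A i ≠ 1) := fun A hA => by
      rw [hCrep]; simp only [dif_pos hA]; exact hrepA A hA
    -- the sum over swapped samples is a signed sum
    have hsum : ∀ (C : I → LO 2) (η : Fin m → Bool),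
        ∑ k, (gfun C ((swapPair η (S,T)).1 k) - gfun C ((swapPair η (S,T)).2 k))
          = ∑ k, (if η k then (gfun C (S k) - gfun C (T k))
              else -(gfun C (S k) - gfun C (T k))) := by
      intro C η
      refine Finset.sum_congr rfl fun k _ => ?_
      unfold swapPair
      by_cases hk : η k <;> simp [hk]
    -- agreement on J lets us replace C by a representative
    have hagree : ∀ C ∈ 𝓒, ∀ i ∈ J, C i = Crep (J.filter (fun i => C i ≠ 1)) i := by
      intro C hC i hi
      set A := J.filter (fun i => C i ≠ 1) with hA
      have hA𝓐 : A ∈ 𝓐 := h𝓐2 C hC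
      apply lo2_eq_of_ne_iff
      constructor
      · intro hne
        have hiA : i ∈ A := Finset.mem_filter.2 ⟨hi, hne⟩
        rw [hCrepA A hA𝓐] at hiA
        exact (Finset.mem_filter.1 hiA).2
      · intro hne
        have hiA : i ∈ A := by
          rw [hCrepA A hA𝓐]
          exact Finset.mem_filter.2 ⟨hi, hne⟩
        exact (Finset.mem_filter.1 hiA).2
    have hSJ : ∀ k, (S k).2 ∈ J := fun k =>
      Finset.mem_union_left _ (Finset.mem_image.2 ⟨k, Finset.mem_univ k, rfl⟩)
    have hTJ : ∀ k, (T k).2 ∈ J := fun k =>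
      Finset.mem_union_right _ (Finset.mem_image.2 ⟨k, Finset.mem_univ k, rfl⟩)
    -- covering by events of representatives
    have hcover : {η : Fin m → Bool | swapPair η (S, T) ∈ Pair}
        ⊆ ⋃ A ∈ 𝓐, {η : Fin m → Bool | (m:ℝ)*ε/2
            ≤ |∑ k, (if η k then (gfun (Crep A) (S k) - gfun (Crep A) (T k))
              else -(gfun (Crep A) (S k) - gfun (Crep A) (T k)))|} := by
      intro η hη
      simp only [Set.mem_setOf_eq, hPair] at hη
      obtain ⟨C, hC, hlt⟩ := hη
      rw [show (swapPair η (S,T)).1 = (fun k => if η k then S k else T k) from rfl,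
        show (swapPair η (S,T)).2 = (fun k => if η k then T k else S k) from rfl] at hlt
      have hlt' : (m:ℝ)*ε/2 < |∑ k, (if η k then (gfun C (S k) - gfun C (T k))
          else -(gfun C (S k) - gfun C (T k)))| := by
        rw [← hsum C η]
        exact hlt
      set A := J.filter (fun i => C i ≠ 1) with hA
      have hA𝓐 : A ∈ 𝓐 := h𝓐2 C hC
      refine Set.mem_biUnion hA𝓐 ?_
      simp only [Set.mem_setOf_eq]
      have hgS : ∀ k, gfun C (S k) = gfun (Crep A) (S k) :=
        fun k => gfun_congr (S k) (hagree C hC _ (hSJ k))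
      have hgT : ∀ k, gfun C (T k) = gfun (Crep A) (T k) :=
        fun k => gfun_congr (T k) (hagree C hC _ (hTJ k))
      refine le_of_lt ?_
      calc (m:ℝ)*ε/2 < |∑ k, (if η k then (gfun C (S k) - gfun C (T k))
          else -(gfun C (S k) - gfun C (T k)))| := hlt'
        _ = _ := by
            congr 1
            refine Finset.sum_congr rfl fun k _ => ?_
            rw [hgS k, hgT k]
    -- probability bound for each representative
    have hEach : ∀ A ∈ 𝓐, prob (PMF.uniformOfFintype (Fin m → Bool))
        {η : Fin m → Bool | (m:ℝ)*ε/2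
            ≤ |∑ k, (if η k then (gfun (Crep A) (S k) - gfun (Crep A) (T k))
              else -(gfun (Crep A) (S k) - gfun (Crep A) (T k)))|}
        ≤ ENNReal.ofReal (2 * Real.exp (-(m*ε^2)/16)) := by
      intro A hA
      have ha : ∀ k, |gfun (Crep A) (S k) - gfun (Crep A) (T k)| ≤ 1 := by
        intro k
        rw [abs_le]
        constructor
        · linarith [gfun_nonneg (Crep A) (S k), gfun_le_one (Crep A) (T k)]
        · linarith [gfun_le_one (Crep A) (S k), gfun_nonneg (Crep A) (T k)]
      have h := hoeffding_two_sided m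
        (fun k => gfun (Crep A) (S k) - gfun (Crep A) (T k)) ha
        (t := (m:ℝ)*ε/2) (lam := ε/4) (by positivity) (by linarith)
      refine h.trans (le_of_eq ?_)
      congr 2
      ring
    -- put it together
    have hprob : prob (PMF.uniformOfFintype (Fin m → Bool))
        {η : Fin m → Bool | swapPair η (S, T) ∈ Pair}
        ≤ ENNReal.ofReal (((2*m+1)^d : ℕ) * (2 * Real.exp (-(m*ε^2)/16))) := by
      calc prob (PMF.uniformOfFintype (Fin m → Bool)) {η | swapPair η (S, T) ∈ Pair}
          ≤ prob (PMF.uniformOfFintype (Fin m → Bool))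
            (⋃ A ∈ 𝓐, {η : Fin m → Bool | (m:ℝ)*ε/2
              ≤ |∑ k, (if η k then (gfun (Crep A) (S k) - gfun (Crep A) (T k))
                else -(gfun (Crep A) (S k) - gfun (Crep A) (T k)))|}) := prob_mono _ hcover
        _ ≤ ∑ A ∈ 𝓐, prob (PMF.uniformOfFintype (Fin m → Bool))
            {η : Fin m → Bool | (m:ℝ)*ε/2
              ≤ |∑ k, (if η k then (gfun (Crep A) (S k) - gfun (Crep A) (T k))
                else -(gfun (Crep A) (S k) - gfun (Crep A) (T k)))|} :=
            prob_biUnion_le _ _ _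
        _ ≤ ∑ _A ∈ 𝓐, ENNReal.ofReal (2 * Real.exp (-(m*ε^2)/16)) :=
            Finset.sum_le_sum hEach
        _ = (𝓐.card : ℝ≥0∞) * ENNReal.ofReal (2 * Real.exp (-(m*ε^2)/16)) := by
            rw [Finset.sum_const, nsmul_eq_mul]
        _ ≤ (((2*m+1)^d : ℕ) : ℝ≥0∞) * ENNReal.ofReal (2 * Real.exp (-(m*ε^2)/16)) := by
            refine mul_le_mul_left ?_ _
            refine Nat.cast_le.2 (h𝓐3.trans ?_)
            exact Nat.pow_le_pow_left (by omega) d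
        _ = ENNReal.ofReal (((2*m+1)^d : ℕ) * (2 * Real.exp (-(m*ε^2)/16))) := by
            rw [← ENNReal.ofReal_natCast ((2*m+1)^d), ← ENNReal.ofReal_mul (by positivity)]
    calc Ep (PMF.uniformOfFintype (Fin m → Bool))
          (fun η => indE Pair (swapPair η (S, T)))
        = Ep (PMF.uniformOfFintype (Fin m → Bool))
            (indE {η : Fin m → Bool | swapPair η (S, T) ∈ Pair}) := by
          refine congrArg _ (funext fun η => ?_)
          rw [indE_apply, indE_apply]
          exact if_congr Iff.rfl rfl rfl
      _ = prob (PMF.uniformOfFintype (Fin m → Bool))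
            {η : Fin m → Bool | swapPair η (S, T) ∈ Pair} := (prob_eq_indE _ _).symm
      _ ≤ _ := hprob
  -- combine
  calc prob (iidPMF p m) Bad ≤ 2 * Q p m (fun S T => indE Pair (S, T)) := step1
    _ ≤ 2 * ENNReal.ofReal (((2*m+1)^d : ℕ) * (2 * Real.exp (-(m*ε^2)/16))) :=
        mul_le_mul_right step2 2
    _ = ENNReal.ofReal (4 * ((2*m+1)^d : ℕ) * Real.exp (-(m*ε^2)/16)) := by
        rw [show (2:ℝ≥0∞) = ENNReal.ofReal 2 by simp, ← ENNReal.ofReal_mul (by norm_num)]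
        congr 1
        ring

set_option maxHeartbeats 1000000 in

lemma numeric (d : ℕ) (hd : 1 ≤ d) {ε δ : ℝ} (hε : 0 < ε) (hε2 : ε < 1/2)
    (hδ : 0 < δ) (hδ1 : δ < 1) (m : ℕ)
    (hm : (100000 : ℝ) / ε^2 * (d * (Real.log d + Real.log (1/ε) + Real.log (1/δ))) ≤ m) :
    8 ≤ (m:ℝ) * ε^2 ∧ 4 * (((2*m+1)^d : ℕ) : ℝ) * Real.exp (-((m:ℝ)*ε^2)/16) ≤ δ := by
  set x : ℝ := (m:ℝ) with hx
  set a : ℝ := Real.log d with ha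
  set b : ℝ := Real.log (1/ε) with hb
  set cδ : ℝ := Real.log (1/δ) with hc
  have hd1 : (1:ℝ) ≤ (d:ℝ) := by exact_mod_cast hd
  have hd0 : (0:ℝ) < (d:ℝ) := by linarith
  have ha0 : 0 ≤ a := Real.log_nonneg hd1
  have hb69 : 0.69 ≤ b := by
    have h2 : (2:ℝ) ≤ 1/ε := by rw [le_div_iff₀ hε]; linarith
    have := Real.log_le_log (by norm_num : (0:ℝ) < 2) h2
    have hl2 := Real.log_two_gt_d9
    linarith
  have hc0 : 0 ≤ cδ := Real.log_nonneg (by rw [le_div_iff₀ hδ]; linarith)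
  have hL : 0.69 ≤ a + b + cδ := by linarith
  have hε2pos : (0:ℝ) < ε^2 := by positivity
  -- base inequality: 100000 * d * L ≤ x ε²
  have hxe : 100000 * ((d:ℝ) * (a + b + cδ)) ≤ x * ε^2 := by
    have h1 : (100000:ℝ) / ε^2 * ((d:ℝ) * (a + b + cδ))
        = (100000 * ((d:ℝ) * (a + b + cδ))) / ε^2 := by ring
    rw [h1] at hm
    exact (div_le_iff₀ hε2pos).1 hm
  -- products as atoms
  have hda : 0 ≤ (d:ℝ) * a := mul_nonneg hd0.le ha0
  have hdb : 0.69 * (d:ℝ) ≤ (d:ℝ) * b := by nlinarith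
  have hdb0 : 0 ≤ (d:ℝ) * b := by nlinarith
  have hdc : cδ ≤ (d:ℝ) * cδ := by nlinarith
  have hdc0 : 0 ≤ (d:ℝ) * cδ := by nlinarith
  have part1 : 8 ≤ x * ε^2 := by nlinarith
  refine ⟨part1, ?_⟩
  have hx32 : 32 ≤ x := by nlinarith [sq_nonneg ε]
  have hx0 : (0:ℝ) < x := by linarith
  have hx1 : (1:ℝ) ≤ x := by linarith
  -- key: 16 d log(2x+1) + 16 log(4/δ) ≤ x ε²
  have h3x : Real.log (2*x+1) ≤ Real.log 3 + Real.log x := by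
    have h1 : (2*x+1) ≤ 3*x := by linarith
    calc Real.log (2*x+1) ≤ Real.log (3*x) := Real.log_le_log (by linarith) h1
      _ = Real.log 3 + Real.log x := Real.log_mul (by norm_num) (ne_of_gt hx0)
  have hlog3 : Real.log 3 ≤ 2 := by
    have := Real.log_le_sub_one_of_pos (by norm_num : (0:ℝ) < 3)
    linarith
  have hlog32 : Real.log 32 ≤ 31 := by
    have := Real.log_le_sub_one_of_pos (by norm_num : (0:ℝ) < 32)
    linarith
  have hlogx : Real.log x ≤ x*ε^2/(32*(d:ℝ)) + (Real.log 32 + a + 2*b) := by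
    have hsplit : x = (x*ε^2/(32*(d:ℝ))) * (32*(d:ℝ)/ε^2) := by
      field_simp
    have h1 : Real.log (x*ε^2/(32*(d:ℝ))) ≤ x*ε^2/(32*(d:ℝ)) := by
      have := Real.log_le_sub_one_of_pos (show (0:ℝ) < x*ε^2/(32*(d:ℝ)) by positivity)
      linarith
    have h2 : Real.log (32*(d:ℝ)/ε^2) = Real.log 32 + a + 2*b := by
      have he : 32*(d:ℝ)/ε^2 = 32*(d:ℝ)*(1/ε)^2 := by field_simp
      rw [he, Real.log_mul (by positivity) (by positivity), Real.log_mul (by norm_num)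
        (ne_of_gt hd0), Real.log_pow]
      push_cast
      ring
    calc Real.log x = Real.log ((x*ε^2/(32*(d:ℝ))) * (32*(d:ℝ)/ε^2)) := by rw [← hsplit]
      _ = Real.log (x*ε^2/(32*(d:ℝ))) + Real.log (32*(d:ℝ)/ε^2) :=
          Real.log_mul (by positivity) (by positivity)
      _ ≤ x*ε^2/(32*(d:ℝ)) + (Real.log 32 + a + 2*b) := by linarith
  have hlog4δ : Real.log (4/δ) = Real.log 4 + cδ := by
    rw [show (4:ℝ)/δ = 4*(1/δ) by ring, Real.log_mul (by norm_num) (by positivity)]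
  have hlog4 : Real.log 4 ≤ 3 := by
    have := Real.log_le_sub_one_of_pos (by norm_num : (0:ℝ) < 4)
    linarith
  have hdlogx : (d:ℝ) * Real.log x ≤ x*ε^2/32 + ((d:ℝ)*Real.log 32 + (d:ℝ)*a + 2*((d:ℝ)*b)) := by
    have := mul_le_mul_of_nonneg_left hlogx hd0.le
    have hcancel : (d:ℝ) * (x*ε^2/(32*(d:ℝ))) = x*ε^2/32 := by
      field_simp
    nlinarith [this]
  have hdlog32 : (d:ℝ) * Real.log 32 ≤ 31*(d:ℝ) := by nlinarith
  have hdlog3 : (d:ℝ) * Real.log 3 ≤ 2*(d:ℝ) := by nlinarith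
  have hd33 : 33*(d:ℝ) ≤ (33/0.69) * ((d:ℝ)*b) := by nlinarith
  have hkey : 16*(d:ℝ)*Real.log (2*x+1) + 16*Real.log (4/δ) ≤ x*ε^2 := by
    have hmul : (d:ℝ)*Real.log (2*x+1) ≤ (d:ℝ)*Real.log 3 + (d:ℝ)*Real.log x :=
      by nlinarith [mul_le_mul_of_nonneg_left h3x hd0.le]
    rw [hlog4δ]
    nlinarith
  -- conclude
  set y : ℝ := 2*x+1 with hy
  have hy1 : (1:ℝ) < y := by linarith
  have hy0 : (0:ℝ) < y := by linarith
  have hcast : (((2*m+1)^d : ℕ) : ℝ) = y^d := by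
    push_cast
    rw [hy, hx]
  have hexp1 : Real.exp (-((x*ε^2))/16) ≤ Real.exp (-((d:ℝ)*Real.log y + Real.log (4/δ))) := by
    apply Real.exp_le_exp.2
    rw [neg_div]
    rw [neg_le_neg_iff]
    linarith
  have hexp2 : Real.exp (-((d:ℝ)*Real.log y + Real.log (4/δ))) = (y^d)⁻¹ * (δ/4) := by
    rw [neg_add, Real.exp_add, Real.exp_neg, Real.exp_neg]
    congr 1
    · congr 1
      rw [← Real.log_pow, Real.exp_log (by positivity)]
    · rw [Real.exp_log (by positivity)]
      rw [inv_div]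
  calc 4 * (((2*m+1)^d : ℕ) : ℝ) * Real.exp (-((m:ℝ)*ε^2)/16)
      = 4 * y^d * Real.exp (-(x*ε^2)/16) := by rw [hcast]
    _ ≤ 4 * y^d * Real.exp (-((d:ℝ)*Real.log y + Real.log (4/δ))) := by
        refine mul_le_mul_of_nonneg_left hexp1 (by positivity)
    _ = 4 * y^d * ((y^d)⁻¹ * (δ/4)) := by rw [hexp2]
    _ = δ := by
        field_simp
lemma sampleDist_apply {I : Type*} (DI : PMF I) (M : I → PMF (LO 2)) (o : LO 2) (i : I) :
    sampleDist DI M (o, i) = DI i * M i o := by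
  classical
  unfold sampleDist
  rw [PMF.bind_apply]
  rw [tsum_eq_single i (fun j hj => ?_)]
  · rw [PMF.map_apply]
    rw [tsum_eq_single o (fun o' ho' => ?_)]
    · rw [if_pos rfl]
    · rw [if_neg]
      intro h
      exact ho' (by injection h with h1 h2; exact h1.symm)
  · rw [PMF.map_apply]
    convert mul_zero (DI j)
    rw [ENNReal.tsum_eq_zero]
    intro o'
    rw [if_neg]
    intro h
    exact hj (by injection h with h1 h2; exact h2.symm)

lemma pop_sum_le_one {I : Type*} (DI : PMF I) (M : I → PMF (LO 2)) (C : I → LO 2) :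
    (∑' i, DI i * M i (C i)) ≤ 1 := by
  calc (∑' i, DI i * M i (C i)) ≤ ∑' i, DI i * 1 :=
        ENNReal.tsum_le_tsum fun i => mul_le_mul_right (PMF.coe_le_one _ _) _
    _ = 1 := by simp [DI.tsum_coe]

lemma popUtility_nonneg {I : Type*} (DI : PMF I) (M : I → PMF (LO 2)) (C : I → LO 2) :
    0 ≤ popUtility DI M C := ENNReal.toReal_nonneg

lemma popUtility_le_one {I : Type*} (DI : PMF I) (M : I → PMF (LO 2)) (C : I → LO 2) :
    popUtility DI M C ≤ 1 := by
  unfold popUtility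
  calc (∑' i, DI i * M i (C i)).toReal ≤ (1:ℝ≥0∞).toReal :=
        ENNReal.toReal_mono ENNReal.one_ne_top (pop_sum_le_one DI M C)
    _ = 1 := ENNReal.toReal_one

lemma Er_gfun_eq_popUtility {I : Type*} (DI : PMF I) (M : I → PMF (LO 2)) (C : I → LO 2) :
    Er (sampleDist DI M) (gfun C) = popUtility DI M C := by
  classical
  rw [Er_eq_toReal (sampleDist DI M) (gfun_nonneg C) (B := 1)
    (fun ω => by rw [abs_of_nonneg (gfun_nonneg C ω)]; exact gfun_le_one C ω)]
  unfold popUtility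
  congr 1
  rw [Ep, ENNReal.tsum_prod']
  rw [ENNReal.tsum_comm]
  refine tsum_congr fun i => ?_
  rw [tsum_eq_single (C i) (fun o ho => ?_)]
  · rw [sampleDist_apply]
    rw [show gfun C (C i, i) = 1 from if_pos rfl]
    simp
  · rw [show gfun C (o, i) = 0 from if_neg (fun h => ho h.symm)]
    simp

lemma sampleUtility_eq {I : Type*} {m : ℕ} (S : Fin m → LO 2 × I) (C : I → LO 2) :
    sampleUtility S C = (∑ k, gfun C (S k)) / m := rfl


end MVP

open MVP in
/-- **Majority vote approximately maximizes population utility.** There is a universal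
constant `c > 0` such that for `N = 2`, any nonempty candidate space `𝓒` of finite nonzero
VC dimension `d`, any mechanism `fmaj` that maps each sample to a profile of `𝓒` maximizing
the sample utility, any saliency distribution, population marginal, `ε > 0`, `δ ∈ (0,1)`,
and sample size `m ≥ (c/ε²)·d·(log d + log(1/ε) + log(1/δ))`: with probability at least
`1 - δ`, `U(fmaj(S)) ≥ sup_{C ∈ 𝓒} U(C) - 2ε`. -/
theorem majority_vote_approximately_maximizes_population_utility :
    ∃ c : ℝ, 0 < c ∧
      ∀ (I : Type) (𝓒 : Set (I → LO 2)), 𝓒.Nonempty →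
        ∀ d : ℕ, 0 < d → VCDimEq 𝓒 d →
          ∀ fmaj : ∀ m : ℕ, (Fin m → LO 2 × I) → (I → LO 2),
            (∀ (m : ℕ) (S : Fin m → LO 2 × I), fmaj m S ∈ 𝓒 ∧
              ∀ C ∈ 𝓒, sampleUtility S C ≤ sampleUtility S (fmaj m S)) →
            ∀ DI : PMF I, (∀ i : I, DI i ≠ 0) →
              ∀ (M : I → PMF (LO 2)) (ε δ : ℝ), 0 < ε → 0 < δ → δ < 1 →
                ∀ m : ℕ,
                  c / ε ^ 2 * (d * (Real.log d + Real.log (1 / ε) + Real.log (1 / δ))) ≤ m →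
                  ENNReal.ofReal (1 - δ) ≤
                    prob (iidPMF (sampleDist DI M) m)
                      {S | (⨆ C : 𝓒, popUtility DI M C.1) - 2 * ε ≤
                        popUtility DI M (fmaj m S)} := by
  refine ⟨100000, by norm_num, ?_⟩
  intro I 𝓒 h𝓒 d hd hVC fmaj hfmaj DI _ M ε δ hε hδ hδ1 m hm
  haveI : Nonempty 𝓒 := h𝓒.to_subtype
  have hbdd : BddAbove (Set.range fun C : 𝓒 => popUtility DI M C.1) :=
    ⟨1, by rintro x ⟨C, rfl⟩; exact popUtility_le_one DI M C.1⟩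
  have hofReal : ENNReal.ofReal (1 - δ) ≤ 1 := by
    calc ENNReal.ofReal (1 - δ) ≤ ENNReal.ofReal 1 :=
          ENNReal.ofReal_le_ofReal (by linarith)
      _ = 1 := ENNReal.ofReal_one
  by_cases hεhalf : (1:ℝ)/2 ≤ ε
  · -- trivial case: the event is everything
    have hall : {S : Fin m → LO 2 × I | (⨆ C : 𝓒, popUtility DI M C.1) - 2 * ε ≤
        popUtility DI M (fmaj m S)} = Set.univ := by
      refine Set.eq_univ_of_forall fun S => ?_
      have hsup : (⨆ C : 𝓒, popUtility DI M C.1) ≤ 1 :=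
        ciSup_le fun C => popUtility_le_one DI M C.1
      have := popUtility_nonneg DI M (fmaj m S)
      simp only [Set.mem_setOf_eq]
      linarith
    rw [hall, prob_univ]
    exact hofReal
  · push_neg at hεhalf
    obtain ⟨h8, htail⟩ := numeric d hd hε hεhalf hδ hδ1 m hm
    have hm0 : 0 < m := by
      by_contra h
      push_neg at h
      interval_cases m
      simp at h8
      nlinarith
    have hmR : (0:ℝ) < m := Nat.cast_pos.2 hm0
    set p := sampleDist DI M with hp
    set Bad : Set (Fin m → LO 2 × I) :=
      {S | ∃ C ∈ 𝓒, (m:ℝ)*ε < |(∑ k, gfun C (S k)) - m * Er p (gfun C)|} with hBad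
    have huc := uniform_convergence 𝓒 d hVC.2 p m hε (by linarith) h8
    have hucδ : prob (iidPMF p m) Bad ≤ ENNReal.ofReal δ :=
      huc.trans (ENNReal.ofReal_le_ofReal htail)
    have hsub : Badᶜ ⊆ {S : Fin m → LO 2 × I | (⨆ C : 𝓒, popUtility DI M C.1) - 2 * ε ≤
        popUtility DI M (fmaj m S)} := by
      intro S hS
      simp only [hBad, Set.mem_compl_iff, Set.mem_setOf_eq, not_exists, not_lt] at hS
      push_neg at hS
      simp only [Set.mem_setOf_eq]
      rw [sub_le_iff_le_add]
      refine ciSup_le fun C => ?_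
      obtain ⟨hfm𝓒, hfmax⟩ := hfmaj m S
      have hC𝓒 := C.2
      have h1 : |(∑ k, gfun C.1 (S k)) - m * Er p (gfun C.1)| ≤ (m:ℝ)*ε := hS C.1 hC𝓒
      have h2 : |(∑ k, gfun (fmaj m S) (S k)) - m * Er p (gfun (fmaj m S))| ≤ (m:ℝ)*ε :=
        hS (fmaj m S) hfm𝓒
      have h3 : (∑ k, gfun C.1 (S k)) ≤ ∑ k, gfun (fmaj m S) (S k) := by
        have := hfmax C.1 hC𝓒
        rw [sampleUtility_eq, sampleUtility_eq, div_le_div_iff₀ hmR hmR] at this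
        nlinarith
      have e1 := Er_gfun_eq_popUtility DI M C.1
      have e2 := Er_gfun_eq_popUtility DI M (fmaj m S)
      rw [← hp] at e1 e2
      rw [← e1, ← e2]
      have a1 := abs_le.1 h1
      have a2 := abs_le.1 h2
      have : (m:ℝ) * Er p (gfun C.1) ≤ m * Er p (gfun (fmaj m S)) + m * (2*ε) := by
        nlinarith
      nlinarith
    have hcompl := prob_add_compl (iidPMF p m) Bad
    calc ENNReal.ofReal (1 - δ) = 1 - ENNReal.ofReal δ := by
          rw [ENNReal.ofReal_sub 1 hδ.le, ENNReal.ofReal_one]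
      _ ≤ 1 - prob (iidPMF p m) Bad := tsub_le_tsub_left hucδ 1
      _ ≤ prob (iidPMF p m) Badᶜ := by
          rw [tsub_le_iff_right]
          rw [add_comm] at hcompl
          exact le_of_eq hcompl.symm
      _ ≤ _ := prob_mono _ hsub
end
end

section
/- Scoring mechanisms approximately maximize population score: Suppose the issue set 𝓘 is finite. For every B > 0 there is a constant c > 0 depending only on B with the following property. For every scoring rule s with |s| ≤ B, every ε > 0 and δ ∈ (0,1), and every sample size m ≥ (c/ε²)·(|𝓘|·N·log N + log(1/δ)), with probability at least 1 − δ over an i.i.d. sample S of size m, U^s(f_s(S)) ≥ sup_{C ∈ 𝓒} U^s(C) − 2ε. -/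
open scoped ENNReal

noncomputable section

/-- Sample score of profile `C` on sample `S` under scoring rule `s`. -/
def sampleScore {I : Type*} {N : ℕ} (s : LO N → LO N → ℝ) {m : ℕ}
    (S : Fin m → LO N × I) (C : I → LO N) : ℝ :=
  (∑ k : Fin m, s (S k).1 (C (S k).2)) / m

/-- Population score `U^s(C) = E_{i ~ 𝓓_𝓘, o ~ 𝓜(i)}[s(o, C(i))]`. -/
def popScore {I : Type*} {N : ℕ} (DI : PMF I) (M : I → PMF (LO N))
    (s : LO N → LO N → ℝ) (C : I → LO N) : ℝ :=
  ∑' i, (DI i).toReal * ∑ o : LO N, (M i o).toReal * s o (C i)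

lemma exp_le_one_add_sq {y : ℝ} (hy : |y| ≤ 1) : Real.exp y ≤ 1 + y + y ^ 2 := by
  have h := Real.exp_bound hy (by norm_num : 0 < 2)
  have h2 : ∑ i ∈ Finset.range 2, y ^ i / (Nat.factorial i) = 1 + y := by
    simp [Finset.sum_range_succ]
  rw [h2] at h
  have h3 : Real.exp y - (1 + y) ≤ |y| ^ 2 * ((2 : ℕ).succ / ((2 : ℕ).factorial * 2)) :=
    le_trans (le_abs_self _) h
  have habs : |y| ^ 2 = y ^ 2 := sq_abs y
  have : ((2:ℕ).succ : ℝ) / (((2:ℕ).factorial : ℝ) * 2) = 3 / 4 := by norm_num [Nat.factorial]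
  rw [habs, this] at h3
  nlinarith [sq_nonneg y]

open scoped Classical in
lemma iid_apply {α : Type*} (p : PMF α) : ∀ (m : ℕ) (S : Fin m → α),
    iidPMF p m S = ∏ k, p (S k)
  | 0, S => by
      have hS : S = (fun i => i.elim0) := funext fun i => i.elim0
      subst hS
      simp [iidPMF]
  | (m + 1), S => by
      have inner : ∀ a : α, ((iidPMF p m).map (fun f => Fin.cons a f)) S
          = if a = S 0 then iidPMF p m (Fin.tail S) else 0 := by
        intro a
        rw [PMF.map_apply]
        by_cases ha : a = S 0
        · subst ha
          rw [tsum_eq_single (Fin.tail S)]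
          · simp [Fin.cons_self_tail]
          · intro f hf
            rw [if_neg]
            intro hEq
            apply hf
            have := congrArg Fin.tail hEq
            simpa [Fin.tail_cons] using this.symm
        · rw [if_neg ha, ENNReal.tsum_eq_zero]
          intro f
          rw [if_neg]
          intro hEq
          apply ha
          have := congrArg (fun g => g 0) hEq
          simpa using this.symm
      rw [iidPMF, PMF.bind_apply]
      rw [tsum_eq_single (S 0)]
      · rw [inner, if_pos rfl, iid_apply p m (Fin.tail S), Fin.prod_univ_succ]
        rfl
      · intro a ha
        rw [inner, if_neg ha, mul_zero]

lemma sum_toReal_pmf {α : Type*} [Fintype α] (p : PMF α) : ∑ x, (p x).toReal = 1 := by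
  have h : ∑ x, p x = 1 := by rw [← p.tsum_coe, tsum_fintype]
  have := congrArg ENNReal.toReal h
  rwa [ENNReal.toReal_sum (fun a _ => p.apply_ne_top a)] at this

lemma prob_ge {α : Type*} [Fintype α] (p : PMF α) (s : Set α) (r : ℝ)
    (h : 1 - r ≤ ∑ x, Set.indicator s (fun x => (p x).toReal) x) :
    ENNReal.ofReal (1 - r) ≤ prob p s := by
  have hp : prob p s = ENNReal.ofReal (∑ x, Set.indicator s (fun x => (p x).toReal) x) := by
    rw [prob, PMF.toOuterMeasure_apply, tsum_fintype,
      ENNReal.ofReal_sum_of_nonneg (fun i _ => Set.indicator_nonneg (fun _ _ => ENNReal.toReal_nonneg) i)]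
    refine Finset.sum_congr rfl fun x _ => ?_
    by_cases hx : x ∈ s
    · simp [Set.indicator_of_mem hx, ENNReal.ofReal_toReal (p.apply_ne_top x)]
    · simp [Set.indicator_of_notMem hx]
  rw [hp]
  exact ENNReal.ofReal_le_ofReal h

lemma mgf_iid {α : Type*} [Fintype α] (p : PMF α) (g : α → ℝ) (m : ℕ) :
    ∑ S : Fin m → α, (iidPMF p m S).toReal * Real.exp (∑ k, g (S k))
      = (∑ x, (p x).toReal * Real.exp (g x)) ^ m := by
  rw [Fintype.sum_pow]
  refine Finset.sum_congr rfl fun S _ => ?_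
  rw [iid_apply, ENNReal.toReal_prod, Real.exp_sum, ← Finset.prod_mul_distrib]

lemma chernoff {α : Type*} [Fintype α] (p : PMF α) (f : α → ℝ) {B ε : ℝ} (hB : 0 < B)
    (hf : ∀ x, |f x| ≤ B) (hε : 0 < ε) (hεB : ε ≤ 4 * B) (m : ℕ) :
    ∑ S : Fin m → α, Set.indicator
        {S : Fin m → α | (m : ℝ) * ε ≤ (∑ k, f (S k)) - m * (∑ x, (p x).toReal * f x)}
        (fun S => (iidPMF p m S).toReal) S
      ≤ Real.exp (-(m * ε ^ 2) / (16 * B ^ 2)) := by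
  set μ := ∑ x, (p x).toReal * f x with hμdef
  have hq : ∀ x, 0 ≤ (p x).toReal := fun x => ENNReal.toReal_nonneg
  have hμ : |μ| ≤ B := by
    calc |μ| ≤ ∑ x, |(p x).toReal * f x| := Finset.abs_sum_le_sum_abs _ _
    _ ≤ ∑ x, (p x).toReal * B := by
        refine Finset.sum_le_sum fun x _ => ?_
        rw [abs_mul, abs_of_nonneg (hq x)]
        exact mul_le_mul_of_nonneg_left (hf x) (hq x)
    _ = B := by rw [← Finset.sum_mul, sum_toReal_pmf, one_mul]
  set t := ε / (8 * B ^ 2) with htdef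
  have ht : 0 < t := by positivity
  set g := fun x => t * (f x - μ) with hgdef
  -- pointwise: indicator ≤ weighted exponential
  have hpoint : ∀ S : Fin m → α,
      Set.indicator {S : Fin m → α | (m : ℝ) * ε ≤ (∑ k, f (S k)) - m * μ}
        (fun S => (iidPMF p m S).toReal) S
      ≤ Real.exp (-(t * (m * ε))) * ((iidPMF p m S).toReal * Real.exp (∑ k, g (S k))) := by
    intro S
    have hgs : ∑ k, g (S k) = t * ((∑ k, f (S k)) - m * μ) := by
      simp only [hgdef, ← Finset.mul_sum, Finset.sum_sub_distrib, Finset.sum_const,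
        Finset.card_univ, Fintype.card_fin, nsmul_eq_mul]
    by_cases hS : S ∈ {S : Fin m → α | (m : ℝ) * ε ≤ (∑ k, f (S k)) - m * μ}
    · rw [Set.indicator_of_mem hS]
      have h1 : (1 : ℝ) ≤ Real.exp (-(t * (m * ε))) * Real.exp (∑ k, g (S k)) := by
        rw [← Real.exp_add, ← Real.exp_zero]
        apply Real.exp_le_exp.2
        rw [hgs]
        have := hS
        simp only [Set.mem_setOf_eq] at this
        nlinarith
      have hA : 0 ≤ ((iidPMF p m) S).toReal := ENNReal.toReal_nonneg
      nlinarith [h1, hA, Real.exp_pos (-(t * (↑m * ε))), Real.exp_pos (∑ k, g (S k))]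
    · rw [Set.indicator_of_notMem hS]
      positivity
  refine le_trans (Finset.sum_le_sum fun S _ => hpoint S) ?_
  calc ∑ S : Fin m → α, Real.exp (-(t * (m * ε))) *
          ((iidPMF p m S).toReal * Real.exp (∑ k, g (S k)))
      = Real.exp (-(t * (m * ε))) * (∑ x, (p x).toReal * Real.exp (g x)) ^ m := by
        rw [← Finset.mul_sum, mgf_iid]
    _ ≤ Real.exp (-(t * (m * ε))) * Real.exp (t ^ 2 * (4 * B ^ 2)) ^ m := by
        have hbase : ∑ x, (p x).toReal * Real.exp (g x) ≤ Real.exp (t ^ 2 * (4 * B ^ 2)) := by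
          have hzero : ∑ x, (p x).toReal * (f x - μ) = 0 := by
            simp only [mul_sub, Finset.sum_sub_distrib, ← Finset.sum_mul, sum_toReal_pmf, one_mul]
            simp [hμdef]
          have hstep : ∑ x, (p x).toReal * Real.exp (g x)
              ≤ 1 + t ^ 2 * (4 * B ^ 2) := by
            calc ∑ x, (p x).toReal * Real.exp (g x)
                ≤ ∑ x, (p x).toReal * (1 + g x + g x ^ 2) := by
                  refine Finset.sum_le_sum fun x _ => ?_
                  refine mul_le_mul_of_nonneg_left (exp_le_one_add_sq ?_) (hq x)
                  have habs : |f x - μ| ≤ 2 * B := by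
                    have := hf x
                    have := hμ
                    calc |f x - μ| ≤ |f x| + |μ| := abs_sub _ _
                    _ ≤ 2 * B := by linarith
                  rw [hgdef]
                  rw [abs_mul, abs_of_pos ht]
                  calc t * |f x - μ| ≤ t * (2 * B) := by nlinarith
                  _ ≤ 1 := by
                      rw [htdef]
                      rw [div_mul_eq_mul_div, div_le_one (by positivity)]
                      nlinarith
              _ = 1 + t ^ 2 * ∑ x, (p x).toReal * (f x - μ) ^ 2 := by
                  have e1 : ∑ x, (p x).toReal * (1 + g x + g x ^ 2)
                      = (∑ x, (p x).toReal) + t * (∑ x, (p x).toReal * (f x - μ))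
                        + t ^ 2 * (∑ x, (p x).toReal * (f x - μ) ^ 2) := by
                    rw [Finset.mul_sum, Finset.mul_sum, ← Finset.sum_add_distrib,
                      ← Finset.sum_add_distrib]
                    refine Finset.sum_congr rfl fun x _ => ?_
                    simp only [hgdef]; ring
                  rw [e1, sum_toReal_pmf, hzero, mul_zero, add_zero]
              _ ≤ 1 + t ^ 2 * (4 * B ^ 2) := by
                  have : ∑ x, (p x).toReal * (f x - μ) ^ 2 ≤ 4 * B ^ 2 := by
                    calc ∑ x, (p x).toReal * (f x - μ) ^ 2
                        ≤ ∑ x, (p x).toReal * (4 * B ^ 2) := by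
                          refine Finset.sum_le_sum fun x _ => ?_
                          refine mul_le_mul_of_nonneg_left ?_ (hq x)
                          have habs : |f x - μ| ≤ 2 * B :=
                            calc |f x - μ| ≤ |f x| + |μ| := abs_sub _ _
                            _ ≤ 2 * B := by linarith [hf x, hμ]
                          nlinarith [abs_nonneg (f x - μ), sq_abs (f x - μ)]
                      _ = 4 * B ^ 2 := by rw [← Finset.sum_mul, sum_toReal_pmf, one_mul]
                  nlinarith [sq_nonneg t]
          calc ∑ x, (p x).toReal * Real.exp (g x) ≤ 1 + t ^ 2 * (4 * B ^ 2) := hstep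
            _ ≤ Real.exp (t ^ 2 * (4 * B ^ 2)) := by
                linarith [Real.add_one_le_exp (t ^ 2 * (4 * B ^ 2))]
        have hbase0 : 0 ≤ ∑ x, (p x).toReal * Real.exp (g x) :=
          Finset.sum_nonneg fun x _ => mul_nonneg (hq x) (Real.exp_pos _).le
        exact mul_le_mul_of_nonneg_left (pow_le_pow_left₀ hbase0 hbase m) (Real.exp_pos _).le
    _ = Real.exp (-(m * ε ^ 2) / (16 * B ^ 2)) := by
        rw [← Real.exp_nat_mul, ← Real.exp_add]
        congr 1
        rw [htdef]
        field_simp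
        ring

open scoped Classical in
lemma sampleDist_apply {I : Type*} {N : ℕ} (DI : PMF I) (M : I → PMF (LO N)) (o : LO N) (i : I) :
    sampleDist DI M (o, i) = DI i * M i o := by
  rw [sampleDist, PMF.bind_apply]
  rw [tsum_eq_single i]
  · rw [PMF.map_apply, tsum_eq_single o]
    · simp
    · intro o' ho'
      rw [if_neg]
      exact fun h => ho' (by injection h with h1 h2; exact h1.symm) |>.elim
  · intro j hj
    rw [PMF.map_apply, ENNReal.tsum_eq_zero.2, mul_zero]
    intro o'
    rw [if_neg]
    exact fun h => hj (by injection h with h1 h2; exact h2.symm) |>.elim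

lemma popScore_eq {I : Type*} [Fintype I] {N : ℕ} (DI : PMF I) (M : I → PMF (LO N))
    (s : LO N → LO N → ℝ) (C : I → LO N) :
    popScore DI M s C = ∑ x : LO N × I, (sampleDist DI M x).toReal * s x.1 (C x.2) := by
  rw [popScore, tsum_fintype, Fintype.sum_prod_type, Finset.sum_comm]
  refine Finset.sum_congr rfl fun i _ => ?_
  rw [Finset.mul_sum]
  refine Finset.sum_congr rfl fun o _ => ?_
  rw [sampleDist_apply, ENNReal.toReal_mul]
  ring

lemma abs_popScore_le {I : Type*} [Fintype I] {N : ℕ} (DI : PMF I) (M : I → PMF (LO N))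
    (s : LO N → LO N → ℝ) (C : I → LO N) {B : ℝ} (hs : ∀ o o', |s o o'| ≤ B) :
    |popScore DI M s C| ≤ B := by
  have hB : 0 ≤ B := le_trans (abs_nonneg _) (hs 1 1)
  rw [popScore_eq]
  calc |∑ x : LO N × I, (sampleDist DI M x).toReal * s x.1 (C x.2)|
      ≤ ∑ x : LO N × I, |(sampleDist DI M x).toReal * s x.1 (C x.2)| :=
        Finset.abs_sum_le_sum_abs _ _
    _ ≤ ∑ x : LO N × I, (sampleDist DI M x).toReal * B := by
        refine Finset.sum_le_sum fun x _ => ?_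
        rw [abs_mul, abs_of_nonneg ENNReal.toReal_nonneg]
        exact mul_le_mul_of_nonneg_left (hs _ _) ENNReal.toReal_nonneg
    _ = B := by rw [← Finset.sum_mul, sum_toReal_pmf, one_mul]

lemma indicator_union_le {α : Type*} (A Bs : Set α) (q : α → ℝ) (hq : ∀ x, 0 ≤ q x) (x : α) :
    Set.indicator (A ∪ Bs) q x ≤ Set.indicator A q x + Set.indicator Bs q x := by
  by_cases hx : x ∈ A ∪ Bs
  · rw [Set.indicator_of_mem hx]
    rcases hx with h | h
    · have := Set.indicator_of_mem h q
      have h2 : 0 ≤ Set.indicator Bs q x := Set.indicator_nonneg (fun y _ => hq y) x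
      linarith [this ▸ le_refl (q x)]
    · have := Set.indicator_of_mem h q
      have h2 : 0 ≤ Set.indicator A q x := Set.indicator_nonneg (fun y _ => hq y) x
      linarith [this ▸ le_refl (q x)]
  · rw [Set.indicator_of_notMem hx]
    have h1 : 0 ≤ Set.indicator A q x := Set.indicator_nonneg (fun y _ => hq y) x
    have h2 : 0 ≤ Set.indicator Bs q x := Set.indicator_nonneg (fun y _ => hq y) x
    linarith

lemma indicator_iUnion_le {α β : Type*} [Fintype β] (T : β → Set α) (q : α → ℝ)
    (hq : ∀ x, 0 ≤ q x) (x : α) :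
    Set.indicator (⋃ b, T b) q x ≤ ∑ b, Set.indicator (T b) q x := by
  by_cases hx : x ∈ ⋃ b, T b
  · rw [Set.indicator_of_mem hx]
    obtain ⟨b, hb⟩ := Set.mem_iUnion.1 hx
    calc q x = Set.indicator (T b) q x := (Set.indicator_of_mem hb q).symm
      _ ≤ ∑ b, Set.indicator (T b) q x :=
        Finset.single_le_sum (fun b' _ => Set.indicator_nonneg (fun y _ => hq y) x)
          (Finset.mem_univ b)
  · rw [Set.indicator_of_notMem hx]
    exact Finset.sum_nonneg fun b _ => Set.indicator_nonneg (fun y _ => hq y) x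


/-- **Scoring mechanisms approximately maximize population score.** Suppose the issue set
`I` is finite. For every bound `B > 0` there is a constant `c > 0` (depending only on `B`)
such that for every scoring rule `s` bounded by `B`, every scoring mechanism `fs`
(maximizing the sample score over `𝓒`), every `ε > 0`, `δ ∈ (0,1)`, and every sample size
`m ≥ (c/ε²)·(|I|·N·log N + log(1/δ))`: with probability at least `1 - δ` over an i.i.d.
sample `S` of size `m`, `U^s(fs(S)) ≥ sup_{C ∈ 𝓒} U^s(C) - 2ε`. -/
theorem scoring_mechanisms_approximately_maximize_population_score (B : ℝ) (hB : 0 < B) :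
    ∃ c : ℝ, 0 < c ∧
      ∀ (I : Type) (_ : Fintype I) (N : ℕ), 2 ≤ N →
        ∀ 𝓒 : Set (I → LO N), 𝓒.Nonempty →
          ∀ DI : PMF I, (∀ i : I, DI i ≠ 0) →
            ∀ (M : I → PMF (LO N)) (s : LO N → LO N → ℝ),
              (∀ o o' : LO N, |s o o'| ≤ B) →
              ∀ fs : ∀ m : ℕ, (Fin m → LO N × I) → (I → LO N),
                (∀ (m : ℕ) (S : Fin m → LO N × I), fs m S ∈ 𝓒 ∧
                  ∀ C ∈ 𝓒, sampleScore s S C ≤ sampleScore s S (fs m S)) →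
                ∀ ε δ : ℝ, 0 < ε → 0 < δ → δ < 1 →
                  ∀ m : ℕ,
                    c / ε ^ 2 * ((Fintype.card I : ℝ) * N * Real.log N + Real.log (1 / δ))
                      ≤ m →
                    ENNReal.ofReal (1 - δ) ≤
                      prob (iidPMF (sampleDist DI M) m)
                        {S | (⨆ C : 𝓒, popScore DI M s C.1) - 2 * ε ≤
                          popScore DI M s (fs m S)} := by
  refine ⟨64 * B ^ 2, by positivity, ?_⟩
  intro I _ N hN 𝓒 h𝓒 DI hDI M s hs fs hfs ε δ hε hδ0 hδ1 m hm
  classical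
  haveI hI : Nonempty I := ⟨DI.support_nonempty.choose⟩
  haveI h𝓒' : Nonempty ↥𝓒 := h𝓒.to_subtype
  set p := sampleDist DI M with hp
  by_cases hεB : ε ≤ 4 * B
  case neg =>
    have huniv : {S : Fin m → LO N × I | (⨆ C : 𝓒, popScore DI M s C.1) - 2 * ε ≤
        popScore DI M s (fs m S)} = Set.univ := by
      rw [Set.eq_univ_iff_forall]
      intro S
      simp only [Set.mem_setOf_eq, sub_le_iff_le_add]
      refine ciSup_le fun C => ?_
      have h1 := abs_le.1 (abs_popScore_le DI M s C.1 hs)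
      have h2 := abs_le.1 (abs_popScore_le DI M s (fs m S) hs)
      push_neg at hεB
      linarith [h1.2, h2.1]
    rw [huniv]
    have h1 : prob (iidPMF p m) Set.univ = 1 := by
      rw [prob, PMF.toOuterMeasure_apply]
      simp only [Set.indicator_univ]; exact (iidPMF p m).tsum_coe
    rw [h1]
    exact ENNReal.ofReal_le_one.2 (by linarith)
  case pos =>
    -- notation
    set f : (I → LO N) → (LO N × I) → ℝ := fun C x => s x.1 (C x.2) with hf
    have hfbd : ∀ C : I → LO N, ∀ x, |f C x| ≤ B := fun C x => hs _ _
    set A := (Fintype.card I : ℝ) * N * Real.log N with hA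
    set L := Real.log (1 / δ) with hL
    have hcI : (1 : ℝ) ≤ Fintype.card I := by exact_mod_cast Fintype.card_pos
    have hN2 : (2 : ℝ) ≤ (N : ℝ) := by exact_mod_cast hN
    have hlog2 : (0 : ℝ) < Real.log 2 := Real.log_pos (by norm_num)
    have hlogN : Real.log 2 ≤ Real.log N := Real.log_le_log (by norm_num) hN2
    have hlogNpos : 0 < Real.log N := Real.log_pos (by exact_mod_cast lt_of_lt_of_le one_lt_two hN)
    have hApos : 0 < A := by
      rw [hA]
      exact mul_pos (mul_pos (by linarith) (by linarith)) hlogNpos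
    have hLpos : 0 < L := Real.log_pos (by rw [lt_div_iff₀ hδ0]; linarith)
    -- m ≥ 1
    have hm0 : (0 : ℝ) < m := by
      have : 0 < 64 * B ^ 2 / ε ^ 2 * (A + L) := by positivity
      linarith
    have hm1 : 1 ≤ m := by exact_mod_cast Nat.one_le_iff_ne_zero.2 (by
      intro h; rw [h] at hm0; simp at hm0)
    -- population means match chernoff's μ
    have hμ : ∀ C : I → LO N, popScore DI M s C = ∑ x : LO N × I, (p x).toReal * f C x :=
      fun C => popScore_eq DI M s C
    -- bad events
    set Up : (I → LO N) → Set (Fin m → LO N × I) := fun C =>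
      {S | (m : ℝ) * ε ≤ (∑ k, f C (S k)) - m * (∑ x, (p x).toReal * f C x)} with hUp
    set Dn : (I → LO N) → Set (Fin m → LO N × I) := fun C =>
      {S | (m : ℝ) * ε ≤ (∑ k, (fun x => -(f C x)) (S k))
        - m * (∑ x, (p x).toReal * (fun x => -(f C x)) x)} with hDn
    set bad : Set (Fin m → LO N × I) := ⋃ C : I → LO N, (Up C ∪ Dn C) with hbad
    set q : (Fin m → LO N × I) → ℝ := fun S => ((iidPMF p m) S).toReal with hq
    have hqnn : ∀ S, 0 ≤ q S := fun S => ENNReal.toReal_nonneg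
    -- complement of bad is good
    have hsub : badᶜ ⊆ {S : Fin m → LO N × I | (⨆ C : 𝓒, popScore DI M s C.1) - 2 * ε ≤
        popScore DI M s (fs m S)} := by
      intro S hS
      simp only [hbad, Set.compl_iUnion, Set.mem_iInter, Set.mem_compl_iff, Set.mem_union,
        not_or] at hS
      have hdev : ∀ C : I → LO N, |sampleScore s S C - popScore DI M s C| ≤ ε := by
        intro C
        obtain ⟨h1, h2⟩ := hS C
        simp only [hUp, Set.mem_setOf_eq, not_le] at h1
        simp only [hDn, Set.mem_setOf_eq, not_le] at h2
        rw [Finset.sum_neg_distrib] at h2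
        have hsum : ∑ x : LO N × I, (p x).toReal * -f C x
            = -∑ x : LO N × I, (p x).toReal * f C x := by
          rw [← Finset.sum_neg_distrib]
          exact Finset.sum_congr rfl fun x _ => by ring
        rw [hsum] at h2
        have heq : sampleScore s S C - popScore DI M s C
            = ((∑ k, f C (S k)) - m * (∑ x : LO N × I, (p x).toReal * f C x)) / m := by
          rw [hμ C, sampleScore]
          field_simp
          rfl
        rw [heq, abs_div, abs_of_pos hm0, div_le_iff₀ hm0]
        rw [abs_le]
        constructor <;> nlinarith
      simp only [Set.mem_setOf_eq, sub_le_iff_le_add]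
      refine ciSup_le fun C => ?_
      have hC1 := (hfs m S).1
      have hC2 := (hfs m S).2 C.1 C.2
      have d1 := abs_le.1 (hdev C.1)
      have d2 := abs_le.1 (hdev (fs m S))
      linarith [d1.1, d1.2, d2.1, d2.2]
    -- probability bound on bad
    set E := Real.exp (-(m * ε ^ 2) / (16 * B ^ 2)) with hE
    have hchern : ∀ C : I → LO N,
        (∑ S : Fin m → LO N × I, Set.indicator (Up C) q S)
          + (∑ S : Fin m → LO N × I, Set.indicator (Dn C) q S) ≤ 2 * E := by
      intro C
      have h1 := chernoff p (f C) hB (hfbd C) hε hεB m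
      have h2 := chernoff p (fun x => -(f C x)) hB (fun x => by rw [abs_neg]; exact hs _ _)
        hε hεB m
      have := add_le_add h1 h2
      rw [hUp, hDn]
      linarith
    have hbadsum : ∑ S : Fin m → LO N × I, Set.indicator bad q S ≤
        (Fintype.card (I → LO N) : ℝ) * (2 * E) := by
      calc ∑ S : Fin m → LO N × I, Set.indicator bad q S
          ≤ ∑ S : Fin m → LO N × I, ∑ C : I → LO N,
              Set.indicator (Up C ∪ Dn C) q S := by
            refine Finset.sum_le_sum fun S _ => ?_
            exact indicator_iUnion_le _ q hqnn S
        _ = ∑ C : I → LO N, ∑ S : Fin m → LO N × I,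
              Set.indicator (Up C ∪ Dn C) q S := Finset.sum_comm
        _ ≤ ∑ C : I → LO N, (2 * E) := by
            refine Finset.sum_le_sum fun C _ => ?_
            calc ∑ S : Fin m → LO N × I, Set.indicator (Up C ∪ Dn C) q S
                ≤ ∑ S : Fin m → LO N × I,
                    (Set.indicator (Up C) q S + Set.indicator (Dn C) q S) :=
                  Finset.sum_le_sum fun S _ => indicator_union_le _ _ q hqnn S
              _ = (∑ S : Fin m → LO N × I, Set.indicator (Up C) q S)
                  + ∑ S : Fin m → LO N × I, Set.indicator (Dn C) q S :=
                  Finset.sum_add_distrib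
              _ ≤ 2 * E := hchern C
        _ = (Fintype.card (I → LO N) : ℝ) * (2 * E) := by
            rw [Finset.sum_const, Finset.card_univ, nsmul_eq_mul]
    -- numeric bound : K * 2E ≤ δ
    set K := Fintype.card (I → LO N) with hK
    have hKpos : 0 < K := Fintype.card_pos
    have hKR : (0 : ℝ) < K := by exact_mod_cast hKpos
    have hlogK : Real.log K ≤ A := by
      have hcard : K = (Fintype.card (LO N)) ^ (Fintype.card I) := by
        rw [hK, Fintype.card_pi, Finset.prod_const, Finset.card_univ]
      have hperm : Fintype.card (LO N) = Nat.factorial N := by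
        rw [Fintype.card_perm, Fintype.card_fin]
      have hfact : Nat.factorial N ≤ N ^ N := Nat.factorial_le_pow N
      have hKle : K ≤ N ^ (N * Fintype.card I) := by
        rw [hcard, hperm, pow_mul]
        exact Nat.pow_le_pow_left hfact _
      have hKleR : (K : ℝ) ≤ (N : ℝ) ^ (N * Fintype.card I) := by
        exact_mod_cast hKle
      calc Real.log K ≤ Real.log ((N : ℝ) ^ (N * Fintype.card I)) :=
            Real.log_le_log hKR hKleR
        _ = ((N * Fintype.card I : ℕ) : ℝ) * Real.log N := by rw [Real.log_pow]
        _ = A := by rw [hA]; push_cast; ring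
    have hexp : 4 * (A + L) ≤ m * ε ^ 2 / (16 * B ^ 2) := by
      rw [le_div_iff₀ (by positivity : (0:ℝ) < 16 * B ^ 2)]
      have h1 : 64 * B ^ 2 / ε ^ 2 * (A + L) * ε ^ 2 ≤ (m : ℝ) * ε ^ 2 :=
        mul_le_mul_of_nonneg_right hm (by positivity)
      have h2 : 64 * B ^ 2 / ε ^ 2 * (A + L) * ε ^ 2 = 4 * (A + L) * (16 * B ^ 2) := by
        field_simp
        ring
      linarith
    have hEle : E ≤ δ / (2 * K) := by
      have hsum : Real.log 2 + Real.log K + L ≤ 4 * (A + L) := by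
        have hA2 : Real.log 2 ≤ A := by
          rw [hA]
          calc Real.log 2 ≤ Real.log N := hlogN
            _ ≤ (N : ℝ) * Real.log N := le_mul_of_one_le_left hlogNpos.le (by linarith)
            _ ≤ (Fintype.card I : ℝ) * ((N : ℝ) * Real.log N) :=
                le_mul_of_one_le_left (by positivity) hcI
            _ = (Fintype.card I : ℝ) * (N : ℝ) * Real.log N := by ring
        linarith
      have hval : Real.exp (-(Real.log 2 + Real.log K + L)) = δ / (2 * K) := by
        have hLeq : L = -Real.log δ := by rw [hL, one_div, Real.log_inv]
        have : -(Real.log 2 + Real.log K + L) = Real.log δ - Real.log (2 * K) := by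
          rw [hLeq, Real.log_mul (by norm_num) (ne_of_gt hKR)]
          ring
        rw [this, Real.exp_sub, Real.exp_log hδ0, Real.exp_log (by positivity)]
      calc E ≤ Real.exp (-(Real.log 2 + Real.log K + L)) := by
            rw [hE]
            apply Real.exp_le_exp.2
            rw [neg_div]
            linarith
        _ = δ / (2 * K) := hval
    have hbadδ : ∑ S : Fin m → LO N × I, Set.indicator bad q S ≤ δ := by
      calc ∑ S : Fin m → LO N × I, Set.indicator bad q S ≤ (K : ℝ) * (2 * E) := hbadsum
        _ ≤ (K : ℝ) * (2 * (δ / (2 * K))) :=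
          mul_le_mul_of_nonneg_left (by linarith) (le_of_lt hKR)
        _ = δ := by field_simp
    -- conclude
    apply prob_ge
    have hsplit : ∀ S, Set.indicator badᶜ q S + Set.indicator bad q S = q S := by
      intro S
      by_cases hS : S ∈ bad
      · rw [Set.indicator_of_mem hS, Set.indicator_of_notMem (by simpa using hS)]
        ring
      · rw [Set.indicator_of_notMem hS, Set.indicator_of_mem (Set.mem_compl hS)]
        ring
    have h1 : ∑ S, Set.indicator badᶜ q S + ∑ S, Set.indicator bad q S = 1 := by
      rw [← Finset.sum_add_distrib]
      rw [Finset.sum_congr rfl fun S _ => hsplit S]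
      exact sum_toReal_pmf (iidPMF p m)
    have h2 : ∑ S, Set.indicator badᶜ q S ≤
        ∑ S, Set.indicator {S : Fin m → LO N × I | (⨆ C : 𝓒, popScore DI M s C.1) - 2 * ε ≤
          popScore DI M s (fs m S)} q S := by
      refine Finset.sum_le_sum fun S _ => ?_
      exact Set.indicator_le_indicator_of_subset hsub hqnn S
    linarith
end
end

section
/- Closure of privileged orderings under concatenation: Let c₁, c₂, …, c_{k+m−1} ∈ [N] (k, m ≥ 2) be distinct outcomes and let i be an issue. If o : c₁ ≻ c₂ ≻ ⋯ ≻ c_k and o' : c_k ≻ c_{k+1} ≻ ⋯ ≻ c_{k+m−1} are both privileged orderings for issue i, then the concatenation o⊕o' : c₁ ≻ c₂ ≻ ⋯ ≻ c_{k+m−1} is also a privileged ordering for issue i. -/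
open scoped ENNReal

noncomputable section

/-- The partial ordering given by the list `l` (distinct outcomes, most preferred first)
is privileged for issue `i` w.r.t. the candidate space `𝓒`. -/
def Privileged {I : Type*} [DecidableEq I] {N : ℕ} (𝓒 : Set (I → LO N)) (i : I)
    (l : List (Fin N)) : Prop :=
  ∀ C : I → LO N, l.Pairwise (prefers (C i)) →
    ∀ σ : LO N, (∀ x : Fin N, x ∉ l → σ x = x) →
      odotProfile C i σ ∈ 𝓒 → C ∈ 𝓒

/-- Edge `u → v` of the privilege graph `G_i`: the ordering `u ≻ v` is privileged. -/
def PrivEdge {I : Type*} [DecidableEq I] {N : ℕ} (𝓒 : Set (I → LO N)) (i : I)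
    (u v : Fin N) : Prop :=
  u ≠ v ∧ Privileged 𝓒 i [u, v]

/-- The weight measure used for the induction. -/
def Wgt {N : ℕ} (o σ : LO N) : ℕ :=
  ∑ x : Fin N, (o.symm x).val * (o.symm (σ.symm x)).val

lemma Wgt_le {N : ℕ} (o σ : LO N) : Wgt o σ ≤ N * (N * N) := by
  have : ∀ x : Fin N, (o.symm x).val * (o.symm (σ.symm x)).val ≤ N * N :=
    fun x => Nat.mul_le_mul (o.symm x).isLt.le (o.symm (σ.symm x)).isLt.le
  calc Wgt o σ ≤ ∑ _x : Fin N, N * N := Finset.sum_le_sum (fun x _ => this x)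
    _ = N * (N * N) := by simp [Finset.sum_const, Finset.card_univ, mul_comm]

lemma sort_step {N k : ℕ} (o σ : LO N) (a : Fin k → Fin N)
    (ha : StrictMono fun j => o.symm (a j))
    (hns : ¬ StrictMono fun j => o.symm (σ.symm (a j))) :
    ∃ τ σ' : LO N,
      (∀ x : Fin N, (∀ j, a j ≠ x) → τ x = x) ∧
      σ'.trans τ = σ ∧
      (StrictMono fun j => o.symm (σ'.symm (a j))) ∧
      Wgt o σ < Wgt o σ' := by
  have hainj : Function.Injective a := by
    intro i j h
    exact ha.injective (show o.symm (a i) = o.symm (a j) by rw [h])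
  set key : Fin k → Fin N := fun j => o.symm (σ.symm (a j)) with hkey
  have hkeyinj : Function.Injective key := by
    intro i j h
    exact hainj (σ.symm.injective (o.symm.injective h))
  set ρ : Equiv.Perm (Fin k) := Tuple.sort key with hρ
  have hsm : StrictMono (key ∘ ρ) :=
    (Tuple.monotone_sort key).strictMono_of_injective (hkeyinj.comp ρ.injective)
  set ι : Fin k ↪ Fin N := ⟨a, hainj⟩ with hι
  set τ : LO N := ρ.viaEmbedding ι with hτ
  have hτa : ∀ j, τ (a j) = a (ρ j) := fun j => ρ.viaEmbedding_apply ι j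
  have hτfix : ∀ x : Fin N, (∀ j, a j ≠ x) → τ x = x := by
    intro x hx
    apply Equiv.Perm.viaEmbedding_apply_of_notMem
    rintro ⟨j, rfl⟩
    exact hx j rfl
  have hσ'symm : ∀ x, (σ.trans τ.symm).symm x = σ.symm (τ x) := by
    intro x; simp [Equiv.symm_trans_apply]
  refine ⟨τ, σ.trans τ.symm, hτfix, ?_, ?_, ?_⟩
  · ext x; simp
  · have he : (fun j => o.symm ((σ.trans τ.symm).symm (a j))) = key ∘ ρ := by
      funext j
      simp only [hσ'symm, hτa, Function.comp_apply, hkey]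
    rw [he]; exact hsm
  · set s : Finset (Fin N) := Finset.univ.map ι with hs
    have hcompl : ∀ x ∈ sᶜ,
        (o.symm x).val * (o.symm ((σ.trans τ.symm).symm x)).val
          = (o.symm x).val * (o.symm (σ.symm x)).val := by
      intro x hx
      have hfx : τ x = x := by
        apply hτfix
        intro j hj
        exact (Finset.mem_compl.mp hx) (by
          rw [hs, Finset.mem_map]
          exact ⟨j, Finset.mem_univ _, hj⟩)
      rw [hσ'symm, hfx]
    set f : Fin k → ℕ := fun j => ((o.symm (a j)) : ℕ) with hf
    set g : Fin k → ℕ := fun j => ((key j : Fin N) : ℕ) with hg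
    have hfsm : StrictMono f := fun i j h => by
      exact_mod_cast ha h
    have hGsm : StrictMono fun j => ((key (ρ j) : Fin N) : ℕ) := fun i j h => by
      exact_mod_cast hsm h
    have hmono : Monovary f (g ∘ ρ) := hfsm.monotone.monovary hGsm.monotone
    have hnotm : ¬ Monovary f g := by
      intro hmv
      apply hns
      intro i j hij
      rcases lt_trichotomy (key i) (key j) with h | h | h
      · exact h
      · exact absurd (hkeyinj h) (ne_of_lt hij)
      · exfalso
        have h1 : g j < g i := by exact_mod_cast h
        have h2 : f j ≤ f i := hmv h1
        exact absurd (hfsm hij) (not_lt.mpr h2)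
    have hmain : ∑ j : Fin k, f j * g j < ∑ j : Fin k, f j * g (ρ j) := by
      have hlt := (hmono.sum_mul_comp_perm_lt_sum_mul_iff (σ := ρ⁻¹)).mpr
        (by
          have hcc : (g ∘ ⇑ρ) ∘ ⇑(ρ⁻¹) = g := by
            funext x
            simp only [Function.comp_apply, Equiv.Perm.inv_def, Equiv.apply_symm_apply]
          rw [hcc]; exact hnotm)
      have he1 : ∀ j : Fin k, (g ∘ ⇑ρ) ((ρ⁻¹ : Equiv.Perm (Fin k)) j) = g j := by
        intro j
        simp only [Function.comp_apply, Equiv.Perm.inv_def, Equiv.apply_symm_apply]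
      calc ∑ j : Fin k, f j * g j = ∑ j : Fin k, f j * (g ∘ ρ) (ρ⁻¹ j) := by
            refine Finset.sum_congr rfl fun j _ => by rw [he1]
        _ < ∑ j : Fin k, f j * (g ∘ ρ) j := hlt
        _ = ∑ j : Fin k, f j * g (ρ j) := rfl
    have hsum : ∑ x ∈ s, (o.symm x).val * (o.symm (σ.symm x)).val
        < ∑ x ∈ s, (o.symm x).val * (o.symm ((σ.trans τ.symm).symm x)).val := by
      rw [hs, Finset.sum_map, Finset.sum_map]
      have he2 : ∀ j : Fin k,
          (o.symm (ι j)).val * (o.symm ((σ.trans τ.symm).symm (ι j))).val = f j * g (ρ j) := by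
        intro j
        have : (ι j) = a j := rfl
        rw [this, hσ'symm, hτa]
      have he3 : ∀ j : Fin k,
          (o.symm (ι j)).val * (o.symm (σ.symm (ι j))).val = f j * g j := fun j => rfl
      calc ∑ j : Fin k, (o.symm (ι j)).val * (o.symm (σ.symm (ι j))).val
            = ∑ j : Fin k, f j * g j := Finset.sum_congr rfl fun j _ => he3 j
        _ < ∑ j : Fin k, f j * g (ρ j) := hmain
        _ = ∑ j : Fin k, (o.symm (ι j)).val * (o.symm ((σ.trans τ.symm).symm (ι j))).val :=
            (Finset.sum_congr rfl fun j _ => (he2 j).symm)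
    have e1 : Wgt o σ
        = (∑ x ∈ s, (o.symm x).val * (o.symm (σ.symm x)).val)
          + ∑ x ∈ sᶜ, (o.symm x).val * (o.symm (σ.symm x)).val :=
      (Finset.sum_add_sum_compl s _).symm
    have e2 : Wgt o (σ.trans τ.symm)
        = (∑ x ∈ s, (o.symm x).val * (o.symm ((σ.trans τ.symm).symm x)).val)
          + ∑ x ∈ sᶜ, (o.symm x).val * (o.symm ((σ.trans τ.symm).symm x)).val :=
      (Finset.sum_add_sum_compl s _).symm
    rw [e1, e2, Finset.sum_congr rfl hcompl]
    exact Nat.add_lt_add_right hsum _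

lemma perm_eq_one_of_sorted {N : ℕ} (o σ : LO N) (l : List (Fin N)) (hnd : l.Nodup)
    (hfix : ∀ x ∉ l, σ x = x)
    (hl : l.Pairwise (prefers o))
    (hQ : l.Pairwise fun x y => o.symm (σ.symm x) < o.symm (σ.symm y)) : σ = 1 := by
  have hmem : ∀ x ∈ l, σ x ∈ l := by
    intro x hx
    by_contra h
    have h1 : σ (σ x) = σ x := hfix _ h
    have h2 := σ.injective h1
    rw [h2] at h
    exact h hx
  have hmem' : ∀ x ∈ l, σ.symm x ∈ l := by
    intro x hx
    by_contra h
    have h1 : σ (σ.symm x) = σ.symm x := hfix _ h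
    rw [Equiv.apply_symm_apply] at h1
    exact h (h1 ▸ hx)
  set L1 := l.map (fun x => o.symm x) with hL1
  set L2 := l.map (fun x => o.symm (σ.symm x)) with hL2
  have hnd1 : L1.Nodup := hnd.map o.symm.injective
  have hnd2 : L2.Nodup := hnd.map (fun i j h => σ.symm.injective (o.symm.injective h))
  have hperm : L2.Perm L1 := by
    rw [List.perm_ext_iff_of_nodup hnd2 hnd1]
    intro y
    simp only [hL1, hL2, List.mem_map]
    constructor
    · rintro ⟨x, hx, rfl⟩; exact ⟨σ.symm x, hmem' x hx, rfl⟩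
    · rintro ⟨x, hx, rfl⟩; exact ⟨σ x, hmem x hx, by simp⟩
  haveI : IsAntisymm (Fin N) (· < ·) := ⟨fun a b h h' => absurd h' (asymm h)⟩
  have hs1 : L1.Pairwise (· < ·) := List.pairwise_map.mpr hl
  have hs2 : L2.Pairwise (· < ·) := List.pairwise_map.mpr hQ
  have heq : L2 = L1 := List.Perm.eq_of_pairwise' hs2 hs1 hperm
  have hpt : ∀ (j : ℕ) (hj : j < l.length), σ.symm (l[j]'hj) = l[j]'hj := by
    intro j hj
    have h2 : L2[j]'(by simp [hL2, hj]) = L1[j]'(by simp [hL1, hj]) := by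
      simp only [heq]
    simp only [hL1, hL2, List.getElem_map] at h2
    exact o.symm.injective h2
  have hsymm : σ.symm = 1 := by
    apply Equiv.ext
    intro x
    simp only [Equiv.Perm.coe_one, id_eq]
    by_cases hx : x ∈ l
    · obtain ⟨j, hj, rfl⟩ := List.mem_iff_getElem.mp hx
      exact hpt j hj
    · exact (Equiv.symm_apply_eq σ).mpr (hfix x hx).symm
  have : σ⁻¹ = 1 := by rw [← Equiv.Perm.inv_def] at hsymm; exact hsymm
  exact inv_eq_one.mp this

/-- **Closure of privileged orderings under concatenation.** Let `l` be a list of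
`k + m - 1` distinct outcomes (`k, m ≥ 2`). If the ordering given by the first `k`
outcomes of `l` and the ordering given by the last `m` outcomes of `l` (sharing the `k`-th
outcome) are both privileged for issue `i`, then the whole ordering `l` is privileged for
issue `i`. -/
theorem privileged_closure_concat (N : ℕ) (hN : 2 ≤ N) (I : Type) [DecidableEq I]
    (𝓒 : Set (I → LO N)) (i : I) (l : List (Fin N)) (hnd : l.Nodup)
    (k m : ℕ) (hk : 2 ≤ k) (hm : 2 ≤ m) (hlen : l.length = k + m - 1)
    (h1 : Privileged 𝓒 i (l.take k)) (h2 : Privileged 𝓒 i (l.drop (k - 1))) :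
    Privileged 𝓒 i l := by
  have hkl : k ≤ l.length := by omega
  have hk1l : k - 1 < l.length := by omega
  have hlenA : (l.take k).length = k := by
    rw [List.length_take]; omega
  have hlenB : (l.drop (k - 1)).length = l.length - (k - 1) := by
    rw [List.length_drop]
  intro C hC σ hσ hmem
  set o := C i with ho
  have hAsub : ∀ x ∈ l.take k, x ∈ l := fun x hx => List.take_subset _ _ hx
  have hBsub : ∀ x ∈ l.drop (k - 1), x ∈ l := fun x hx => List.drop_subset _ _ hx
  have hApair : (l.take k).Pairwise (prefers o) := hC.sublist (List.take_sublist _ _)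
  have hBpair : (l.drop (k - 1)).Pairwise (prefers o) := hC.sublist (List.drop_sublist _ _)
  have hAsm : StrictMono fun j : Fin (l.take k).length => o.symm ((l.take k).get j) :=
    fun j1 j2 hj => List.pairwise_iff_get.mp hApair j1 j2 hj
  have hBsm : StrictMono fun j : Fin (l.drop (k - 1)).length => o.symm ((l.drop (k - 1)).get j) :=
    fun j1 j2 hj => List.pairwise_iff_get.mp hBpair j1 j2 hj
  have hcomp : ∀ (σ1 σ2 : LO N),
      odotProfile (odotProfile C i σ1) i σ2 = odotProfile C i (σ1.trans σ2) := by
    intro σ1 σ2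
    simp only [odotProfile, Function.update_self, Function.update_idem, odot, Equiv.trans_assoc]
  -- main induction
  suffices H : ∀ d (σ0 : LO N), (∀ x ∉ l, σ0 x = x) → N * (N * N) - Wgt o σ0 ≤ d →
      odotProfile C i σ0 ∈ 𝓒 → C ∈ 𝓒 by
    exact H _ σ hσ le_rfl hmem
  intro d
  induction d using Nat.strong_induction_on with
  | _ d IH =>
    intro σ0 hfix0 hd hmem0
    by_cases hA1 : StrictMono fun j : Fin (l.take k).length => o.symm (σ0.symm ((l.take k).get j))
    · by_cases hB1 : StrictMono
          fun j : Fin (l.drop (k - 1)).length => o.symm (σ0.symm ((l.drop (k - 1)).get j))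
      · -- both sorted : σ0 = 1
        have hQA : (l.take k).Pairwise
            (fun x y => o.symm (σ0.symm x) < o.symm (σ0.symm y)) :=
          List.pairwise_iff_get.mpr (fun i1 i2 h => hA1 h)
        have hQB : (l.drop (k - 1)).Pairwise
            (fun x y => o.symm (σ0.symm x) < o.symm (σ0.symm y)) :=
          List.pairwise_iff_get.mpr (fun i1 i2 h => hB1 h)
        have hQ : l.Pairwise (fun x y => o.symm (σ0.symm x) < o.symm (σ0.symm y)) := by
          rw [List.pairwise_iff_getElem]
          intro i1 i2 h1 h2 hlt
          have hQA' := List.pairwise_iff_getElem.mp hQA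
          have hQB' := List.pairwise_iff_getElem.mp hQB
          by_cases hc : i2 < k
          · have := hQA' i1 i2 (by omega) (by omega) hlt
            simpa only [List.getElem_take] using this
          · push_neg at hc
            by_cases hc1 : k - 1 ≤ i1
            · obtain ⟨j1, rfl⟩ : ∃ j, i1 = (k - 1) + j := ⟨i1 - (k - 1), by omega⟩
              obtain ⟨j2, rfl⟩ : ∃ j, i2 = (k - 1) + j := ⟨i2 - (k - 1), by omega⟩
              have := hQB' j1 j2 (by omega) (by omega) (by omega)
              simpa only [List.getElem_drop] using this
            · push_neg at hc1
              obtain ⟨j2, rfl⟩ : ∃ j, i2 = (k - 1) + j := ⟨i2 - (k - 1), by omega⟩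
              have hb := hQB' 0 j2 (by omega) (by omega) (by omega)
              simp only [List.getElem_drop, Nat.add_zero] at hb
              have ha2 := hQA' i1 (k - 1) (by omega) (by omega) (by omega)
              simp only [List.getElem_take] at ha2
              exact lt_trans ha2 hb
        have h1eq : σ0 = 1 := perm_eq_one_of_sorted o σ0 l hnd hfix0 hC hQ
        rw [h1eq] at hmem0
        have hid : odotProfile C i 1 = C := by
          unfold odotProfile
          have : odot (C i) 1 = C i := Equiv.trans_refl _
          rw [this, Function.update_eq_self]
        rwa [hid] at hmem0
      · -- sort block B
        obtain ⟨τ, σ', hτfix, hτσ, hsorted, hW⟩ :=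
          sort_step o σ0 (fun j => (l.drop (k - 1)).get j) hBsm hB1
        have hτfix' : ∀ x ∉ l.drop (k - 1), τ x = x := by
          intro x hx
          exact hτfix x (fun j hj => hx (hj ▸ List.get_mem _ _))
        have hσ'fix : ∀ x ∉ l, σ' x = x := by
          intro x hx
          have ht : τ (σ' x) = σ0 x := by
            conv_rhs => rw [← hτσ]
            rfl
          apply τ.injective
          rw [ht, hfix0 x hx, hτfix' x (fun hmem => hx (hBsub x hmem))]
        have hmem' : odotProfile C i σ' ∈ 𝓒 := by
          apply h2 (odotProfile C i σ') ?_ τ hτfix'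
          · rw [hcomp, hτσ]; exact hmem0
          · have hCi : odotProfile C i σ' i = odot o σ' := Function.update_self _ _ _
            rw [hCi]
            exact List.pairwise_iff_get.mpr (fun i1 i2 h => hsorted h)
        have hWb := Wgt_le o σ'
        exact IH (N * (N * N) - Wgt o σ') (by omega) σ' hσ'fix le_rfl hmem'
    · -- sort block A
      obtain ⟨τ, σ', hτfix, hτσ, hsorted, hW⟩ :=
        sort_step o σ0 (fun j => (l.take k).get j) hAsm hA1
      have hτfix' : ∀ x ∉ l.take k, τ x = x := by
        intro x hx
        exact hτfix x (fun j hj => hx (hj ▸ List.get_mem _ _))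
      have hσ'fix : ∀ x ∉ l, σ' x = x := by
        intro x hx
        have ht : τ (σ' x) = σ0 x := by
          conv_rhs => rw [← hτσ]
          rfl
        apply τ.injective
        rw [ht, hfix0 x hx, hτfix' x (fun hmem => hx (hAsub x hmem))]
      have hmem' : odotProfile C i σ' ∈ 𝓒 := by
        apply h1 (odotProfile C i σ') ?_ τ hτfix'
        · rw [hcomp, hτσ]; exact hmem0
        · have hCi : odotProfile C i σ' i = odot o σ' := Function.update_self _ _ _
          rw [hCi]
          exact List.pairwise_iff_get.mpr (fun i1 i2 h => hsorted h)
      have hWb := Wgt_le o σ'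
      exact IH (N * (N * N) - Wgt o σ') (by omega) σ' hσ'fix le_rfl hmem'
end
end

section
/- Strong representative impossibility (construction direction): Let 𝓘 be a set of issues, 𝓓_𝓘 a saliency distribution, and let φ assign to each issue i a transitive directed graph φ(i) on vertex set [N] containing no simple directed cycle of length at least 3. Then there exist a candidate space 𝓒 ⊆ LO(N)^𝓘 such that for every issue i the privilege graph G_i of 𝓒 contains φ(i) as a subgraph, and a representational mechanism f over (𝓘, 𝓓_𝓘, 𝓒) that simultaneously satisfies PPE, S-PIIA, and S-PC for all populations 𝓓_𝓟. -/
open scoped ENNReal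

noncomputable section

/-- The events `E m` happen with probability `1 - e^{-Ω(m)}` over i.i.d. samples of size `m`. -/
def WithOverwhelmingProb {β : Type*} (p : PMF β) (E : ∀ m : ℕ, Set (Fin m → β)) : Prop :=
  ∃ a : ℝ, 0 < a ∧ ∃ m0 : ℕ, ∀ m : ℕ, m0 ≤ m →
    1 - ENNReal.ofReal (Real.exp (-(a * m))) ≤ prob (iidPMF p m) (E m)

/-- Same, over a pair of independent i.i.d. samples of size `m` from `p` and from `q`. -/
def WithOverwhelmingProb2 {β γ : Type*} (p : PMF β) (q : PMF γ)
    (E : ∀ m : ℕ, Set ((Fin m → β) × (Fin m → γ))) : Prop :=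
  ∃ a : ℝ, 0 < a ∧ ∃ m0 : ℕ, ∀ m : ℕ, m0 ≤ m →
    1 - ENNReal.ofReal (Real.exp (-(a * m))) ≤
      prob ((iidPMF p m).bind fun S => (iidPMF q m).map fun S' => (S, S')) (E m)

/-- Marginal on issue `i` of a population distribution over full profiles. -/
def marginal {I : Type*} {N : ℕ} (DP : PMF (I → LO N)) : I → PMF (LO N) :=
  fun i => DP.map fun C => C i

/-- Every profile in the support of `D` ranks `c` above `c'` in issue `i`. -/
def UnanimousOn {I : Type*} {N : ℕ} (D : PMF (I → LO N)) (i : I) (c c' : Fin N) : Prop :=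
  ∀ C ∈ D.support, prefers (C i) c c'

/-- `DP = lam • DP' + (1 - lam) • R`, i.e. `DP'` is a subpopulation of `DP` of mass `lam`. -/
def IsMixture {I : Type*} {N : ℕ} (DP DP' R : PMF (I → LO N)) (lam : ℝ) : Prop :=
  ∀ C : I → LO N, DP C = ENNReal.ofReal lam * DP' C + ENNReal.ofReal (1 - lam) * R C

/-- Probabilistic Pareto Efficiency (PPE) of mechanism `f`, at population marginal `M`. -/
def PPEat {I : Type*} [DecidableEq I] {N : ℕ} (𝓒 : Set (I → LO N)) (DI : PMF I)
    (f : ∀ m : ℕ, (Fin m → LO N × I) → (I → LO N)) (M : I → PMF (LO N)) : Prop :=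
  ∀ C ∈ 𝓒, ∀ C' ∈ 𝓒, ∀ (i : I) (c c' : Fin N), c ≠ c' →
    prefers (C i) c c' →
    C' = odotProfile C i (Equiv.swap c c') →
    (∀ o : LO N, prefers o c' c → M i o = 0) →
    WithOverwhelmingProb (sampleDist DI M) (fun m => {S | f m S ≠ C'})

/-- Strong Probabilistic Independence of Irrelevant Alternatives (S-PIIA), at the
pair of population marginals `M`, `M'`. -/
def SPIIAat {I : Type*} [DecidableEq I] {N : ℕ} (𝓒 : Set (I → LO N)) (DI : PMF I)
    (f : ∀ m : ℕ, (Fin m → LO N × I) → (I → LO N)) (M M' : I → PMF (LO N)) : Prop :=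
  ∀ (i : I) (c c' : Fin N), c ≠ c' →
    Privileged 𝓒 i [c, c'] → Privileged 𝓒 i [c', c] →
    prob (M i) {o | prefers o c c'} = prob (M' i) {o | prefers o c c'} →
    WithOverwhelmingProb2 (sampleDist DI M) (sampleDist DI M')
      (fun m => {p | prefers (f m p.1 i) c c' ↔ prefers (f m p.2 i) c c'})

/-- Strong Probabilistic Convergence (S-PC), at the population marginal `M`. -/
def SPCat {I : Type*} [DecidableEq I] {N : ℕ} (𝓒 : Set (I → LO N)) (DI : PMF I)
    (f : ∀ m : ℕ, (Fin m → LO N × I) → (I → LO N)) (M : I → PMF (LO N)) : Prop :=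
  ∀ (i : I) (c c' : Fin N), c ≠ c' →
    Privileged 𝓒 i [c, c'] → Privileged 𝓒 i [c', c] →
    prob (M i) {o | prefers o c c'} ≠ 1 / 2 →
    WithOverwhelmingProb (sampleDist DI M) (fun m => {S | prefers (f m S i) c c'}) ∨
    WithOverwhelmingProb (sampleDist DI M) (fun m => {S | prefers (f m S i) c' c})


namespace SRCAux
open MeasureTheory

variable {α : Type*} {β : Type*} {γ : Type*}

lemma prob_mono (p : PMF α) {s t : Set α} (h : s ⊆ t) : prob p s ≤ prob p t :=
  measure_mono h

lemma prob_univ (p : PMF α) : prob p (Set.univ) = 1 := by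
  simp [prob, PMF.toOuterMeasure_apply, Set.indicator_univ, p.tsum_coe]

lemma prob_le_one (p : PMF α) (s : Set α) : prob p s ≤ 1 := by
  simpa [prob_univ] using prob_mono p (Set.subset_univ s)

lemma prob_union_le (p : PMF α) (s t : Set α) : prob p (s ∪ t) ≤ prob p s + prob p t :=
  measure_union_le s t

lemma prob_add_compl (p : PMF α) (s : Set α) : prob p s + prob p sᶜ = 1 := by
  simp only [prob, PMF.toOuterMeasure_apply]
  rw [← ENNReal.tsum_add]
  simp [Set.indicator_self_add_compl s (fun x => p x), p.tsum_coe]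

lemma prob_eq_one_sub (p : PMF α) (s : Set α) : prob p s = 1 - prob p sᶜ := by
  have h := prob_add_compl p s
  have h2 : prob p sᶜ ≠ ⊤ := (lt_of_le_of_lt (prob_le_one _ _) (by norm_num)).ne
  exact ENNReal.eq_sub_of_add_eq h2 h

lemma prob_compl_eq (p : PMF α) (s : Set α) : prob p sᶜ = 1 - prob p s := by
  have := prob_eq_one_sub p sᶜ
  simpa using this

lemma prob_zero_of_forall (p : PMF α) (s : Set α) (h : ∀ x ∈ s, p x = 0) : prob p s = 0 := by
  simp only [prob, PMF.toOuterMeasure_apply]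
  refine ENNReal.tsum_eq_zero.2 fun x => ?_
  by_cases hx : x ∈ s
  · simp [Set.indicator_of_mem hx, h x hx]
  · simp [Set.indicator_of_notMem hx]

lemma prob_iid_forall (p : PMF α) (B : Set α) :
    ∀ m, prob (iidPMF p m) {S | ∀ k, S k ∈ B} = (prob p B) ^ m := by
  intro m
  induction m with
  | zero =>
    have : {S : Fin 0 → α | ∀ k, S k ∈ B} = Set.univ := by
      ext S; simp only [Set.mem_setOf_eq, Set.mem_univ, iff_true]
      intro k; exact k.elim0
    rw [this, prob_univ, pow_zero]
  | succ m ih =>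
    classical
    have hdef : iidPMF p (m+1) = p.bind fun a => (iidPMF p m).map (Fin.cons a) := by
      rw [iidPMF]
    have key : ∀ a : α, ((iidPMF p m).map (Fin.cons a)).toOuterMeasure
        {S : Fin (m+1) → α | ∀ k, S k ∈ B}
        = B.indicator (fun _ => (prob p B) ^ m) a := by
      intro a
      rw [PMF.toOuterMeasure_map_apply]
      have hpre : (Fin.cons a ⁻¹' {S : Fin (m+1) → α | ∀ k, S k ∈ B})
          = if a ∈ B then {S : Fin m → α | ∀ k, S k ∈ B} else ∅ := by
        ext f
        simp only [Set.mem_preimage, Set.mem_setOf_eq, Fin.forall_fin_succ, Fin.cons_zero,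
          Fin.cons_succ]
        split_ifs with ha <;> simp [ha]
      by_cases ha : a ∈ B
      · rw [hpre, if_pos ha, Set.indicator_of_mem ha, ← prob, ih]
      · rw [hpre, if_neg ha, Set.indicator_of_notMem ha]
        simp
    have step1 : ∑' a, p a * ((iidPMF p m).map (Fin.cons a)).toOuterMeasure
        {S : Fin (m+1) → α | ∀ k, S k ∈ B}
        = ∑' a, B.indicator (fun x => p x * (prob p B) ^ m) a := by
      refine tsum_congr fun a => ?_
      rw [key a]
      by_cases ha : a ∈ B
      · simp [Set.indicator_of_mem ha]
      · simp [Set.indicator_of_notMem ha]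
    have step2 : ∑' a, B.indicator (fun x => p x * (prob p B) ^ m) a
        = (∑' a, B.indicator (fun x => p x) a) * (prob p B) ^ m := by
      rw [← ENNReal.tsum_mul_right]
      refine tsum_congr fun a => ?_
      by_cases ha : a ∈ B
      · simp [Set.indicator_of_mem ha]
      · simp [Set.indicator_of_notMem ha]
    have step3 : (∑' a, B.indicator (fun x => p x) a) = prob p B := by
      rw [prob, PMF.toOuterMeasure_apply]
    rw [hdef, prob, PMF.toOuterMeasure_bind_apply, step1, step2, step3, pow_succ,
      mul_comm ((prob p B)^m)]

lemma prob_iid_exists_zero (p : PMF α) (B : Set α) (hB : prob p B = 0) (m : ℕ) :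
    prob (iidPMF p m) {S | ∃ k, S k ∈ B} = 0 := by
  have hBc : prob p Bᶜ = 1 := by rw [prob_compl_eq, hB]; simp
  have h1 : prob (iidPMF p m) {S | ∀ k, S k ∈ Bᶜ} = 1 := by
    rw [prob_iid_forall, hBc, one_pow]
  have hset : {S : Fin m → α | ∃ k, S k ∈ B} = {S : Fin m → α | ∀ k, S k ∈ Bᶜ}ᶜ := by
    ext S; simp [Set.mem_setOf_eq]
  rw [hset, prob_compl_eq, h1]; simp


lemma pow_bound (δ : ℝ≥0∞) (hδ1 : δ ≤ 1) (m : ℕ) :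
    (1 - δ) ^ m ≤ ENNReal.ofReal (Real.exp (-(δ.toReal * m))) := by
  have hδtop : δ ≠ ⊤ := (lt_of_le_of_lt hδ1 (by norm_num)).ne
  have h0 : (0:ℝ) ≤ δ.toReal := ENNReal.toReal_nonneg
  have h1 : (1 - δ) ≤ ENNReal.ofReal (Real.exp (-δ.toReal)) := by
    have : (1 - δ) = ENNReal.ofReal (1 - δ.toReal) := by
      rw [ENNReal.ofReal_sub _ h0, ENNReal.ofReal_one, ENNReal.ofReal_toReal hδtop]
    rw [this]
    apply ENNReal.ofReal_le_ofReal
    have := Real.add_one_le_exp (-δ.toReal)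
    linarith
  calc (1 - δ) ^ m ≤ (ENNReal.ofReal (Real.exp (-δ.toReal))) ^ m :=
        pow_le_pow_left₀ (zero_le (a := 1 - δ)) h1 m
    _ = ENNReal.ofReal (Real.exp (-(δ.toReal * m))) := by
        rw [← ENNReal.ofReal_pow (Real.exp_nonneg _), ← Real.exp_nat_mul]
        congr 1
        ring

lemma wop_aux (K : ℝ≥0∞) (hK : K ≠ ⊤) (t : ℝ) (ht : 0 < t) :
    ∃ m0 : ℕ, 1 ≤ m0 ∧ ∀ m : ℕ, m0 ≤ m →
      K * ENNReal.ofReal (Real.exp (-(t * m))) ≤ ENNReal.ofReal (Real.exp (-(t / 2 * m))) := by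
  obtain ⟨n, hn⟩ := exists_nat_ge (2 * K.toReal / t)
  refine ⟨max 1 n, le_max_left _ _, fun m hm => ?_⟩
  have hmn : (n : ℝ) ≤ m := by exact_mod_cast le_trans (le_max_right 1 n) hm
  have hKe : K.toReal ≤ t / 2 * m := by
    have h1 : 2 * K.toReal / t ≤ (m : ℝ) := le_trans hn hmn
    have h2 : 2 * K.toReal ≤ t * m := by
      rw [div_le_iff₀ ht] at h1
      linarith
    linarith
  have hKle : K ≤ ENNReal.ofReal (Real.exp (t / 2 * m)) := by
    rw [← ENNReal.ofReal_toReal hK]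
    apply ENNReal.ofReal_le_ofReal
    calc K.toReal ≤ t / 2 * m := hKe
      _ ≤ Real.exp (t / 2 * m) := by
          have := Real.add_one_le_exp (t / 2 * m); linarith
  calc K * ENNReal.ofReal (Real.exp (-(t * m)))
      ≤ ENNReal.ofReal (Real.exp (t / 2 * m)) * ENNReal.ofReal (Real.exp (-(t * m))) :=
        mul_le_mul_left hKle _
    _ = ENNReal.ofReal (Real.exp (t / 2 * m) * Real.exp (-(t * m))) :=
        (ENNReal.ofReal_mul (Real.exp_nonneg _)).symm
    _ = ENNReal.ofReal (Real.exp (-(t / 2 * m))) := by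
        rw [← Real.exp_add]
        congr 1
        ring

lemma wop_of_bound {β : Type*} (P : PMF β) (E : ∀ m : ℕ, Set (Fin m → β))
    (K : ℝ≥0∞) (hK : K ≠ ⊤) (t : ℝ) (ht : 0 < t)
    (hb : ∀ m : ℕ, 1 ≤ m → prob (iidPMF P m) (E m)ᶜ ≤ K * ENNReal.ofReal (Real.exp (-(t * m)))) :
    WithOverwhelmingProb P E := by
  obtain ⟨m0, hm01, h⟩ := wop_aux K hK t ht
  refine ⟨t / 2, by positivity, m0, fun m hm => ?_⟩
  rw [prob_eq_one_sub]
  exact tsub_le_tsub_left (le_trans (hb m (le_trans hm01 hm)) (h m hm)) 1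

lemma wop2_of_bound {β γ : Type*} (P : PMF β) (Q : PMF γ)
    (E : ∀ m : ℕ, Set ((Fin m → β) × (Fin m → γ)))
    (K : ℝ≥0∞) (hK : K ≠ ⊤) (t : ℝ) (ht : 0 < t)
    (hb : ∀ m : ℕ, 1 ≤ m →
      prob ((iidPMF P m).bind fun S => (iidPMF Q m).map fun S' => (S, S')) (E m)ᶜ
        ≤ K * ENNReal.ofReal (Real.exp (-(t * m)))) :
    WithOverwhelmingProb2 P Q E := by
  obtain ⟨m0, hm01, h⟩ := wop_aux K hK t ht
  refine ⟨t / 2, by positivity, m0, fun m hm => ?_⟩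
  rw [prob_eq_one_sub]
  exact tsub_le_tsub_left (le_trans (hb m (le_trans hm01 hm)) (h m hm)) 1

lemma wop_mono {β : Type*} (P : PMF β) (E E' : ∀ m : ℕ, Set (Fin m → β))
    (h : ∀ m, E m ⊆ E' m) : WithOverwhelmingProb P E → WithOverwhelmingProb P E' := by
  rintro ⟨a, ha, m0, hh⟩
  exact ⟨a, ha, m0, fun m hm => le_trans (hh m hm) (prob_mono _ (h m))⟩

lemma prob_pairbind_fst {β γ : Type*} (p : PMF β) (q : PMF γ) (A : Set β) :
    prob (p.bind fun S => q.map fun S' => (S, S')) {x | x.1 ∈ A} = prob p A := by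
  classical
  rw [prob, PMF.toOuterMeasure_bind_apply]
  have key : ∀ S : β, (q.map fun S' => (S, S')).toOuterMeasure {x : β × γ | x.1 ∈ A}
      = if S ∈ A then 1 else 0 := by
    intro S
    rw [PMF.toOuterMeasure_map_apply]
    by_cases hS : S ∈ A
    · rw [if_pos hS]
      have : ((fun S' => (S, S')) ⁻¹' {x : β × γ | x.1 ∈ A}) = Set.univ := by
        ext y; simp [hS]
      rw [this, ← prob, prob_univ]
    · rw [if_neg hS]
      have : ((fun S' => (S, S')) ⁻¹' {x : β × γ | x.1 ∈ A}) = ∅ := by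
        ext y; simp [hS]
      rw [this]
      simp
  rw [prob, PMF.toOuterMeasure_apply]
  refine tsum_congr fun S => ?_
  rw [key S]
  by_cases hS : S ∈ A
  · simp [Set.indicator_of_mem hS, hS]
  · simp [Set.indicator_of_notMem hS, hS]

lemma prob_pairbind_snd {β γ : Type*} (p : PMF β) (q : PMF γ) (A : Set γ) :
    prob (p.bind fun S => q.map fun S' => (S, S')) {x | x.2 ∈ A} = prob q A := by
  rw [prob, PMF.toOuterMeasure_bind_apply]
  have key : ∀ S : β, (q.map fun S' => (S, S')).toOuterMeasure {x : β × γ | x.2 ∈ A}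
      = prob q A := by
    intro S
    rw [PMF.toOuterMeasure_map_apply]
    have : ((fun S' => (S, S')) ⁻¹' {x : β × γ | x.2 ∈ A}) = A := by
      ext y; simp
    rw [this, ← prob]
  calc ∑' S, p S * (q.map fun S' => (S, S')).toOuterMeasure {x : β × γ | x.2 ∈ A}
      = ∑' S, p S * prob q A := tsum_congr fun S => by rw [key S]
    _ = (∑' S, p S) * prob q A := ENNReal.tsum_mul_right
    _ = prob q A := by rw [p.tsum_coe, one_mul]

open scoped Classical

section Struct

variable {N : ℕ} (ψ : Fin N → Fin N → Prop)

/-- `u` and `v` are in the same 2-cycle class. -/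
def Rel (u v : Fin N) : Prop := u = v ∨ (ψ u v ∧ ψ v u)

/-- strict part of `ψ`. -/
def dlt (u v : Fin N) : Prop := ψ u v ∧ ¬ ψ v u

lemma Rel_refl (u : Fin N) : Rel ψ u u := Or.inl rfl

lemma Rel_symm {u v : Fin N} (h : Rel ψ u v) : Rel ψ v u := by
  rcases h with h | ⟨h1, h2⟩
  · exact Or.inl h.symm
  · exact Or.inr ⟨h2, h1⟩

lemma Rel_trans (htr : ∀ u v w : Fin N, u ≠ v → v ≠ w → u ≠ w → ψ u v → ψ v w → ψ u w)
    {u v w : Fin N} (h1 : Rel ψ u v) (h2 : Rel ψ v w) : Rel ψ u w := by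
  rcases h1 with rfl | ⟨a1, a2⟩
  · exact h2
  rcases h2 with rfl | ⟨b1, b2⟩
  · exact Or.inr ⟨a1, a2⟩
  by_cases huv : u = v
  · subst huv; exact Or.inr ⟨b1, b2⟩
  by_cases hvw : v = w
  · subst hvw; exact Or.inr ⟨a1, a2⟩
  by_cases huw : u = w
  · exact Or.inl huw
  · exact Or.inr ⟨htr u v w huv hvw huw a1 b1, htr w v u (Ne.symm hvw) (Ne.symm huv) (Ne.symm huw) b2 a2⟩

/-- The class of `u` (as a finset). -/
def classOf (u : Fin N) : Finset (Fin N) := Finset.univ.filter (Rel ψ u)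

lemma mem_classOf {u v : Fin N} : v ∈ classOf ψ u ↔ Rel ψ u v := by
  simp [classOf]

lemma classOf_nonempty (u : Fin N) : (classOf ψ u).Nonempty :=
  ⟨u, (mem_classOf ψ).2 (Rel_refl ψ u)⟩

/-- The key (canonical representative) of the class of `u`. -/
def kk (u : Fin N) : Fin N := (classOf ψ u).min' (classOf_nonempty ψ u)

lemma kk_rel (u : Fin N) : Rel ψ u (kk ψ u) :=
  (mem_classOf ψ).1 ((classOf ψ u).min'_mem (classOf_nonempty ψ u))

lemma classOf_eq_of_rel (htr : ∀ u v w : Fin N, u ≠ v → v ≠ w → u ≠ w → ψ u v → ψ v w → ψ u w)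
    {u v : Fin N} (h : Rel ψ u v) : classOf ψ u = classOf ψ v := by
  ext x
  simp only [mem_classOf]
  exact ⟨fun hx => Rel_trans ψ htr (Rel_symm ψ h) hx, fun hx => Rel_trans ψ htr h hx⟩

lemma kk_eq_of_rel (htr : ∀ u v w : Fin N, u ≠ v → v ≠ w → u ≠ w → ψ u v → ψ v w → ψ u w)
    {u v : Fin N} (h : Rel ψ u v) : kk ψ u = kk ψ v := by
  unfold kk
  congr 1
  exact classOf_eq_of_rel ψ htr h

lemma kk_idem (htr : ∀ u v w : Fin N, u ≠ v → v ≠ w → u ≠ w → ψ u v → ψ v w → ψ u w)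
    (u : Fin N) : kk ψ (kk ψ u) = kk ψ u :=
  (kk_eq_of_rel ψ htr (Rel_symm ψ (kk_rel ψ u))).trans rfl

lemma rel_of_kk_eq (htr : ∀ u v w : Fin N, u ≠ v → v ≠ w → u ≠ w → ψ u v → ψ v w → ψ u w)
    {u v : Fin N} (h : kk ψ u = kk ψ v) : Rel ψ u v := by
  have h1 := kk_rel ψ u
  have h2 := kk_rel ψ v
  rw [h] at h1
  exact Rel_trans ψ htr h1 (Rel_symm ψ h2)

/-- No class has three distinct elements (needs acyclicity). -/
lemma class_small (htr : ∀ u v w : Fin N, u ≠ v → v ≠ w → u ≠ w → ψ u v → ψ v w → ψ u w)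
    (hcy : ¬ ∃ (k : ℕ) (cyc : Fin (k + 3) → Fin N),
      Function.Injective cyc ∧ ∀ j : Fin (k + 3), ψ (cyc j) (cyc (j + 1)))
    {u v w : Fin N} (h1 : Rel ψ u v) (h2 : Rel ψ u w) (hv : v ≠ u) (hw : w ≠ u) : v = w := by
  by_contra hvw
  have huv : ψ u v ∧ ψ v u := h1.resolve_left fun h => hv h.symm
  have huw : ψ u w ∧ ψ w u := h2.resolve_left fun h => hw h.symm
  have hvw' : ψ v w := htr v u w hv (Ne.symm hw) hvw huv.2 huw.1
  apply hcy
  refine ⟨0, ![u, v, w], ?_, ?_⟩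
  · intro x y hxy
    fin_cases x <;> fin_cases y <;>
      simp_all [Matrix.cons_val_zero, Matrix.cons_val_one, Matrix.head_cons] <;>
      first
        | rfl
        | exact absurd hxy (Ne.symm hv)
        | exact absurd hxy hv
        | exact absurd hxy (Ne.symm hw)
        | exact absurd hxy hw
        | exact absurd hxy hvw
        | exact absurd hxy (Ne.symm hvw)
  · intro j
    fin_cases j
    · show ψ (![u, v, w] 0) (![u, v, w] (0 + 1)); simpa using huv.1
    · show ψ (![u, v, w] 1) (![u, v, w] (1 + 1)); simpa using hvw'
    · show ψ (![u, v, w] 2) (![u, v, w] (2 + 1)); simpa using huw.2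

/-- The partner of `u` : the other element of its class, if any. -/
def pp (u : Fin N) : Fin N :=
  if h : ∃ v, v ≠ u ∧ Rel ψ u v then h.choose else u

lemma pp_rel (u : Fin N) : Rel ψ u (pp ψ u) := by
  unfold pp
  split_ifs with h
  · exact h.choose_spec.2
  · exact Rel_refl ψ u

lemma pp_eq_partner (htr : ∀ u v w : Fin N, u ≠ v → v ≠ w → u ≠ w → ψ u v → ψ v w → ψ u w)
    (hcy : ¬ ∃ (k : ℕ) (cyc : Fin (k + 3) → Fin N),
      Function.Injective cyc ∧ ∀ j : Fin (k + 3), ψ (cyc j) (cyc (j + 1)))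
    {u v : Fin N} (hne : v ≠ u) (h : Rel ψ u v) : pp ψ u = v := by
  unfold pp
  have hex : ∃ x, x ≠ u ∧ Rel ψ u x := ⟨v, hne, h⟩
  rw [dif_pos hex]
  exact class_small ψ htr hcy hex.choose_spec.2 h hex.choose_spec.1 hne

lemma pp_pp (htr : ∀ u v w : Fin N, u ≠ v → v ≠ w → u ≠ w → ψ u v → ψ v w → ψ u w)
    (hcy : ¬ ∃ (k : ℕ) (cyc : Fin (k + 3) → Fin N),
      Function.Injective cyc ∧ ∀ j : Fin (k + 3), ψ (cyc j) (cyc (j + 1)))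
    (u : Fin N) : pp ψ (pp ψ u) = u := by
  by_cases h : pp ψ u = u
  · rw [h, h]
  · exact pp_eq_partner ψ htr hcy (fun e => h e.symm) (Rel_symm ψ (pp_rel ψ u))

lemma kk_pp (htr : ∀ u v w : Fin N, u ≠ v → v ≠ w → u ≠ w → ψ u v → ψ v w → ψ u w)
    (u : Fin N) : kk ψ (pp ψ u) = kk ψ u :=
  (kk_eq_of_rel ψ htr (Rel_symm ψ (pp_rel ψ u)))

end Struct

section Master

variable {N : ℕ}

lemma dlt_ne {ψ : Fin N → Fin N → Prop} {u v : Fin N} (h : dlt ψ u v) : u ≠ v :=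
  fun e => h.2 (e ▸ h.1)

lemma dlt_inv_left (ψ : Fin N → Fin N → Prop)
    (htr : ∀ u v w : Fin N, u ≠ v → v ≠ w → u ≠ w → ψ u v → ψ v w → ψ u w)
    {u u' v : Fin N} (h : Rel ψ u u') (hd : dlt ψ u v) : dlt ψ u' v := by
  rcases h with rfl | ⟨h1, h2⟩
  · exact hd
  by_cases huu : u = u'
  · subst huu; exact hd
  obtain ⟨hp, hn⟩ := hd
  have huv : u ≠ v := dlt_ne ⟨hp, hn⟩
  have hu'v : u' ≠ v := fun e => hn (by rw [← e]; exact h2)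
  refine ⟨htr u' u v (Ne.symm huu) huv hu'v h2 hp, fun hvu' => ?_⟩
  exact hn (htr v u' u (Ne.symm hu'v) (Ne.symm huu) (Ne.symm huv) hvu' h2)

lemma dlt_inv_right (ψ : Fin N → Fin N → Prop)
    (htr : ∀ u v w : Fin N, u ≠ v → v ≠ w → u ≠ w → ψ u v → ψ v w → ψ u w)
    {u v v' : Fin N} (h : Rel ψ v v') (hd : dlt ψ u v) : dlt ψ u v' := by
  rcases h with rfl | ⟨h1, h2⟩
  · exact hd
  by_cases hvv : v = v'
  · subst hvv; exact hd
  obtain ⟨hp, hn⟩ := hd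
  have huv : u ≠ v := dlt_ne ⟨hp, hn⟩
  have huv' : u ≠ v' := fun e => hn (by rw [e]; exact h1)
  refine ⟨htr u v v' huv hvv huv' hp h1, fun hv'u => ?_⟩
  exact hn (htr v v' u hvv (Ne.symm huv') (Ne.symm huv) h1 hv'u)

lemma dlt_trans (ψ : Fin N → Fin N → Prop)
    (htr : ∀ u v w : Fin N, u ≠ v → v ≠ w → u ≠ w → ψ u v → ψ v w → ψ u w)
    {a b c : Fin N} (hab : dlt ψ a b) (hbc : dlt ψ b c) : dlt ψ a c := by
  have hAB : a ≠ b := dlt_ne hab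
  have hBC : b ≠ c := dlt_ne hbc
  have hAC : a ≠ c := fun e => hbc.2 (e ▸ hab.1)
  refine ⟨htr a b c hAB hBC hAC hab.1 hbc.1, fun h => ?_⟩
  exact hbc.2 (htr c a b (Ne.symm hAC) hAB (Ne.symm hBC) h hab.1)

lemma master_struct (ψ : Fin N → Fin N → Prop)
    (htr : ∀ u v w : Fin N, u ≠ v → v ≠ w → u ≠ w → ψ u v → ψ v w → ψ u w) :
    ∃ (Q : Fin N → Fin N → Prop) (o₀ : LO N),
      (∀ u v, Q u v → kk ψ u ≠ kk ψ v) ∧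
      (∀ u u' v, kk ψ u' = kk ψ u → Q u v → Q u' v) ∧
      (∀ u v v', kk ψ v' = kk ψ v → Q u v → Q u v') ∧
      (∀ u v, kk ψ u ≠ kk ψ v → Q u v ∨ Q v u) ∧
      (∀ u v, Q u v → ¬ Q v u) ∧
      (∀ u v, dlt ψ u v → Q u v) ∧
      (∀ u v, Q u v → prefers o₀ u v) := by
  classical
  set r : Fin N → Fin N → Prop := fun u v => u = v ∨ dlt ψ (kk ψ u) (kk ψ v) with hr
  haveI : IsRefl (Fin N) r := ⟨fun a => Or.inl rfl⟩
  haveI : IsTrans (Fin N) r := by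
    refine ⟨fun a b c hab hbc => ?_⟩
    rcases hab with rfl | hab
    · exact hbc
    rcases hbc with rfl | hbc
    · exact Or.inr hab
    · exact Or.inr (dlt_trans ψ htr hab hbc)
  haveI : IsAntisymm (Fin N) r := by
    refine ⟨fun a b hab hba => ?_⟩
    rcases hab with rfl | hab
    · rfl
    rcases hba with rfl | hba
    · rfl
    · exact absurd hba.1 hab.2
  haveI : IsPreorder (Fin N) r := ⟨⟩
  haveI : IsPartialOrder (Fin N) r := ⟨⟩
  obtain ⟨s, hs, hrs⟩ := extend_partialOrder r
  haveI := hs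
  set Q : Fin N → Fin N → Prop := fun u v => kk ψ u ≠ kk ψ v ∧ s (kk ψ u) (kk ψ v) with hQ
  have hQne : ∀ u v, Q u v → kk ψ u ≠ kk ψ v := fun u v h => h.1
  have hQl : ∀ u u' v, kk ψ u' = kk ψ u → Q u v → Q u' v := by
    intro u u' v he h
    exact ⟨he ▸ h.1, he ▸ h.2⟩
  have hQr : ∀ u v v', kk ψ v' = kk ψ v → Q u v → Q u v' := by
    intro u v v' he h
    exact ⟨he ▸ h.1, he ▸ h.2⟩
  have hQtot : ∀ u v, kk ψ u ≠ kk ψ v → Q u v ∨ Q v u := by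
    intro u v hne
    rcases total_of s (kk ψ u) (kk ψ v) with h | h
    · exact Or.inl ⟨hne, h⟩
    · exact Or.inr ⟨Ne.symm hne, h⟩
  have hQasym : ∀ u v, Q u v → ¬ Q v u := by
    intro u v h1 h2
    exact h1.1 (antisymm h1.2 h2.2)
  have hQdlt : ∀ u v, dlt ψ u v → Q u v := by
    intro u v hd
    have hd' : dlt ψ (kk ψ u) (kk ψ v) :=
      dlt_inv_right ψ htr (kk_rel ψ v) (dlt_inv_left ψ htr (kk_rel ψ u) hd)
    have hne : kk ψ u ≠ kk ψ v := dlt_ne hd'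
    refine ⟨hne, hrs _ _ (Or.inr ?_)⟩
    rw [kk_idem ψ htr, kk_idem ψ htr]
    exact hd'
  -- second extension, to get a base linear order
  set r2 : Fin N → Fin N → Prop := fun u v => u = v ∨ Q u v with hr2
  haveI : IsRefl (Fin N) r2 := ⟨fun a => Or.inl rfl⟩
  haveI : IsTrans (Fin N) r2 := by
    refine ⟨fun a b c hab hbc => ?_⟩
    rcases hab with rfl | hab
    · exact hbc
    rcases hbc with rfl | hbc
    · exact Or.inr hab
    right
    refine ⟨fun he => ?_, _root_.trans hab.2 hbc.2⟩
    obtain ⟨hb1, hb2⟩ := hbc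
    rw [← he] at hb2
    exact hab.1 (antisymm hab.2 hb2)
  haveI : IsAntisymm (Fin N) r2 := by
    refine ⟨fun a b hab hba => ?_⟩
    rcases hab with rfl | hab
    · rfl
    rcases hba with rfl | hba
    · rfl
    · exact absurd (antisymm hab.2 hba.2) hab.1
  haveI : IsPreorder (Fin N) r2 := ⟨⟩
  haveI : IsPartialOrder (Fin N) r2 := ⟨⟩
  obtain ⟨t, ht, hrt⟩ := extend_partialOrder r2
  haveI := ht
  set rank : Fin N → ℕ := fun u => (Finset.univ.filter fun x => x ≠ u ∧ t x u).card with hrank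
  have aux : ∀ u v : Fin N, u ≠ v → t u v → rank u < rank v := by
    intro u v huv htuv
    apply Finset.card_lt_card
    constructor
    · intro x hx
      rw [Finset.mem_filter] at hx ⊢
      obtain ⟨_, hxu, hxuT⟩ := hx
      refine ⟨Finset.mem_univ x, fun e => ?_, _root_.trans hxuT htuv⟩
      · subst e
        exact huv (antisymm htuv hxuT)
    · intro hsub
      have humem : u ∈ Finset.univ.filter fun x => x ≠ v ∧ t x v := by
        rw [Finset.mem_filter]
        exact ⟨Finset.mem_univ u, huv, htuv⟩
      have := hsub humem
      rw [Finset.mem_filter] at this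
      exact this.2.1 rfl
  have hrankN : ∀ u : Fin N, rank u < N := by
    intro u
    have hss : (Finset.univ.filter fun x => x ≠ u ∧ t x u) ⊂ Finset.univ := by
      constructor
      · exact Finset.subset_univ _
      · intro hsub
        have := hsub (Finset.mem_univ u)
        rw [Finset.mem_filter] at this
        exact this.2.1 rfl
    have := Finset.card_lt_card hss
    simpa using this
  set g : Fin N → Fin N := fun u => ⟨rank u, hrankN u⟩ with hg
  have ginj : Function.Injective g := by
    intro u v he
    by_contra hne
    have he' : rank u = rank v := by
      have := congrArg Fin.val he
      simpa using this
    rcases total_of t u v with h | h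
    · exact absurd he' (Nat.ne_of_lt (aux u v hne h))
    · exact absurd he'.symm (Nat.ne_of_lt (aux v u (Ne.symm hne) h))
  have gbij : Function.Bijective g := (Finite.injective_iff_bijective).1 ginj
  set o₀ : LO N := (Equiv.ofBijective g gbij).symm with ho₀
  refine ⟨Q, o₀, hQne, hQl, hQr, hQtot, hQasym, hQdlt, ?_⟩
  intro u v hQuv
  have hne : u ≠ v := by
    intro e
    exact hQuv.1 (e ▸ rfl)
  have htuv : t u v := hrt u v (Or.inr hQuv)
  show o₀.symm u < o₀.symm v
  have : o₀.symm = Equiv.ofBijective g gbij := by rw [ho₀, Equiv.symm_symm]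
  rw [this]
  show g u < g v
  exact aux u v hne htuv

end Master

end SRCAux


open scoped ENNReal Classical

section Mech

variable {N : ℕ} {I : Type*}

lemma prefers_not_iff (o : LO N) {a b : Fin N} (hab : a ≠ b) :
    ¬ prefers o a b ↔ prefers o b a := by
  unfold prefers
  rw [not_lt]
  constructor
  · intro h
    exact lt_of_le_of_ne h (fun e => hab (o.symm.injective e).symm)
  · exact le_of_lt

lemma prefers_asymm {o : LO N} {a b : Fin N} (h : prefers o a b) : ¬ prefers o b a :=
  lt_asymm h

lemma prefers_trans_symm (o τ : LO N) (u v : Fin N) :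
    prefers (o.trans τ) u v ↔ prefers o (τ.symm u) (τ.symm v) := Iff.rfl

lemma prefers_trans_swap (o : LO N) (a b u v : Fin N) :
    prefers (o.trans (Equiv.swap a b)) u v ↔ prefers o (Equiv.swap a b u) (Equiv.swap a b v) := by
  rw [prefers_trans_symm, Equiv.symm_swap]

/-- `prefOut i a b m S` : at least one sample on issue `i`, and all samples on issue `i`
prefer `a` to `b`. -/
def prefOut (i : I) (a b : Fin N) (m : ℕ) (S : Fin m → LO N × I) : Prop :=
  (∃ k, (S k).2 = i) ∧ ∀ k, (S k).2 = i → prefers (S k).1 a b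

/-- whether to flip the class with key `c` on issue `i`. -/
def flipC (pf : I → Fin N → Fin N) (o₀ : I → LO N) (i : I) (m : ℕ) (S : Fin m → LO N × I)
    (c : Fin N) : Prop :=
  pf i c ≠ c ∧ ¬ (prefOut i c (pf i c) m S ↔ prefers (o₀ i) c (pf i c))

/-- the mechanism's flipping map on outcomes. -/
def mechF (pk pf : I → Fin N → Fin N) (o₀ : I → LO N) (i : I) (m : ℕ) (S : Fin m → LO N × I)
    (u : Fin N) : Fin N :=
  if flipC pf o₀ i m S (pk i u) then pf i u else u

lemma mechF_invol (pk pf : I → Fin N → Fin N) (o₀ : I → LO N) (i : I) (m : ℕ)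
    (S : Fin m → LO N × I)
    (h1 : ∀ u, pk i (pf i u) = pk i u) (h2 : ∀ u, pf i (pf i u) = u) :
    Function.Involutive (mechF pk pf o₀ i m S) := by
  intro u
  unfold mechF
  by_cases h : flipC pf o₀ i m S (pk i u)
  · rw [if_pos h, h1 u, if_pos h, h2 u]
  · rw [if_neg h, if_neg h]

lemma mechF_pk (pk pf : I → Fin N → Fin N) (o₀ : I → LO N) (i : I) (m : ℕ)
    (S : Fin m → LO N × I)
    (h1 : ∀ u, pk i (pf i u) = pk i u) (u : Fin N) :
    pk i (mechF pk pf o₀ i m S u) = pk i u := by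
  unfold mechF
  split_ifs
  · exact h1 u
  · rfl

lemma mech_out (pk pf : I → Fin N → Fin N) (o₀ : I → LO N) (i : I) (m : ℕ)
    (S : Fin m → LO N × I)
    (h1 : ∀ u, pk i (pf i u) = pk i u) (h2 : ∀ u, pf i (pf i u) = u)
    {a b : Fin N} (hka : pk i a = a) (hb : pf i a = b) (hba : b ≠ a) (τ : LO N)
    (hτ : ∀ x, τ.symm x = mechF pk pf o₀ i m S x) :
    (prefers ((o₀ i).trans τ) a b ↔ prefOut i a b m S) := by
  have hab : a ≠ b := Ne.symm hba
  have hFa : mechF pk pf o₀ i m S a = if flipC pf o₀ i m S a then b else a := by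
    unfold mechF; rw [hka, hb]
  have hkb : pk i b = a := by rw [← hb, h1 a, hka]
  have hFb : mechF pk pf o₀ i m S b = if flipC pf o₀ i m S a then a else b := by
    unfold mechF
    rw [hkb]
    congr 1
    rw [← hb, h2 a]
  rw [prefers_trans_symm, hτ, hτ, hFa, hFb]
  have hflipc : flipC pf o₀ i m S a ↔ ¬ (prefOut i a b m S ↔ prefers (o₀ i) a b) := by
    unfold flipC
    rw [hb]
    constructor
    · exact fun h => h.2
    · exact fun h => ⟨hba, h⟩
  by_cases hfl : flipC pf o₀ i m S a
  · rw [if_pos hfl, if_pos hfl]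
    rw [hflipc] at hfl
    rw [← prefers_not_iff (o₀ i) hab]
    tauto
  · rw [if_neg hfl, if_neg hfl]
    rw [hflipc, not_not] at hfl
    tauto

lemma sigma_cases {N : ℕ} {u v : Fin N} (huv : u ≠ v) (σ : LO N)
    (hσ : ∀ x : Fin N, x ≠ u → x ≠ v → σ x = x) : σ = 1 ∨ σ = Equiv.swap u v := by
  have hu : σ u = u ∨ σ u = v := by
    by_contra h
    push_neg at h
    exact h.1 (σ.injective (hσ (σ u) h.1 h.2))
  have hv : σ v = u ∨ σ v = v := by
    by_contra h
    push_neg at h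
    exact h.2 (σ.injective (hσ (σ v) h.1 h.2))
  rcases hu with hu | hu
  · left
    ext x
    by_cases hxu : x = u
    · simp [hxu, hu]
    by_cases hxv : x = v
    · subst hxv
      rcases hv with hv | hv
      · exact absurd (σ.injective (hv.trans hu.symm)) (Ne.symm huv)
      · simp [hv]
    · simp [hσ x hxu hxv]
  · right
    have hv' : σ v = u := by
      rcases hv with hv | hv
      · exact hv
      · exact absurd (σ.injective (hu.trans hv.symm)) huv
    ext x
    by_cases hxu : x = u
    · simp [hxu, hu, Equiv.swap_apply_left]
    by_cases hxv : x = v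
    · simp [hxv, hv', Equiv.swap_apply_right]
    · simp [hσ x hxu hxv, Equiv.swap_apply_of_ne_of_ne hxu hxv]

lemma pairwise_pair (o : LO N) (u v : Fin N) :
    List.Pairwise (prefers o) [u, v] ↔ prefers o u v := by
  simp

lemma odot_one (o : LO N) : odot o 1 = o := Equiv.trans_refl o

lemma odot_swap_swap (o : LO N) (u v : Fin N) :
    odot (odot o (Equiv.swap u v)) (Equiv.swap u v) = o := by
  unfold odot
  ext x
  simp [Equiv.swap_apply_self]

end Mech


open scoped ENNReal Classical
open SRCAux

section SampleBounds

variable {N : ℕ} {I : Type*} (DI : PMF I) (M : I → PMF (LO N)) (i : I)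

lemma prob_sample_snd_ne : prob (sampleDist DI M) {x : LO N × I | x.2 ≠ i} = 1 - DI i := by
  rw [sampleDist, prob, PMF.toOuterMeasure_bind_apply]
  have key : ∀ j : I, ((M j).map fun o => (o, j)).toOuterMeasure {x : LO N × I | x.2 ≠ i}
      = if j = i then 0 else 1 := by
    intro j
    rw [PMF.toOuterMeasure_map_apply]
    by_cases hj : j = i
    · rw [if_pos hj]
      have : ((fun o : LO N => (o, j)) ⁻¹' {x : LO N × I | x.2 ≠ i}) = ∅ := by
        ext o; simp [hj]
      rw [this]
      simp
    · rw [if_neg hj]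
      have : ((fun o : LO N => (o, j)) ⁻¹' {x : LO N × I | x.2 ≠ i}) = Set.univ := by
        ext o; simp [hj]
      rw [this, ← prob, prob_univ]
  have h2 : ∀ j : I, DI j * (((M j).map fun o => (o, j)).toOuterMeasure {x : LO N × I | x.2 ≠ i})
      = if j = i then 0 else DI j := by
    intro j
    rw [key j]
    split_ifs <;> simp
  rw [tsum_congr h2]
  have h3 : ∑' j : I, (fun j => DI j) j = DI i + ∑' j : I, if j = i then 0 else DI j :=
    ENNReal.tsum_eq_add_tsum_ite i
  have h4 : (1 : ℝ≥0∞) = DI i + ∑' j : I, if j = i then 0 else DI j := by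
    rw [← h3, DI.tsum_coe]
  exact ENNReal.eq_sub_of_add_eq (PMF.apply_ne_top DI i) (by rw [add_comm]; exact h4.symm)

lemma prob_sample_eq_and (B : Set (LO N)) :
    prob (sampleDist DI M) {x : LO N × I | x.2 = i ∧ x.1 ∈ B} = DI i * prob (M i) B := by
  rw [sampleDist, prob, PMF.toOuterMeasure_bind_apply]
  have key : ∀ j : I, DI j * (((M j).map fun o => (o, j)).toOuterMeasure
      {x : LO N × I | x.2 = i ∧ x.1 ∈ B})
      = if j = i then DI i * prob (M i) B else 0 := by
    intro j
    rw [PMF.toOuterMeasure_map_apply]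
    by_cases hj : j = i
    · subst hj
      rw [if_pos rfl]
      have : ((fun o : LO N => (o, j)) ⁻¹' {x : LO N × I | x.2 = j ∧ x.1 ∈ B}) = B := by
        ext o; simp
      rw [this, ← prob]
    · rw [if_neg hj]
      have : ((fun o : LO N => (o, j)) ⁻¹' {x : LO N × I | x.2 = i ∧ x.1 ∈ B}) = ∅ := by
        ext o; simp [hj]
      rw [this]
      simp
  rw [tsum_congr key, tsum_ite_eq]

lemma bound_compl_prefOut (a b : Fin N)
    (h0 : prob (M i) {o : LO N | ¬ prefers o a b} = 0) (m : ℕ) :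
    prob (iidPMF (sampleDist DI M) m) {S | prefOut i a b m S}ᶜ ≤ (1 - DI i) ^ m := by
  have hsub : {S : Fin m → LO N × I | prefOut i a b m S}ᶜ ⊆
      {S : Fin m → LO N × I | ∀ k, S k ∈ {x : LO N × I | x.2 ≠ i}} ∪
      {S : Fin m → LO N × I | ∃ k, S k ∈ {x : LO N × I | x.2 = i ∧ x.1 ∈ {o : LO N | ¬ prefers o a b}}} := by
    intro S hS
    simp only [Set.mem_compl_iff, Set.mem_setOf_eq, prefOut, not_and, not_forall, Classical.not_imp] at hS
    by_cases hI : ∃ k, (S k).2 = i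
    · right
      obtain ⟨k, hk⟩ := hS hI
      exact ⟨k, hk.1, hk.2⟩
    · left
      intro k
      simp only [Set.mem_setOf_eq]
      exact fun h => hI ⟨k, h⟩
  refine le_trans (le_trans (prob_mono _ hsub) (prob_union_le _ _ _)) ?_
  have h1 : prob (iidPMF (sampleDist DI M) m)
      {S : Fin m → LO N × I | ∀ k, S k ∈ {x : LO N × I | x.2 ≠ i}} = (1 - DI i) ^ m := by
    rw [prob_iid_forall, prob_sample_snd_ne]
  have h2 : prob (iidPMF (sampleDist DI M) m)
      {S : Fin m → LO N × I | ∃ k, S k ∈ {x : LO N × I | x.2 = i ∧ x.1 ∈ {o : LO N | ¬ prefers o a b}}} = 0 := by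
    apply prob_iid_exists_zero
    rw [prob_sample_eq_and, h0, mul_zero]
  rw [h1, h2, add_zero]

lemma bound_prefOut (a b : Fin N) (m : ℕ) :
    prob (iidPMF (sampleDist DI M) m) {S | prefOut i a b m S} ≤
      (1 - DI i * prob (M i) {o : LO N | ¬ prefers o a b}) ^ m := by
  have hsub : {S : Fin m → LO N × I | prefOut i a b m S} ⊆
      {S : Fin m → LO N × I | ∀ k, S k ∈ {x : LO N × I | x.2 = i ∧ x.1 ∈ {o : LO N | ¬ prefers o a b}}ᶜ} := by
    intro S hS k
    simp only [Set.mem_compl_iff, Set.mem_setOf_eq, not_and, not_not]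
    exact fun h => hS.2 k h
  refine le_trans (prob_mono _ hsub) (le_of_eq ?_)
  rw [prob_iid_forall, prob_compl_eq, prob_sample_eq_and]

lemma wop_prefOut (hq : DI i ≠ 0) (a b : Fin N)
    (h0 : prob (M i) {o : LO N | ¬ prefers o a b} = 0) :
    WithOverwhelmingProb (sampleDist DI M) (fun m => {S | prefOut i a b m S}) := by
  apply wop_of_bound _ _ 1 (by norm_num) ((DI i).toReal)
    (ENNReal.toReal_pos hq (PMF.apply_ne_top DI i))
  intro m _
  rw [one_mul]
  exact (bound_compl_prefOut DI M i a b h0 m).trans (pow_bound (DI i) (DI.coe_le_one i) m)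

lemma wop_not_prefOut (hq : DI i ≠ 0) (a b : Fin N)
    (hρ : prob (M i) {o : LO N | ¬ prefers o a b} ≠ 0) :
    WithOverwhelmingProb (sampleDist DI M) (fun m => {S | ¬ prefOut i a b m S}) := by
  set δ := DI i * prob (M i) {o : LO N | ¬ prefers o a b} with hδ
  have hδ0 : δ ≠ 0 := mul_ne_zero hq hρ
  have hδ1 : δ ≤ 1 := mul_le_one' (DI.coe_le_one i) (prob_le_one _ _)
  have hδt : δ ≠ ⊤ := (lt_of_le_of_lt hδ1 ENNReal.one_lt_top).ne
  apply wop_of_bound _ _ 1 (by norm_num) δ.toReal (ENNReal.toReal_pos hδ0 hδt)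
  intro m _
  rw [one_mul]
  have hcc : {S : Fin m → LO N × I | ¬ prefOut i a b m S}ᶜ = {S | prefOut i a b m S} := by
    ext S; simp
  rw [hcc]
  exact (bound_prefOut DI M i a b m).trans (pow_bound δ hδ1 m)

end SampleBounds


open scoped ENNReal Classical
open SRCAux

/-- **Strong representative impossibility (construction direction).** Let `φ` assign to
each issue `i` a directed graph on `[N]` that is transitive (among distinct vertices) and
contains no simple directed cycle of length at least 3. Then there exist a candidate space
`𝓒` whose privilege graph `G_i` contains `φ(i)` as a subgraph for every issue `i`, and a
representational mechanism `f` over `(𝓘, 𝓓_𝓘, 𝓒)` simultaneously satisfying PPE, S-PIIA,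
and S-PC for all populations `𝓓_𝓟`. -/
theorem strong_representative_construction (N : ℕ) (hN : 2 ≤ N)
    (I : Type) [DecidableEq I]
    (DI : PMF I) (hDI : ∀ i : I, DI i ≠ 0)
    (φ : I → Fin N → Fin N → Prop)
    (htrans : ∀ (i : I) (u v w : Fin N), u ≠ v → v ≠ w → u ≠ w →
      φ i u v → φ i v w → φ i u w)
    (hacyc : ∀ i : I, ¬ ∃ (k : ℕ) (cyc : Fin (k + 3) → Fin N),
      Function.Injective cyc ∧ ∀ j : Fin (k + 3), φ i (cyc j) (cyc (j + 1))) :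
    ∃ (𝓒 : Set (I → LO N)) (f : ∀ m : ℕ, (Fin m → LO N × I) → (I → LO N)),
      𝓒.Nonempty ∧
      (∀ (m : ℕ) (S : Fin m → LO N × I), f m S ∈ 𝓒) ∧
      (∀ (i : I) (u v : Fin N), u ≠ v → φ i u v → PrivEdge 𝓒 i u v) ∧
      (∀ DP : PMF (I → LO N), PPEat 𝓒 DI f (marginal DP)) ∧
      (∀ DP DP' : PMF (I → LO N), SPIIAat 𝓒 DI f (marginal DP) (marginal DP')) ∧
      (∀ DP : PMF (I → LO N), SPCat 𝓒 DI f (marginal DP)) := by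
  classical
  have hstruct : ∀ i : I, ∃ (Q : Fin N → Fin N → Prop) (o₀ : LO N),
      (∀ u v, Q u v → kk (φ i) u ≠ kk (φ i) v) ∧
      (∀ u u' v, kk (φ i) u' = kk (φ i) u → Q u v → Q u' v) ∧
      (∀ u v v', kk (φ i) v' = kk (φ i) v → Q u v → Q u v') ∧
      (∀ u v, kk (φ i) u ≠ kk (φ i) v → Q u v ∨ Q v u) ∧
      (∀ u v, Q u v → ¬ Q v u) ∧
      (∀ u v, dlt (φ i) u v → Q u v) ∧
      (∀ u v, Q u v → prefers o₀ u v) :=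
    fun i => master_struct (φ i) (htrans i)
  choose Q o₀ hQne hQl hQr hQtot hQasym hQdlt hQbase using hstruct
  set pk : I → Fin N → Fin N := fun i => kk (φ i) with hpkdef
  set pf : I → Fin N → Fin N := fun i => pp (φ i) with hpfdef
  have h1 : ∀ (i : I) (u : Fin N), pk i (pf i u) = pk i u :=
    fun i u => kk_pp (φ i) (htrans i) u
  have h2 : ∀ (i : I) (u : Fin N), pf i (pf i u) = u :=
    fun i u => pp_pp (φ i) (htrans i) (hacyc i) u
  set 𝓒 : Set (I → LO N) := {C | ∀ (j : I) (u v : Fin N), Q j u v → prefers (C j) u v}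
    with h𝓒def
  have hmem𝓒 : ∀ C : I → LO N,
      C ∈ 𝓒 ↔ ∀ (j : I) (u v : Fin N), Q j u v → prefers (C j) u v := fun C => Iff.rfl
  set f : ∀ m : ℕ, (Fin m → LO N × I) → (I → LO N) :=
    fun m S j => (o₀ j).trans
      (Function.Involutive.toPerm _ (mechF_invol pk pf o₀ j m S (h1 j) (h2 j))) with hfdef
  -- base profile
  have hbase𝓒 : (fun j : I => o₀ j) ∈ 𝓒 := by
    rw [hmem𝓒]
    intro j u v hq
    exact hQbase j u v hq
  -- output characterization
  have hOUT : ∀ (i : I) (m : ℕ) (S : Fin m → LO N × I) (a b : Fin N),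
      pk i a = a → pf i a = b → b ≠ a →
      (prefers (f m S i) a b ↔ prefOut i a b m S) := by
    intro i m S a b hka hb hba
    exact mech_out pk pf o₀ i m S (h1 i) (h2 i) hka hb hba _ (fun x => rfl)
  -- membership of outputs
  have hfmem : ∀ (m : ℕ) (S : Fin m → LO N × I), f m S ∈ 𝓒 := by
    intro m S
    rw [hmem𝓒]
    intro j u v hq
    show prefers ((o₀ j).trans _) u v
    rw [prefers_trans_symm]
    have he : ∀ x : Fin N,
        (Function.Involutive.toPerm _ (mechF_invol pk pf o₀ j m S (h1 j) (h2 j))).symm x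
          = mechF pk pf o₀ j m S x := fun x => rfl
    rw [he, he]
    apply hQbase
    exact hQr j _ _ _ (mechF_pk pk pf o₀ j m S (h1 j) v)
      (hQl j _ _ _ (mechF_pk pk pf o₀ j m S (h1 j) u) hq)
  -- swap-closure for same-key pairs
  have hclose : ∀ (i : I) (u v : Fin N), pk i u = pk i v → ∀ o : LO N,
      (∀ x y, Q i x y → prefers (odot o (Equiv.swap u v)) x y) →
      (∀ x y, Q i x y → prefers o x y) := by
    intro i u v hk o h x y hq
    have hswapk : ∀ z : Fin N, pk i (Equiv.swap u v z) = pk i z := by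
      intro z
      by_cases hzu : z = u
      · rw [hzu, Equiv.swap_apply_left, ← hk]
      by_cases hzv : z = v
      · rw [hzv, Equiv.swap_apply_right, hk]
      · rw [Equiv.swap_apply_of_ne_of_ne hzu hzv]
    have hq' : Q i (Equiv.swap u v x) (Equiv.swap u v y) :=
      hQr i _ _ _ (hswapk y) (hQl i _ _ _ (hswapk x) hq)
    have := h _ _ hq'
    rw [odot, prefers_trans_swap, Equiv.swap_apply_self, Equiv.swap_apply_self] at this
    exact this
  -- both-privileged implies same key
  have hkeyeq : ∀ (i : I) (c c' : Fin N), c ≠ c' →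
      Privileged 𝓒 i [c, c'] → Privileged 𝓒 i [c', c] → pk i c = pk i c' := by
    intro i c c' hcc hp1 hp2
    by_contra hne
    set Cb : I → LO N :=
      Function.update (fun j : I => o₀ j) i (odot (o₀ i) (Equiv.swap c c')) with hCbdef
    have hCbi : Cb i = odot (o₀ i) (Equiv.swap c c') := Function.update_self i _ _
    have hprof : odotProfile Cb i (Equiv.swap c c') ∈ 𝓒 := by
      have : odotProfile Cb i (Equiv.swap c c') = (fun j : I => o₀ j) := by
        rw [odotProfile, hCbdef, Function.update_idem, Function.update_self, odot_swap_swap]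
        exact Function.update_eq_self i _
      rw [this]
      exact hbase𝓒
    have hfix : ∀ x : Fin N, x ∉ ([c', c] : List (Fin N)) → (Equiv.swap c c') x = x := by
      intro x hx
      simp only [List.mem_cons, List.not_mem_nil, or_false, not_or] at hx
      exact Equiv.swap_apply_of_ne_of_ne hx.2 hx.1
    have hfix' : ∀ x : Fin N, x ∉ ([c, c'] : List (Fin N)) → (Equiv.swap c c') x = x := by
      intro x hx
      simp only [List.mem_cons, List.not_mem_nil, or_false, not_or] at hx
      exact Equiv.swap_apply_of_ne_of_ne hx.1 hx.2
    rcases hQtot i c c' hne with hq | hq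
    · -- Q i c c' holds; contradict Privileged [c', c]
      have hpref : prefers (Cb i) c' c := by
        rw [hCbi, odot, prefers_trans_swap, Equiv.swap_apply_left, Equiv.swap_apply_right]
        exact hQbase i c c' hq
      have hCb𝓒 : Cb ∈ 𝓒 :=
        hp2 Cb ((pairwise_pair (Cb i) c' c).mpr hpref) (Equiv.swap c c') hfix hprof
      have := (hmem𝓒 Cb).1 hCb𝓒 i c c' hq
      exact prefers_asymm hpref this
    · -- Q i c' c holds; contradict Privileged [c, c']
      have hpref : prefers (Cb i) c c' := by
        rw [hCbi, odot, prefers_trans_swap, Equiv.swap_apply_left, Equiv.swap_apply_right]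
        exact hQbase i c' c hq
      have hCb𝓒 : Cb ∈ 𝓒 :=
        hp1 Cb ((pairwise_pair (Cb i) c c').mpr hpref) (Equiv.swap c c') hfix' hprof
      have := (hmem𝓒 Cb).1 hCb𝓒 i c' c hq
      exact prefers_asymm hpref this
  -- pair structure from same key
  have hpair : ∀ (i : I) (c c' : Fin N), c ≠ c' → pk i c = pk i c' →
      pk i (pk i c) = pk i c ∧ pf i (pk i c) ≠ pk i c ∧
      ((pk i c = c ∧ pf i (pk i c) = c') ∨ (pk i c = c' ∧ pf i (pk i c) = c)) := by
    intro i c c' hcc hkeq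
    have hidem : pk i (pk i c) = pk i c := kk_idem (φ i) (htrans i) c
    have hrelcc' : Rel (φ i) c c' := rel_of_kk_eq (φ i) (htrans i) hkeq
    have hrelca : Rel (φ i) c (pk i c) := kk_rel (φ i) c
    have hcases : pk i c = c ∨ pk i c = c' := by
      by_cases hac : pk i c = c
      · exact Or.inl hac
      · exact Or.inr (class_small (φ i) (htrans i) (hacyc i) hrelca hrelcc' hac (Ne.symm hcc))
    rcases hcases with hac | hac'
    · have hb : pf i (pk i c) = c' := by
        rw [hac]
        exact pp_eq_partner (φ i) (htrans i) (hacyc i) (Ne.symm hcc) hrelcc'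
      refine ⟨hidem, ?_, Or.inl ⟨hac, hb⟩⟩
      rw [hb, hac]
      exact Ne.symm hcc
    · have hb : pf i (pk i c) = c := by
        rw [hac']
        exact pp_eq_partner (φ i) (htrans i) (hacyc i) hcc (Rel_symm (φ i) hrelcc')
      refine ⟨hidem, ?_, Or.inr ⟨hac', hb⟩⟩
      rw [hb, hac']
      exact hcc
  refine ⟨𝓒, f, ⟨fun j : I => o₀ j, hbase𝓒⟩, hfmem, ?_, ?_, ?_, ?_⟩
  · -- privilege edges
    intro i u v huv hφuv
    refine ⟨huv, ?_⟩
    intro C hpw σ hσfix hmem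
    have hpw' : prefers (C i) u v := (pairwise_pair (C i) u v).mp hpw
    have hσ : σ = 1 ∨ σ = Equiv.swap u v := by
      apply sigma_cases huv σ
      intro x hxu hxv
      apply hσfix
      simp [hxu, hxv]
    rcases hσ with rfl | rfl
    · rw [odotProfile, odot_one, Function.update_eq_self] at hmem
      exact hmem
    by_cases hvu : φ i v u
    · -- two-cycle : closure
      have hk : pk i u = pk i v := kk_eq_of_rel (φ i) (htrans i) (Or.inr ⟨hφuv, hvu⟩)
      rw [hmem𝓒]
      intro j x y hq
      by_cases hji : j = i
      · subst hji
        refine hclose j u v hk (C j) ?_ x y hq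
        intro x' y' hq'
        have := (hmem𝓒 _).1 hmem j x' y' hq'
        rw [odotProfile, Function.update_self] at this
        exact this
      · have := (hmem𝓒 _).1 hmem j x y hq
        rw [odotProfile, Function.update_of_ne hji] at this
        exact this
    · -- strict edge : vacuous
      have hq : Q i u v := hQdlt i u v ⟨hφuv, hvu⟩
      have := (hmem𝓒 _).1 hmem i u v hq
      rw [odotProfile, Function.update_self, odot, prefers_trans_swap,
        Equiv.swap_apply_left, Equiv.swap_apply_right] at this
      exact absurd hpw' (prefers_asymm this)
  · -- PPE
    intro DP C hC C' hC' i c c' hcc hpref hC'eq hunan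
    have hC'i : C' i = odot (C i) (Equiv.swap c c') := by
      rw [hC'eq, odotProfile, Function.update_self]
    have hkeq : pk i c = pk i c' := by
      by_contra hne
      rcases hQtot i c c' hne with hq | hq
      · have hp' := (hmem𝓒 C').1 hC' i c c' hq
        rw [hC'i, odot, prefers_trans_swap, Equiv.swap_apply_left,
          Equiv.swap_apply_right] at hp'
        exact prefers_asymm hpref hp'
      · exact prefers_asymm hpref ((hmem𝓒 C).1 hC i c' c hq)
    obtain ⟨hka, hbne, hcase⟩ := hpair i c c' hcc hkeq
    set a : Fin N := pk i c with hadef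
    set b : Fin N := pf i (pk i c) with hbdef
    have hab : a ≠ b := Ne.symm hbne
    have hC'pref : prefers (C' i) c' c := by
      rw [hC'i, odot, prefers_trans_swap, Equiv.swap_apply_left, Equiv.swap_apply_right]
      exact hpref
    have hz : prob (marginal DP i) {o : LO N | prefers o c' c} = 0 :=
      prob_zero_of_forall _ _ (fun o ho => hunan o ho)
    rcases hcase with ⟨hac, hbc'⟩ | ⟨hac', hbc⟩
    · -- key is c, partner c'
      have hset : {o : LO N | ¬ prefers o a b} = {o : LO N | prefers o c' c} := by
        ext o
        rw [Set.mem_setOf_eq, Set.mem_setOf_eq, hac, hbc', prefers_not_iff o hcc]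
      have hwop := wop_prefOut DI (marginal DP) i (hDI i) a b (by rw [hset]; exact hz)
      refine wop_mono _ _ _ (fun m => ?_) hwop
      intro S hS
      have hfp : prefers (f m S i) a b := (hOUT i m S a b hka rfl hbne).mpr hS
      intro heq
      rw [heq, hac, hbc'] at hfp
      exact prefers_asymm hC'pref hfp
    · -- key is c', partner c
      have hset : {o : LO N | ¬ prefers o a b} = {o : LO N | prefers o c' c}ᶜ := by
        ext o
        rw [Set.mem_setOf_eq, Set.mem_compl_iff, Set.mem_setOf_eq, hac', hbc]
      have hρ : prob (marginal DP i) {o : LO N | ¬ prefers o a b} ≠ 0 := by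
        rw [hset, prob_compl_eq, hz]
        simp
      have hwop := wop_not_prefOut DI (marginal DP) i (hDI i) a b hρ
      refine wop_mono _ _ _ (fun m => ?_) hwop
      intro S hS
      have hfp : ¬ prefers (f m S i) a b := by
        rw [hOUT i m S a b hka rfl hbne]
        exact hS
      rw [prefers_not_iff _ hab] at hfp
      intro heq
      rw [heq, hac', hbc] at hfp
      exact prefers_asymm hC'pref hfp
  · -- S-PIIA
    intro DP DP' i c c' hcc hp1 hp2 hMeq
    have hkeq := hkeyeq i c c' hcc hp1 hp2
    obtain ⟨hka, hbne, hcase⟩ := hpair i c c' hcc hkeq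
    set a : Fin N := pk i c with hadef
    set b : Fin N := pf i (pk i c) with hbdef
    have hba : b ≠ a := hbne
    have hab : a ≠ b := Ne.symm hbne
    -- equality of the relevant probabilities
    have hAeq : prob (marginal DP i) {o : LO N | ¬ prefers o a b}
        = prob (marginal DP' i) {o : LO N | ¬ prefers o a b} := by
      rcases hcase with ⟨hac, hbc'⟩ | ⟨hac', hbc⟩
      · have hset : {o : LO N | ¬ prefers o a b} = {o : LO N | prefers o c c'}ᶜ := by
          ext o
          rw [Set.mem_setOf_eq, Set.mem_compl_iff, Set.mem_setOf_eq, hac, hbc']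
        rw [hset, prob_compl_eq, prob_compl_eq, hMeq]
      · have hset : {o : LO N | ¬ prefers o a b} = {o : LO N | prefers o c c'} := by
          ext o
          rw [Set.mem_setOf_eq, Set.mem_setOf_eq, hac', hbc,
            prefers_not_iff o (Ne.symm hcc)]
        rw [hset, hMeq]
    have hiff : ∀ (m : ℕ) (T : Fin m → LO N × I),
        prefers (f m T i) c c' ↔
          ((a = c ∧ prefOut i a b m T) ∨ (a = c' ∧ ¬ prefOut i a b m T)) := by
      intro m T
      have hout := hOUT i m T a b hka rfl hba
      rcases hcase with ⟨hac, hbc'⟩ | ⟨hac', hbc⟩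
      · rw [← hac, ← hbc', hout]
        constructor
        · intro h
          exact Or.inl ⟨rfl, h⟩
        · rintro (⟨_, h⟩ | ⟨hab', _⟩)
          · exact h
          · exact absurd hab' hab
      · rw [← hac', ← hbc, ← prefers_not_iff _ hab, hout]
        constructor
        · intro h
          exact Or.inr ⟨rfl, h⟩
        · rintro (⟨hab', _⟩ | ⟨_, h⟩)
          · exact absurd hab' hab
          · exact h
    by_cases hρ : prob (marginal DP i) {o : LO N | ¬ prefers o a b} = 0
    · -- both converge to a ≻ b
      have hρ' : prob (marginal DP' i) {o : LO N | ¬ prefers o a b} = 0 := by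
        rw [← hAeq]; exact hρ
      apply wop2_of_bound _ _ _ 2 (by norm_num) ((DI i).toReal)
        (ENNReal.toReal_pos (hDI i) (PMF.apply_ne_top DI i))
      intro m hm
      have hsub : {p : (Fin m → LO N × I) × (Fin m → LO N × I) |
            prefers (f m p.1 i) c c' ↔ prefers (f m p.2 i) c c'}ᶜ ⊆
          {p : (Fin m → LO N × I) × (Fin m → LO N × I) |
            p.1 ∈ {S : Fin m → LO N × I | prefOut i a b m S}ᶜ} ∪
          {p : (Fin m → LO N × I) × (Fin m → LO N × I) |
            p.2 ∈ {S : Fin m → LO N × I | prefOut i a b m S}ᶜ} := by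
        intro p hp
        by_contra hcon
        simp only [Set.mem_union, Set.mem_setOf_eq, Set.mem_compl_iff, not_or,
          not_not] at hcon
        apply hp
        show prefers (f m p.1 i) c c' ↔ prefers (f m p.2 i) c c'
        rw [hiff m p.1, hiff m p.2]
        constructor
        · rintro (⟨h1', _⟩ | ⟨h2', hn⟩)
          · exact Or.inl ⟨h1', hcon.2⟩
          · exact absurd hcon.1 hn
        · rintro (⟨h1', _⟩ | ⟨h2', hn⟩)
          · exact Or.inl ⟨h1', hcon.1⟩
          · exact absurd hcon.2 hn
      refine le_trans (le_trans (prob_mono _ hsub) (prob_union_le _ _ _)) ?_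
      rw [prob_pairbind_fst, prob_pairbind_snd]
      have hb1 := bound_compl_prefOut DI (marginal DP) i a b hρ m
      have hb2 := bound_compl_prefOut DI (marginal DP') i a b hρ' m
      have hpw := pow_bound (DI i) (DI.coe_le_one i) m
      calc prob (iidPMF (sampleDist DI (marginal DP)) m) {S | prefOut i a b m S}ᶜ +
            prob (iidPMF (sampleDist DI (marginal DP')) m) {S | prefOut i a b m S}ᶜ
          ≤ (1 - DI i) ^ m + (1 - DI i) ^ m := add_le_add hb1 hb2
        _ ≤ ENNReal.ofReal (Real.exp (-((DI i).toReal * m))) +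
            ENNReal.ofReal (Real.exp (-((DI i).toReal * m))) := add_le_add hpw hpw
        _ = 2 * ENNReal.ofReal (Real.exp (-((DI i).toReal * m))) := (two_mul _).symm
    · -- both converge to b ≻ a
      have hρ' : prob (marginal DP' i) {o : LO N | ¬ prefers o a b} ≠ 0 := by
        rw [← hAeq]; exact hρ
      set δ : ℝ≥0∞ := DI i * prob (marginal DP i) {o : LO N | ¬ prefers o a b} with hδdef
      have hδ0 : δ ≠ 0 := mul_ne_zero (hDI i) hρ
      have hδ1 : δ ≤ 1 := mul_le_one' (DI.coe_le_one i) (prob_le_one _ _)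
      have hδt : δ ≠ ⊤ := (lt_of_le_of_lt hδ1 ENNReal.one_lt_top).ne
      apply wop2_of_bound _ _ _ 2 (by norm_num) δ.toReal (ENNReal.toReal_pos hδ0 hδt)
      intro m hm
      have hsub : {p : (Fin m → LO N × I) × (Fin m → LO N × I) |
            prefers (f m p.1 i) c c' ↔ prefers (f m p.2 i) c c'}ᶜ ⊆
          {p : (Fin m → LO N × I) × (Fin m → LO N × I) |
            p.1 ∈ {S : Fin m → LO N × I | prefOut i a b m S}} ∪
          {p : (Fin m → LO N × I) × (Fin m → LO N × I) |
            p.2 ∈ {S : Fin m → LO N × I | prefOut i a b m S}} := by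
        intro p hp
        by_contra hcon
        simp only [Set.mem_union, Set.mem_setOf_eq, not_or] at hcon
        apply hp
        show prefers (f m p.1 i) c c' ↔ prefers (f m p.2 i) c c'
        rw [hiff m p.1, hiff m p.2]
        constructor
        · rintro (⟨_, h⟩ | ⟨h2', _⟩)
          · exact absurd h hcon.1
          · exact Or.inr ⟨h2', hcon.2⟩
        · rintro (⟨_, h⟩ | ⟨h2', _⟩)
          · exact absurd h hcon.2
          · exact Or.inr ⟨h2', hcon.1⟩
      refine le_trans (le_trans (prob_mono _ hsub) (prob_union_le _ _ _)) ?_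
      rw [prob_pairbind_fst, prob_pairbind_snd]
      have hb1 := bound_prefOut DI (marginal DP) i a b m
      have hb2 := bound_prefOut DI (marginal DP') i a b m
      rw [← hδdef] at hb1
      have hδ'δ : DI i * prob (marginal DP' i) {o : LO N | ¬ prefers o a b} = δ := by
        rw [hδdef, hAeq]
      rw [hδ'δ] at hb2
      have hpw := pow_bound δ hδ1 m
      calc prob (iidPMF (sampleDist DI (marginal DP)) m) {S | prefOut i a b m S} +
            prob (iidPMF (sampleDist DI (marginal DP')) m) {S | prefOut i a b m S}
          ≤ (1 - δ) ^ m + (1 - δ) ^ m := add_le_add hb1 hb2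
        _ ≤ ENNReal.ofReal (Real.exp (-(δ.toReal * m))) +
            ENNReal.ofReal (Real.exp (-(δ.toReal * m))) := add_le_add hpw hpw
        _ = 2 * ENNReal.ofReal (Real.exp (-(δ.toReal * m))) := (two_mul _).symm
  · -- S-PC
    intro DP i c c' hcc hp1 hp2 _
    have hkeq := hkeyeq i c c' hcc hp1 hp2
    obtain ⟨hka, hbne, hcase⟩ := hpair i c c' hcc hkeq
    set a : Fin N := pk i c with hadef
    set b : Fin N := pf i (pk i c) with hbdef
    have hab : a ≠ b := Ne.symm hbne
    by_cases hρ : prob (marginal DP i) {o : LO N | ¬ prefers o a b} = 0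
    · have hwop := wop_prefOut DI (marginal DP) i (hDI i) a b hρ
      rcases hcase with ⟨hac, hbc'⟩ | ⟨hac', hbc⟩
      · left
        refine wop_mono _ _ _ (fun m => ?_) hwop
        intro S hS
        have hfp : prefers (f m S i) a b := (hOUT i m S a b hka rfl hbne).mpr hS
        rw [hac, hbc'] at hfp
        exact hfp
      · right
        refine wop_mono _ _ _ (fun m => ?_) hwop
        intro S hS
        have hfp : prefers (f m S i) a b := (hOUT i m S a b hka rfl hbne).mpr hS
        rw [hac', hbc] at hfp
        exact hfp
    · have hwop := wop_not_prefOut DI (marginal DP) i (hDI i) a b hρ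
      rcases hcase with ⟨hac, hbc'⟩ | ⟨hac', hbc⟩
      · right
        refine wop_mono _ _ _ (fun m => ?_) hwop
        intro S hS
        have hfp : ¬ prefers (f m S i) a b := by
          rw [hOUT i m S a b hka rfl hbne]
          exact hS
        rw [prefers_not_iff _ hab] at hfp
        rw [hac, hbc'] at hfp
        exact hfp
      · left
        refine wop_mono _ _ _ (fun m => ?_) hwop
        intro S hS
        have hfp : ¬ prefers (f m S i) a b := by
          rw [hOUT i m S a b hka rfl hbne]
          exact hS
        rw [prefers_not_iff _ hab] at hfp
        rw [hac', hbc] at hfp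
        exact hfp
end
end
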